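/- arXiv:1208.3164 — 7 statements merged into one kernel-verified Lean document; each statement's English description precedes it below -/
import Mathlib

section
/- If Z and Y are nonnegative random variables with E(Z | Y) = Y, then E|Z - Y| ≤ sqrt(2 E Z) · sqrt(E(Z log Z) - E(Y log Y)). -/
open MeasureTheory Real ENNReal

private lemma H_mono : MonotoneOn (fun t : ℝ => (t+1) * Real.log t - 2*(t-1)) (Set.Ioi 0) := by
  have Hderiv : ∀ t ∈ Set.Ioi (0:ℝ),
      HasDerivAt (fun t : ℝ => (t+1) * Real.log t - 2*(t-1))
        (Real.log t + (t+1) * t⁻¹ - 2) t := by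
    intro t ht
    have h1 : HasDerivAt (fun t : ℝ => (t+1) * Real.log t)
        (1 * Real.log t + (t+1) * t⁻¹) t :=
      ((hasDerivAt_id t).add_const 1).mul (Real.hasDerivAt_log (ne_of_gt ht))
    have h2 : HasDerivAt (fun t : ℝ => 2*(t-1)) (2*1) t :=
      ((hasDerivAt_id t).sub_const 1).const_mul 2
    exact (h1.sub h2).congr_deriv (by ring)
  apply monotoneOn_of_deriv_nonneg (convex_Ioi 0)
  · apply ContinuousOn.sub
    · exact (continuousOn_id.add continuousOn_const).mul
        (Real.continuousOn_log.mono (fun x hx => Set.mem_compl_singleton_iff.mpr (ne_of_gt hx)))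
    · fun_prop
  · rw [interior_Ioi]
    exact fun t ht => ((Hderiv t ht).differentiableAt).differentiableWithinAt
  · intro t ht
    rw [interior_Ioi] at ht
    rw [(Hderiv t ht).deriv]
    have ht' : (0:ℝ) < t := ht
    have hlog : Real.log t⁻¹ ≤ t⁻¹ - 1 := Real.log_le_sub_one_of_pos (by positivity)
    rw [Real.log_inv] at hlog
    have hmc : t * t⁻¹ = 1 := mul_inv_cancel₀ (ne_of_gt ht')
    nlinarith [hlog, hmc]

private lemma H_sign {t : ℝ} (ht : 0 < t) :
    (1 ≤ t → 2*(t-1) ≤ (t+1) * Real.log t) ∧ (t ≤ 1 → (t+1) * Real.log t ≤ 2*(t-1)) := by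
  have h1 : (1:ℝ) ∈ Set.Ioi (0:ℝ) := by norm_num
  constructor
  · intro h
    have := H_mono h1 (Set.mem_Ioi.mpr ht) h
    simp only [Real.log_one] at this
    linarith
  · intro h
    have := H_mono (Set.mem_Ioi.mpr ht) h1 h
    simp only [Real.log_one] at this
    linarith

private lemma G_nonneg {t : ℝ} (ht : 0 < t) :
    3*(t-1)^2 ≤ (2*t+4) * (t * Real.log t - t + 1) := by
  set G : ℝ → ℝ := fun t => (2*t+4) * (t * Real.log t - t + 1) - 3*(t-1)^2 with hG
  have Gderiv : ∀ t ∈ Set.Ioi (0:ℝ),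
      HasDerivAt G (4*((t+1) * Real.log t - 2*(t-1))) t := by
    intro t ht
    have hne := ne_of_gt (Set.mem_Ioi.mp ht)
    have h1 : HasDerivAt (fun x : ℝ => x * Real.log x) (Real.log t + 1) t := by
      have := (hasDerivAt_id t).mul (Real.hasDerivAt_log hne)
      exact this.congr_deriv (by simp [hne])
    have h2 : HasDerivAt (fun x : ℝ => x * Real.log x - x + 1) (Real.log t + 1 - 1) t :=
      (h1.sub (hasDerivAt_id t)).add_const 1
    have h3 : HasDerivAt (fun x : ℝ => 2*x+4) 2 t := by
      simpa using ((hasDerivAt_id t).const_mul 2).add_const 4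
    have h4 := h3.mul h2
    have h5 : HasDerivAt (fun x : ℝ => 3*(x-1)^2) (3*(2*(t-1)^1*1)) t :=
      (((hasDerivAt_id t).sub_const 1).pow 2).const_mul 3
    exact (h4.sub h5).congr_deriv (by ring)
  have hcont : ∀ s : Set ℝ, s ⊆ Set.Ioi 0 → ContinuousOn G s := by
    intro s hs
    apply ContinuousOn.sub
    · apply ContinuousOn.mul
      · fun_prop
      · apply ContinuousOn.add (ContinuousOn.sub (ContinuousOn.mul continuousOn_id
          (Real.continuousOn_log.mono (fun x hx =>
            Set.mem_compl_singleton_iff.mpr (ne_of_gt (hs hx))))) continuousOn_id) continuousOn_const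
    · fun_prop
  have hG1 : G 1 = 0 := by simp [hG]
  rcases le_total t 1 with h | h
  · have Ganti : AntitoneOn G (Set.Ioc 0 1) := by
      apply antitoneOn_of_deriv_nonpos (convex_Ioc 0 1) (hcont _ Set.Ioc_subset_Ioi_self)
      · rw [interior_Ioc]
        exact fun x hx => ((Gderiv x (Set.mem_Ioi.mpr hx.1)).differentiableAt).differentiableWithinAt
      · intro x hx
        rw [interior_Ioc] at hx
        rw [(Gderiv x (Set.mem_Ioi.mpr hx.1)).deriv]
        have := (H_sign hx.1).2 (le_of_lt hx.2)
        linarith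
    have := Ganti (Set.mem_Ioc.mpr ⟨ht, h⟩) (Set.mem_Ioc.mpr ⟨zero_lt_one, le_refl 1⟩) h
    rw [hG1] at this
    have hGt : 0 ≤ G t := this
    simp only [hG] at hGt
    linarith
  · have Gmono : MonotoneOn G (Set.Ici 1) := by
      apply monotoneOn_of_deriv_nonneg (convex_Ici 1)
        (hcont _ (fun x hx => Set.mem_Ioi.mpr (lt_of_lt_of_le zero_lt_one hx)))
      · rw [interior_Ici]
        exact fun x hx => ((Gderiv x (Set.mem_Ioi.mpr (lt_trans zero_lt_one hx))).differentiableAt).differentiableWithinAt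
      · intro x hx
        rw [interior_Ici] at hx
        rw [(Gderiv x (Set.mem_Ioi.mpr (lt_trans zero_lt_one hx))).deriv]
        have := (H_sign (lt_trans zero_lt_one hx)).1 (le_of_lt hx)
        linarith
    have := Gmono (Set.mem_Ici.mpr (le_refl 1)) (Set.mem_Ici.mpr h) h
    rw [hG1] at this
    have hGt : 0 ≤ G t := this
    simp only [hG] at hGt
    linarith

/-- pointwise key inequality -/
private lemma key_ineq {a b : ℝ} (ha : 0 ≤ a) (hb : 0 < b) :
    3*(a-b)^2 ≤ (2*a+4*b) * (a * Real.log a - a * Real.log b - a + b) := by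
  rcases eq_or_lt_of_le ha with h0 | ha'
  · rw [← h0]
    nlinarith
  · have hab : a = (a/b) * b := by field_simp
    have ht : 0 < a / b := div_pos ha' hb
    have hG := G_nonneg ht
    have hlog : Real.log (a/b) = Real.log a - Real.log b := Real.log_div (ne_of_gt ha') (ne_of_gt hb)
    have hb2 : (0:ℝ) ≤ b^2 := sq_nonneg b
    have := mul_le_mul_of_nonneg_left hG hb2
    calc 3*(a-b)^2 = b^2 * (3*((a/b)-1)^2) := by field_simp
      _ ≤ b^2 * ((2*(a/b)+4) * ((a/b) * Real.log (a/b) - (a/b) + 1)) := this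
      _ = (2*a+4*b) * (a * Real.log a - a * Real.log b - a + b) := by
          rw [hlog]; field_simp

private lemma cauchy_schwarz' {Ω : Type} [MeasurableSpace Ω] {μ : Measure Ω} {f g : Ω → ℝ}
    (hf2 : Integrable (fun ω => f ω^2) μ) (hg2 : Integrable (fun ω => g ω^2) μ)
    (hfg : Integrable (fun ω => f ω * g ω) μ) :
    ∫ ω, f ω * g ω ∂μ ≤ Real.sqrt (∫ ω, f ω^2 ∂μ) * Real.sqrt (∫ ω, g ω^2 ∂μ) := by
  have key : ∀ t : ℝ, 0 ≤ (∫ ω, f ω^2 ∂μ) * (t*t) + (2 * ∫ ω, f ω * g ω ∂μ) * t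
      + ∫ ω, g ω^2 ∂μ := by
    intro t
    have h0 : 0 ≤ ∫ ω, (t * f ω + g ω)^2 ∂μ := integral_nonneg fun ω => sq_nonneg _
    have hexp : ∀ ω, (t * f ω + g ω)^2 = t^2 * f ω^2 + (2*t) * (f ω * g ω) + g ω^2 :=
      fun ω => by ring
    simp only [hexp] at h0
    have hA : Integrable (fun ω => t^2 * f ω^2 + (2*t) * (f ω * g ω)) μ :=
      (hf2.const_mul _).add (hfg.const_mul _)
    rw [integral_add hA hg2, integral_add (hf2.const_mul _) (hfg.const_mul _),
      integral_const_mul, integral_const_mul] at h0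
    nlinarith [h0]
  have hd := discrim_le_zero key
  rw [discrim] at hd
  have h1 : (∫ ω, f ω * g ω ∂μ)^2 ≤ (∫ ω, f ω^2 ∂μ) * (∫ ω, g ω^2 ∂μ) := by nlinarith [hd]
  calc ∫ ω, f ω * g ω ∂μ ≤ |∫ ω, f ω * g ω ∂μ| := le_abs_self _
    _ = Real.sqrt ((∫ ω, f ω * g ω ∂μ)^2) := (Real.sqrt_sq_eq_abs _).symm
    _ ≤ Real.sqrt ((∫ ω, f ω^2 ∂μ) * (∫ ω, g ω^2 ∂μ)) := Real.sqrt_le_sqrt h1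
    _ = _ := Real.sqrt_mul (integral_nonneg fun ω => sq_nonneg _) _

/-- If `Z` and `Y` are nonnegative random variables with `E(Z | Y) = Y`, then
`E|Z - Y| ≤ sqrt(2 E Z) * sqrt(E(Z log Z) - E(Y log Y))`
(with the convention `0 log 0 = 0`, which holds since `Real.log 0 = 0`). -/
theorem stmt2 {Ω : Type} [MeasurableSpace Ω] (μ : Measure Ω) [IsProbabilityMeasure μ]
    (Z Y : Ω → ℝ) (hY : Measurable Y)
    (hZnn : ∀ ω, 0 ≤ Z ω) (hYnn : ∀ ω, 0 ≤ Y ω)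
    (hZint : Integrable Z μ) (hYint : Integrable Y μ)
    (hZZ : Integrable (fun ω => Z ω * Real.log (Z ω)) μ)
    (hYY : Integrable (fun ω => Y ω * Real.log (Y ω)) μ)
    (hcond : μ[Z | MeasurableSpace.comap Y Real.measurableSpace] =ᵐ[μ] Y) :
    ∫ ω, |Z ω - Y ω| ∂μ ≤
      Real.sqrt (2 * ∫ ω, Z ω ∂μ) *
        Real.sqrt ((∫ ω, Z ω * Real.log (Z ω) ∂μ) - ∫ ω, Y ω * Real.log (Y ω) ∂μ) := by
  have hm : MeasurableSpace.comap Y Real.measurableSpace ≤ _ := hY.comap_le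
  have hEZY : ∫ ω, Y ω ∂μ = ∫ ω, Z ω ∂μ :=
    calc ∫ ω, Y ω ∂μ = ∫ ω, (μ[Z|MeasurableSpace.comap Y Real.measurableSpace]) ω ∂μ := (integral_congr_ae hcond).symm
      _ = ∫ ω, Z ω ∂μ := integral_condExp hm
  have hsetint : ∀ s, MeasurableSet[MeasurableSpace.comap Y Real.measurableSpace] s → ∫ ω in s, Z ω ∂μ = ∫ ω in s, Y ω ∂μ := by
    intro s hs
    rw [← setIntegral_condExp hm hZint hs]
    exact integral_congr_ae (ae_restrict_of_ae hcond)
  -- Z vanishes a.e. where Y vanishes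
  have hY0 : ∀ᵐ ω ∂μ, Y ω = 0 → Z ω = 0 := by
    have hs0 : MeasurableSet[MeasurableSpace.comap Y Real.measurableSpace] (Y ⁻¹' {0}) := ⟨{0}, measurableSet_singleton 0, rfl⟩
    have h1 : ∫ ω in Y ⁻¹' {0}, Z ω ∂μ = 0 := by
      have heq : Set.EqOn Y 0 (Y ⁻¹' {0}) := fun ω hω => by simpa using hω
      rw [hsetint _ hs0, setIntegral_congr_fun (hm _ hs0) heq]
      simp
    have h2 : Z =ᵐ[μ.restrict (Y ⁻¹' {0})] 0 :=
      (integral_eq_zero_iff_of_nonneg_ae (ae_restrict_of_ae (ae_of_all _ hZnn))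
        (hZint.restrict)).mp h1
    have h3 : ∀ᵐ ω ∂(μ.restrict (Y ⁻¹' {0})), Z ω = 0 := by
      filter_upwards [h2] with ω h; simpa using h
    have h4 := (ae_restrict_iff' (hm _ hs0)).mp h3
    filter_upwards [h4] with ω hω hy
    exact hω (by simpa using hy)
  -- Transfer lemma via withDensity + trim
  have hZae : AEMeasurable (fun ω => ENNReal.ofReal (Z ω)) μ :=
    ENNReal.measurable_ofReal.comp_aemeasurable hZint.aemeasurable
  have hYae : AEMeasurable (fun ω => ENNReal.ofReal (Y ω)) μ :=
    ENNReal.measurable_ofReal.comp_aemeasurable hYint.aemeasurable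
  have htrim : (μ.withDensity (fun ω => ENNReal.ofReal (Z ω))).trim hm
      = (μ.withDensity (fun ω => ENNReal.ofReal (Y ω))).trim hm := by
    refine @MeasureTheory.Measure.ext Ω (MeasurableSpace.comap Y Real.measurableSpace) _ _ (fun s hs => ?_)
    rw [trim_measurableSet_eq hm hs, trim_measurableSet_eq hm hs,
      withDensity_apply _ (hm s hs), withDensity_apply _ (hm s hs),
      ← ofReal_integral_eq_lintegral_ofReal hZint.restrict
        (ae_restrict_of_ae (ae_of_all _ hZnn)),
      ← ofReal_integral_eq_lintegral_ofReal hYint.restrict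
        (ae_restrict_of_ae (ae_of_all _ hYnn)),
      hsetint s hs]
  have hkey : ∀ f : Ω → ℝ≥0∞, Measurable[MeasurableSpace.comap Y Real.measurableSpace] f →
      ∫⁻ ω, ENNReal.ofReal (Z ω) * f ω ∂μ = ∫⁻ ω, ENNReal.ofReal (Y ω) * f ω ∂μ := by
    intro f hf
    have hfm : Measurable f := hf.mono hm le_rfl
    calc ∫⁻ ω, ENNReal.ofReal (Z ω) * f ω ∂μ
        = ∫⁻ ω, f ω ∂(μ.withDensity (fun ω => ENNReal.ofReal (Z ω))) := by
          rw [lintegral_withDensity_eq_lintegral_mul₀ hZae hfm.aemeasurable]; rfl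
      _ = ∫⁻ ω, f ω ∂((μ.withDensity (fun ω => ENNReal.ofReal (Z ω))).trim hm) :=
          (lintegral_trim hm hf).symm
      _ = ∫⁻ ω, f ω ∂((μ.withDensity (fun ω => ENNReal.ofReal (Y ω))).trim hm) := by
          rw [htrim]
      _ = ∫⁻ ω, f ω ∂(μ.withDensity (fun ω => ENNReal.ofReal (Y ω))) := lintegral_trim hm hf
      _ = ∫⁻ ω, ENNReal.ofReal (Y ω) * f ω ∂μ := by
          rw [lintegral_withDensity_eq_lintegral_mul₀ hYae hfm.aemeasurable]; rfl
  have hYm : Measurable[MeasurableSpace.comap Y Real.measurableSpace] Y := Measurable.of_comap_le le_rfl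
  have hlogm : Measurable[MeasurableSpace.comap Y Real.measurableSpace] (fun ω => Real.log (Y ω)) := Real.measurable_log.comp hYm
  have hreal : ∀ g : Ω → ℝ, Measurable[MeasurableSpace.comap Y Real.measurableSpace] g → (∀ ω, 0 ≤ g ω) →
      Integrable (fun ω => Y ω * g ω) μ →
      Integrable (fun ω => Z ω * g ω) μ ∧ ∫ ω, Z ω * g ω ∂μ = ∫ ω, Y ω * g ω ∂μ := by
    intro g hg hgnn hYg
    have hgm : Measurable g := hg.mono hm le_rfl
    have h1 : ∫⁻ ω, ENNReal.ofReal (Z ω * g ω) ∂μ = ∫⁻ ω, ENNReal.ofReal (Y ω * g ω) ∂μ := by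
      have e1 : ∀ ω, ENNReal.ofReal (Z ω) * ENNReal.ofReal (g ω) = ENNReal.ofReal (Z ω * g ω) :=
        fun ω => (ENNReal.ofReal_mul (hZnn ω)).symm
      have e2 : ∀ ω, ENNReal.ofReal (Y ω) * ENNReal.ofReal (g ω) = ENNReal.ofReal (Y ω * g ω) :=
        fun ω => (ENNReal.ofReal_mul (hYnn ω)).symm
      calc ∫⁻ ω, ENNReal.ofReal (Z ω * g ω) ∂μ
          = ∫⁻ ω, ENNReal.ofReal (Z ω) * ENNReal.ofReal (g ω) ∂μ := (lintegral_congr e1).symm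
        _ = ∫⁻ ω, ENNReal.ofReal (Y ω) * ENNReal.ofReal (g ω) ∂μ :=
            hkey (fun ω => ENNReal.ofReal (g ω)) hg.ennreal_ofReal
        _ = ∫⁻ ω, ENNReal.ofReal (Y ω * g ω) ∂μ := lintegral_congr e2
    have hfin : ∫⁻ ω, ENNReal.ofReal (Y ω * g ω) ∂μ < ⊤ := by
      rw [← ofReal_integral_eq_lintegral_ofReal hYg
        (ae_of_all _ fun ω => mul_nonneg (hYnn ω) (hgnn ω))]
      exact ENNReal.ofReal_lt_top
    have hZg : Integrable (fun ω => Z ω * g ω) μ := by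
      refine ⟨hZint.aestronglyMeasurable.mul hgm.aestronglyMeasurable, ?_⟩
      rw [hasFiniteIntegral_iff_ofReal (ae_of_all _ fun ω => mul_nonneg (hZnn ω) (hgnn ω)), h1]
      exact hfin
    refine ⟨hZg, ?_⟩
    rw [← ofReal_integral_eq_lintegral_ofReal hZg
        (ae_of_all _ fun ω => mul_nonneg (hZnn ω) (hgnn ω)),
      ← ofReal_integral_eq_lintegral_ofReal hYg
        (ae_of_all _ fun ω => mul_nonneg (hYnn ω) (hgnn ω))] at h1
    exact (ENNReal.ofReal_eq_ofReal_iff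
      (integral_nonneg fun ω => mul_nonneg (hZnn ω) (hgnn ω))
      (integral_nonneg fun ω => mul_nonneg (hYnn ω) (hgnn ω))).mp h1
  -- apply to positive and negative parts of log Y
  have hgp : Measurable[MeasurableSpace.comap Y Real.measurableSpace] (fun ω => max (Real.log (Y ω)) 0) := hlogm.max measurable_const
  have hgm' : Measurable[MeasurableSpace.comap Y Real.measurableSpace] (fun ω => max (-Real.log (Y ω)) 0) := hlogm.neg.max measurable_const
  have habs_max : ∀ L : ℝ, |max L 0| ≤ |L| := by
    intro L
    rcases le_total L 0 with h | h
    · simp [max_eq_right h]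
    · simp [max_eq_left h]
  have habs_maxneg : ∀ L : ℝ, |max (-L) 0| ≤ |L| := by
    intro L
    have := habs_max (-L)
    simpa using this
  have hYgp : Integrable (fun ω => Y ω * max (Real.log (Y ω)) 0) μ := by
    refine hYY.mono (hYint.aestronglyMeasurable.mul
      ((hlogm.mono hm le_rfl).max measurable_const).aestronglyMeasurable)
      (ae_of_all _ fun ω => ?_)
    rw [Real.norm_eq_abs, Real.norm_eq_abs, abs_mul, abs_mul]
    exact mul_le_mul_of_nonneg_left (habs_max _) (abs_nonneg _)
  have hYgm : Integrable (fun ω => Y ω * max (-Real.log (Y ω)) 0) μ := by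
    refine hYY.mono (hYint.aestronglyMeasurable.mul
      ((hlogm.mono hm le_rfl).neg.max measurable_const).aestronglyMeasurable)
      (ae_of_all _ fun ω => ?_)
    rw [Real.norm_eq_abs, Real.norm_eq_abs, abs_mul, abs_mul]
    exact mul_le_mul_of_nonneg_left (habs_maxneg _) (abs_nonneg _)
  obtain ⟨hZp, hZpe⟩ := hreal _ hgp (fun ω => le_max_right _ _) hYgp
  obtain ⟨hZm, hZme⟩ := hreal _ hgm' (fun ω => le_max_right _ _) hYgm
  have hZlogY : Integrable (fun ω => Z ω * Real.log (Y ω)) μ := by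
    refine (hZp.sub hZm).congr (ae_of_all _ fun ω => ?_)
    simp only [Pi.sub_apply]
    rw [← mul_sub, max_zero_sub_max_neg_zero_eq_self]
  have hZYe : ∫ ω, Z ω * Real.log (Y ω) ∂μ = ∫ ω, Y ω * Real.log (Y ω) ∂μ := by
    have e1 : ∫ ω, Z ω * Real.log (Y ω) ∂μ
        = ∫ ω, (Z ω * max (Real.log (Y ω)) 0 - Z ω * max (-Real.log (Y ω)) 0) ∂μ := by
      refine integral_congr_ae (ae_of_all _ fun ω => ?_)
      simp only []
      rw [← mul_sub, max_zero_sub_max_neg_zero_eq_self]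
    have e2 : ∫ ω, Y ω * Real.log (Y ω) ∂μ
        = ∫ ω, (Y ω * max (Real.log (Y ω)) 0 - Y ω * max (-Real.log (Y ω)) 0) ∂μ := by
      refine integral_congr_ae (ae_of_all _ fun ω => ?_)
      simp only []
      rw [← mul_sub, max_zero_sub_max_neg_zero_eq_self]
    rw [e1, e2, integral_sub hZp hZm, integral_sub hYgp hYgm, hZpe, hZme]
  -- the quantity D and its properties
  have hDint : Integrable
      (fun ω => Z ω * Real.log (Z ω) - Z ω * Real.log (Y ω) - Z ω + Y ω) μ :=
    ((hZZ.sub hZlogY).sub hZint).add hYint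
  have hintD : ∫ ω, (Z ω * Real.log (Z ω) - Z ω * Real.log (Y ω) - Z ω + Y ω) ∂μ
      = (∫ ω, Z ω * Real.log (Z ω) ∂μ) - ∫ ω, Y ω * Real.log (Y ω) ∂μ := by
    have hI1 : Integrable (fun ω => Z ω * Real.log (Z ω) - Z ω * Real.log (Y ω)) μ :=
      hZZ.sub hZlogY
    have hI2 : Integrable (fun ω => Z ω * Real.log (Z ω) - Z ω * Real.log (Y ω) - Z ω) μ :=
      hI1.sub hZint
    rw [integral_add hI2 hYint, integral_sub hI1 hZint, integral_sub hZZ hZlogY, hZYe]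
    linarith [hEZY]
  -- pointwise a.e. estimate
  have hae : ∀ᵐ ω ∂μ, 0 ≤ Z ω * Real.log (Z ω) - Z ω * Real.log (Y ω) - Z ω + Y ω ∧
      |Z ω - Y ω| ≤ Real.sqrt ((2*Z ω + 4*Y ω)/3) *
        Real.sqrt (Z ω * Real.log (Z ω) - Z ω * Real.log (Y ω) - Z ω + Y ω) := by
    filter_upwards [hY0] with ω h0
    rcases eq_or_lt_of_le (hYnn ω) with hy0 | hy
    · have hz : Z ω = 0 := h0 hy0.symm
      constructor
      · rw [hz, ← hy0]; simp
      · have hd : Z ω - Y ω = 0 := by rw [hz, ← hy0]; ring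
        rw [hd, abs_zero]; positivity
    · have hk := key_ineq (hZnn ω) hy
      have h24 : (0:ℝ) < 2*Z ω + 4*Y ω := by linarith [hZnn ω]
      have hDnn : 0 ≤ Z ω * Real.log (Z ω) - Z ω * Real.log (Y ω) - Z ω + Y ω := by
        nlinarith [hk, sq_nonneg (Z ω - Y ω), h24]
      refine ⟨hDnn, ?_⟩
      have h1 : (Z ω - Y ω)^2 ≤ ((2*Z ω + 4*Y ω)/3) *
          (Z ω * Real.log (Z ω) - Z ω * Real.log (Y ω) - Z ω + Y ω) := by nlinarith [hk]
      calc |Z ω - Y ω| = Real.sqrt ((Z ω - Y ω)^2) := (Real.sqrt_sq_eq_abs _).symm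
        _ ≤ Real.sqrt (((2*Z ω + 4*Y ω)/3) *
            (Z ω * Real.log (Z ω) - Z ω * Real.log (Y ω) - Z ω + Y ω)) :=
          Real.sqrt_le_sqrt h1
        _ = _ := Real.sqrt_mul (by positivity) _
  -- Cauchy–Schwarz assembly
  have hfm : AEStronglyMeasurable (fun ω => Real.sqrt ((2*Z ω + 4*Y ω)/3)) μ :=
    Real.continuous_sqrt.comp_aestronglyMeasurable
      ((((hZint.const_mul 2).add (hYint.const_mul 4)).div_const 3).aestronglyMeasurable)
  have hgmeas : AEStronglyMeasurable
      (fun ω => Real.sqrt (Z ω * Real.log (Z ω) - Z ω * Real.log (Y ω) - Z ω + Y ω)) μ :=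
    Real.continuous_sqrt.comp_aestronglyMeasurable hDint.aestronglyMeasurable
  have hf2e : (fun ω => (Real.sqrt ((2*Z ω + 4*Y ω)/3))^2) = fun ω => (2*Z ω + 4*Y ω)/3 := by
    funext ω
    exact Real.sq_sqrt (by have := hZnn ω; have := hYnn ω; positivity)
  have hf2 : Integrable (fun ω => (Real.sqrt ((2*Z ω + 4*Y ω)/3))^2) μ := by
    rw [hf2e]
    exact ((hZint.const_mul 2).add (hYint.const_mul 4)).div_const 3
  have hint_f2 : ∫ ω, (Real.sqrt ((2*Z ω + 4*Y ω)/3))^2 ∂μ = 2 * ∫ ω, Z ω ∂μ := by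
    rw [hf2e, integral_div, integral_add (hZint.const_mul 2) (hYint.const_mul 4),
      integral_const_mul, integral_const_mul, hEZY]
    ring
  have hg2ae : (fun ω => (Real.sqrt (Z ω * Real.log (Z ω) - Z ω * Real.log (Y ω) - Z ω + Y ω))^2)
      =ᵐ[μ] (fun ω => Z ω * Real.log (Z ω) - Z ω * Real.log (Y ω) - Z ω + Y ω) := by
    filter_upwards [hae] with ω h
    exact Real.sq_sqrt h.1
  have hg2 : Integrable (fun ω =>
      (Real.sqrt (Z ω * Real.log (Z ω) - Z ω * Real.log (Y ω) - Z ω + Y ω))^2) μ :=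
    hDint.congr hg2ae.symm
  have hint_g2 : ∫ ω, (Real.sqrt (Z ω * Real.log (Z ω) - Z ω * Real.log (Y ω) - Z ω + Y ω))^2 ∂μ
      = (∫ ω, Z ω * Real.log (Z ω) ∂μ) - ∫ ω, Y ω * Real.log (Y ω) ∂μ := by
    rw [integral_congr_ae hg2ae, hintD]
  have hfgint : Integrable (fun ω => Real.sqrt ((2*Z ω + 4*Y ω)/3) *
      Real.sqrt (Z ω * Real.log (Z ω) - Z ω * Real.log (Y ω) - Z ω + Y ω)) μ := by
    have hsum : Integrable (fun ω => ((Real.sqrt ((2*Z ω + 4*Y ω)/3))^2 +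
        (Real.sqrt (Z ω * Real.log (Z ω) - Z ω * Real.log (Y ω) - Z ω + Y ω))^2)/2) μ :=
      (hf2.add hg2).div_const 2
    refine hsum.mono (hfm.mul hgmeas) (ae_of_all _ fun ω => ?_)
    have h0f := Real.sqrt_nonneg ((2*Z ω + 4*Y ω)/3)
    have h0g := Real.sqrt_nonneg (Z ω * Real.log (Z ω) - Z ω * Real.log (Y ω) - Z ω + Y ω)
    rw [Real.norm_eq_abs, Real.norm_eq_abs, abs_of_nonneg (mul_nonneg h0f h0g),
      abs_of_nonneg (by positivity)]
    nlinarith [sq_nonneg (Real.sqrt ((2*Z ω + 4*Y ω)/3) -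
      Real.sqrt (Z ω * Real.log (Z ω) - Z ω * Real.log (Y ω) - Z ω + Y ω))]
  calc ∫ ω, |Z ω - Y ω| ∂μ
      ≤ ∫ ω, Real.sqrt ((2*Z ω + 4*Y ω)/3) *
          Real.sqrt (Z ω * Real.log (Z ω) - Z ω * Real.log (Y ω) - Z ω + Y ω) ∂μ := by
        refine integral_mono_ae (hZint.sub hYint).abs hfgint ?_
        filter_upwards [hae] with ω h
        exact h.2
    _ ≤ Real.sqrt (∫ ω, (Real.sqrt ((2*Z ω + 4*Y ω)/3))^2 ∂μ) *
          Real.sqrt (∫ ω, (Real.sqrt (Z ω * Real.log (Z ω) - Z ω * Real.log (Y ω)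
            - Z ω + Y ω))^2 ∂μ) := cauchy_schwarz' hf2 hg2 hfgint
    _ = _ := by rw [hint_f2, hint_g2]
end

section
/- Let p_0, p_1, ..., p_k be a martingale taking values in the probability simplex Δ(X) over a finite set X, with p_0 constant equal to p. Then E( Σ_{t=1}^k ||p_t - p_{t-1}||_1 ) ≤ sqrt(2 k H(p)), where H(p) = -Σ_x p(x) log p(x) is the Shannon entropy with natural logarithm. -/
open MeasureTheory Real

/-- F ≥ F b on [b,∞) from nonneg derivative. -/
lemma ge_of_deriv_nonneg_right {F F' : ℝ → ℝ} {b a : ℝ} (hb : 0 < b) (hba : b ≤ a)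
    (hd : ∀ x, 0 < x → HasDerivAt F (F' x) x) (h' : ∀ x, b ≤ x → 0 ≤ F' x) :
    F b ≤ F a := by
  have hmono : MonotoneOn F (Set.Icc b a) := by
    apply monotoneOn_of_deriv_nonneg (convex_Icc b a)
    · intro x hx
      exact ((hd x (lt_of_lt_of_le hb hx.1)).differentiableAt.continuousAt).continuousWithinAt
    · intro x hx
      rw [interior_Icc] at hx
      exact ((hd x (lt_of_lt_of_le hb hx.1.le)).differentiableAt).differentiableWithinAt
    · intro x hx
      rw [interior_Icc] at hx
      rw [(hd x (lt_of_lt_of_le hb hx.1.le)).deriv]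
      exact h' x hx.1.le
  exact hmono (Set.left_mem_Icc.2 hba) (Set.right_mem_Icc.2 hba) hba

lemma ge_of_deriv_nonpos_left {F F' : ℝ → ℝ} {b a : ℝ} (ha : 0 < a) (hba : a ≤ b)
    (hd : ∀ x, 0 < x → HasDerivAt F (F' x) x) (h' : ∀ x, 0 < x → x ≤ b → F' x ≤ 0) :
    F b ≤ F a := by
  have hmono : AntitoneOn F (Set.Icc a b) := by
    apply antitoneOn_of_deriv_nonpos (convex_Icc a b)
    · intro x hx
      exact ((hd x (lt_of_lt_of_le ha hx.1)).differentiableAt.continuousAt).continuousWithinAt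
    · intro x hx
      rw [interior_Icc] at hx
      exact ((hd x (lt_of_lt_of_le ha hx.1.le)).differentiableAt).differentiableWithinAt
    · intro x hx
      rw [interior_Icc] at hx
      rw [(hd x (lt_of_lt_of_le ha hx.1.le)).deriv]
      exact h' x (lt_of_lt_of_le ha hx.1.le) hx.2.le
  exact hmono (Set.mem_Icc.2 ⟨le_refl _, hba⟩) (Set.right_mem_Icc.2 hba) hba

/-- `2(t-1)/(t+1) ≤ log t` for `t ≥ 1`. -/
lemma two_div_le_log {t : ℝ} (ht : 1 ≤ t) : 2 * (t - 1) / (t + 1) ≤ Real.log t := by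
  have key : ∀ x : ℝ, 0 < x → HasDerivAt (fun y => Real.log y - 2 * (y - 1) / (y + 1))
      (1 / x - 4 / (x + 1) ^ 2) x := by
    intro x hx
    have h1 : HasDerivAt Real.log (1 / x) x := by
      simpa [one_div] using Real.hasDerivAt_log (ne_of_gt hx)
    have h2 : HasDerivAt (fun y : ℝ => 2 * (y - 1) / (y + 1))
        ((2 * (x + 1) - 2 * (x - 1) * 1) / (x + 1) ^ 2) x := by
      have hn : HasDerivAt (fun y : ℝ => 2 * (y - 1)) 2 x := by
        simpa using ((hasDerivAt_id x).sub_const 1).const_mul 2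
      have hdd : HasDerivAt (fun y : ℝ => y + 1) 1 x := by
        simpa using (hasDerivAt_id x).add_const 1
      exact hn.div hdd (by linarith)
    have h4 : (2 * (x + 1) - 2 * (x - 1) * 1) = 4 := by ring
    have := h1.sub h2
    rw [h4] at this
    exact this
  have h0 : (fun y => Real.log y - 2 * (y - 1) / (y + 1)) 1 ≤
      (fun y => Real.log y - 2 * (y - 1) / (y + 1)) t := by
    apply ge_of_deriv_nonneg_right one_pos ht key
    intro x hx
    have hx0 : (0:ℝ) < x := lt_of_lt_of_le one_pos hx
    rw [sub_nonneg, div_le_div_iff₀ (by positivity) hx0]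
    nlinarith [sq_nonneg (x - 1)]
  simp only [Real.log_one] at h0
  norm_num at h0
  exact h0

lemma log_le_two_div {t : ℝ} (ht0 : 0 < t) (ht : t ≤ 1) : Real.log t ≤ 2 * (t - 1) / (t + 1) := by
  have h := two_div_le_log (t := 1 / t) (by rw [le_div_iff₀ ht0]; linarith)
  rw [Real.log_div one_ne_zero (ne_of_gt ht0), Real.log_one] at h
  have h2 : 2 * (1 / t - 1) / (1 / t + 1) = 2 * (1 - t) / (1 + t) := by
    rw [div_eq_div_iff (by positivity) (by linarith)]
    field_simp
  rw [h2, div_le_iff₀ (by linarith : (0:ℝ) < 1 + t)] at h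
  rw [le_div_iff₀ (by linarith : (0:ℝ) < t + 1)]
  nlinarith

/-- Scalar refined Gibbs inequality: for `b > 0`, `a ≥ 0`,
`(3/2)(a-b)²/(a+2b) ≤ a log a - a log b - a + b`. -/
lemma scalar_kl_ge {a b : ℝ} (hb : 0 < b) (ha : 0 ≤ a) :
    3 / 2 * (a - b) ^ 2 / (a + 2 * b) ≤ a * Real.log a - a * Real.log b - a + b := by
  set F : ℝ → ℝ := fun x => x * Real.log x - x * Real.log b - x + b
    - 3 / 2 * (x - b) ^ 2 / (x + 2 * b) with hF
  have hd : ∀ x, 0 < x → HasDerivAt F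
      (Real.log x - Real.log b - 3 / 2 * ((x - b) * (x + 5 * b)) / (x + 2 * b) ^ 2) x := by
    intro x hx
    have h1 : HasDerivAt (fun y : ℝ => y * Real.log y) (Real.log x + 1) x :=
      Real.hasDerivAt_mul_log (ne_of_gt hx)
    have h2 : HasDerivAt (fun y : ℝ => y * Real.log b) (Real.log b) x := by
      simpa using (hasDerivAt_id x).mul_const (Real.log b)
    have h3 : HasDerivAt (fun y : ℝ => 3 / 2 * (y - b) ^ 2 / (y + 2 * b))
        ((3 / 2 * (2 * (x - b)) * (x + 2 * b) - 3 / 2 * (x - b) ^ 2 * 1) / (x + 2 * b) ^ 2) x := by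
      have hn : HasDerivAt (fun y : ℝ => 3 / 2 * (y - b) ^ 2) (3 / 2 * (2 * (x - b))) x := by
        simpa using (((hasDerivAt_id x).sub_const b).pow 2).const_mul (3/2 : ℝ)
      have hdd : HasDerivAt (fun y : ℝ => y + 2 * b) 1 x := by
        simpa using (hasDerivAt_id x).add_const (2*b)
      exact hn.div hdd (by positivity)
    have h4 : (3 / 2 * (2 * (x - b)) * (x + 2 * b) - 3 / 2 * (x - b) ^ 2 * 1)
        = 3 / 2 * ((x - b) * (x + 5 * b)) := by ring
    have hD := (((h1.sub h2).sub (hasDerivAt_id x)).add_const b).sub h3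
    rw [h4] at hD
    have hval : Real.log x + 1 - Real.log b - 1 - 3 / 2 * ((x - b) * (x + 5 * b)) / (x + 2 * b) ^ 2
        = Real.log x - Real.log b - 3 / 2 * ((x - b) * (x + 5 * b)) / (x + 2 * b) ^ 2 := by ring
    rw [hval] at hD
    exact hD
  have hFb : F b = 0 := by simp [hF]
  have key : 0 ≤ F a := by
    rcases eq_or_lt_of_le ha with h0 | hapos
    · have : F 0 = b - 3 / 2 * b ^ 2 / (2 * b) := by
        simp [hF]
      rw [← h0, this]
      rw [div_eq_mul_inv]
      have : (3:ℝ) / 2 * b ^ 2 * (2 * b)⁻¹ = 3 / 4 * b := by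
        field_simp; ring
      rw [this]; linarith
    rcases le_total b a with hba | hab
    · rw [← hFb]
      apply ge_of_deriv_nonneg_right hb hba hd
      intro x hxb
      have hx : 0 < x := lt_of_lt_of_le hb hxb
      have hlog : 2 * (x / b - 1) / (x / b + 1) ≤ Real.log x - Real.log b := by
        rw [← Real.log_div (ne_of_gt hx) (ne_of_gt hb)]
        exact two_div_le_log ((one_le_div hb).2 hxb)
      have heq : 2 * (x / b - 1) / (x / b + 1) = 2 * (x - b) / (x + b) := by
        rw [div_eq_div_iff (by positivity) (by positivity)]
        field_simp
      rw [heq] at hlog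
      have h5 : 3 / 2 * ((x - b) * (x + 5 * b)) / (x + 2 * b) ^ 2 ≤ 2 * (x - b) / (x + b) := by
        rw [div_le_div_iff₀ (by positivity) (by positivity)]
        nlinarith [sq_nonneg (x - b), sub_nonneg.2 hxb, mul_pos hx hb]
      linarith
    · rw [← hFb]
      apply ge_of_deriv_nonpos_left hapos hab hd
      intro x hx hxb
      have hlog : Real.log x - Real.log b ≤ 2 * (x / b - 1) / (x / b + 1) := by
        rw [← Real.log_div (ne_of_gt hx) (ne_of_gt hb)]
        exact log_le_two_div (by positivity) ((div_le_one hb).2 hxb)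
      have heq : 2 * (x / b - 1) / (x / b + 1) = 2 * (x - b) / (x + b) := by
        rw [div_eq_div_iff (by positivity) (by positivity)]
        field_simp
      rw [heq] at hlog
      have h5 : 2 * (x - b) / (x + b) ≤ 3 / 2 * ((x - b) * (x + 5 * b)) / (x + 2 * b) ^ 2 := by
        rw [div_le_div_iff₀ (by positivity) (by positivity)]
        nlinarith [sq_nonneg (x - b), sub_nonpos.2 hxb, mul_pos hx hb]
      linarith
  rw [hF] at key
  linarith

/-- Discrete Pinsker inequality (with `log 0 = 0` convention and support condition). -/
lemma pinsker_fin {X : Type} [Fintype X] (q r : X → ℝ) (hq : ∀ x, 0 ≤ q x) (hr : ∀ x, 0 ≤ r x)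
    (hq1 : ∑ x, q x = 1) (hr1 : ∑ x, r x = 1) (hsupp : ∀ x, r x = 0 → q x = 0) :
    (∑ x, |q x - r x|) ^ 2 ≤ 2 * ∑ x, (q x * Real.log (q x) - q x * Real.log (r x)) := by
  set S := ∑ x, (q x - r x) ^ 2 / (q x + 2 * r x) with hS
  have step1 : 3 / 2 * S ≤ ∑ x, (q x * Real.log (q x) - q x * Real.log (r x)) := by
    have h : ∀ x, 3 / 2 * ((q x - r x) ^ 2 / (q x + 2 * r x)) + (q x - r x)
        ≤ q x * Real.log (q x) - q x * Real.log (r x) := by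
      intro x
      rcases eq_or_lt_of_le (hr x) with h0 | hrx
      · have hq0 : q x = 0 := hsupp x h0.symm
        simp [hq0, ← h0]
      · have := scalar_kl_ge hrx (hq x)
        have heq : 3 / 2 * ((q x - r x) ^ 2 / (q x + 2 * r x))
            = 3 / 2 * (q x - r x) ^ 2 / (q x + 2 * r x) := by ring
        rw [heq]; linarith
    calc 3 / 2 * S = ∑ x, (3 / 2 * ((q x - r x) ^ 2 / (q x + 2 * r x)) + (q x - r x)) := by
          rw [hS, Finset.mul_sum, Finset.sum_add_distrib]
          simp [hq1, hr1, Finset.sum_sub_distrib]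
      _ ≤ _ := Finset.sum_le_sum fun x _ => h x
  have step2 : (∑ x, |q x - r x|) ^ 2 ≤ S * 3 := by
    have h3 : ∑ x, (q x + 2 * r x) = 3 := by
      rw [Finset.sum_add_distrib, hq1, ← Finset.mul_sum, hr1]; norm_num
    have := Finset.sum_sq_le_sum_mul_sum_of_sq_eq_mul Finset.univ
      (r := fun x => |q x - r x|) (f := fun x => (q x - r x) ^ 2 / (q x + 2 * r x))
      (g := fun x => q x + 2 * r x)
      (fun x _ => div_nonneg (sq_nonneg _) (by have := hq x; have := hr x; linarith))
      (fun x _ => by have := hq x; have := hr x; positivity)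
      (fun x _ => ?_)
    · rw [h3] at this; exact this
    · rcases eq_or_lt_of_le (add_nonneg (hq x) (by linarith [hr x] : (0:ℝ) ≤ 2 * r x)) with h0 | hpos
      · have hqx : q x = 0 := by nlinarith [hq x, hr x]
        have hrx : r x = 0 := by nlinarith [hq x, hr x]
        simp [hqx, hrx]
      · rw [sq_abs, div_mul_cancel₀ _ (ne_of_gt hpos)]
  nlinarith


lemma negMulLog_le_one {x : ℝ} (h0 : 0 ≤ x) (h1 : x ≤ 1) : Real.negMulLog x ≤ 1 := by
  rcases eq_or_lt_of_le h0 with h | hx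
  · simp [← h, Real.negMulLog]
  · have hlog : Real.log (1 / x) ≤ 1 / x - 1 := Real.log_le_sub_one_of_pos (by positivity)
    have : Real.negMulLog x = x * Real.log (1 / x) := by
      rw [Real.negMulLog, Real.log_div one_ne_zero (ne_of_gt hx), Real.log_one]; ring
    rw [this]
    calc x * Real.log (1 / x) ≤ x * (1 / x - 1) := by
          apply mul_le_mul_of_nonneg_left hlog h0
      _ = 1 - x := by field_simp
      _ ≤ 1 := by linarith

lemma step_bound {Ω : Type} {m : MeasurableSpace Ω} (μ : Measure Ω) [IsProbabilityMeasure μ]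
    (ℱ : Filtration ℕ m) {X : Type} [Fintype X] (f : ℕ → Ω → X → ℝ)
    (hnn : ∀ t ω x, 0 ≤ f t ω x) (hsum : ∀ t ω, ∑ x, f t ω x = 1)
    (hmart : ∀ x, Martingale (fun t ω => f t ω x) ℱ μ) (s : ℕ) :
    (∫ ω, ∑ x, |f (s+1) ω x - f s ω x| ∂μ) ^ 2
      ≤ 2 * ((∫ ω, ∑ x, Real.negMulLog (f s ω x) ∂μ)
          - ∫ ω, ∑ x, Real.negMulLog (f (s+1) ω x) ∂μ) := by
  classical
  -- basic facts
  have hle1 : ∀ t ω x, f t ω x ≤ 1 := by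
    intro t ω x
    have h := Finset.single_le_sum (f := fun y => f t ω y) (fun y _ => hnn t ω y)
      (Finset.mem_univ x)
    rw [hsum t ω] at h; exact h
  have hsm : ∀ t x, StronglyMeasurable (fun ω => f t ω x) :=
    fun t x => ((hmart x).stronglyAdapted t).mono (ℱ.le t)
  have hintf : ∀ t x, Integrable (fun ω => f t ω x) μ := fun t x => (hmart x).integrable t
  have hbint : ∀ (g : Ω → ℝ), AEStronglyMeasurable g μ → ∀ (C : ℝ), (∀ ω, |g ω| ≤ C) →
      Integrable g μ := fun g hg C hC => memLp_one_iff_integrable.mp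
    (MemLp.of_bound hg C (ae_of_all _ (by simpa [Real.norm_eq_abs] using hC)))
  have hlognn : ∀ t ω x, 0 ≤ -Real.log (f t ω x) := fun t ω x =>
    neg_nonneg.2 (Real.log_nonpos (hnn t ω x) (hle1 t ω x))
  -- pull-out property
  have hpull : ∀ (x : X) (g : Ω → ℝ), StronglyMeasurable[ℱ s] g → ∀ (C : ℝ), (∀ ω, |g ω| ≤ C) →
      ∫ ω, g ω * f (s+1) ω x ∂μ = ∫ ω, g ω * f s ω x ∂μ := by
    intro x g hg C hC
    have hb : Integrable (fun ω => f (s+1) ω x) μ := hintf _ x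
    have hCnorm : ∀ᵐ ω ∂μ, ‖g ω‖ ≤ C := ae_of_all _ (by simpa [Real.norm_eq_abs] using hC)
    have hpo := condExp_stronglyMeasurable_mul_of_bound (ℱ.le s) hg hb C hCnorm
    have hgb : Integrable (fun ω => g ω * f (s+1) ω x) μ :=
      Integrable.bdd_mul hb ((hg.mono (ℱ.le s)).aestronglyMeasurable)
        hCnorm
    have hce := (hmart x).condExp_ae_eq (Nat.le_succ s)
    calc ∫ ω, g ω * f (s+1) ω x ∂μ
        = ∫ ω, (μ[(fun ω => g ω * f (s+1) ω x)|ℱ s]) ω ∂μ := (integral_condExp (ℱ.le s)).symm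
      _ = ∫ ω, g ω * (μ[(fun ω => f (s+1) ω x)|ℱ s]) ω ∂μ := integral_congr_ae hpo
      _ = ∫ ω, g ω * f s ω x ∂μ := by
          apply integral_congr_ae
          filter_upwards [hce] with ω hω
          rw [hω]
  -- support growth a.e.
  have hsupp : ∀ x : X, ∀ᵐ ω ∂μ, f s ω x = 0 → f (s+1) ω x = 0 := by
    intro x
    have hAm : MeasurableSet[ℱ s] {ω | f s ω x = 0} :=
      ((hmart x).stronglyAdapted s).measurable (measurableSet_singleton 0)
    have h1 : ∫ ω in {ω | f s ω x = 0}, f s ω x ∂μ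
        = ∫ ω in {ω | f s ω x = 0}, f (s+1) ω x ∂μ :=
      (hmart x).setIntegral_eq (Nat.le_succ s) hAm
    have h2 : ∫ ω in {ω | f s ω x = 0}, f s ω x ∂μ = 0 := by
      rw [setIntegral_congr_fun (ℱ.le s _ hAm) (fun ω hω => hω)]
      simp
    have h3 : (fun ω => f (s+1) ω x) =ᵐ[μ.restrict {ω | f s ω x = 0}] 0 :=
      (integral_eq_zero_iff_of_nonneg_ae (ae_of_all _ (fun ω => hnn (s+1) ω x))
        ((hintf (s+1) x).restrict)).mp (by rw [← h1, h2])
    have h4 := (ae_restrict_iff' (ℱ.le s _ hAm)).mp h3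
    filter_upwards [h4] with ω hω h0
    exact hω h0
  -- monotone convergence bound
  have hL : ∀ x : X, ∫⁻ ω, ENNReal.ofReal (f (s+1) ω x * (-Real.log (f s ω x))) ∂μ
      ≤ ENNReal.ofReal (∫ ω, Real.negMulLog (f s ω x) ∂μ) := by
    intro x
    set g : ℕ → Ω → ℝ := fun n ω => min (-Real.log (f s ω x)) n with hg
    have hgnn : ∀ n ω, 0 ≤ g n ω := fun n ω => le_min (hlognn s ω x) (Nat.cast_nonneg n)
    have hgbd : ∀ n ω, |g n ω| ≤ n := fun n ω => by
      rw [abs_of_nonneg (hgnn n ω)]; exact min_le_right _ _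
    have hgm : ∀ n, StronglyMeasurable[ℱ s] (g n) := by
      intro n
      have : Measurable[ℱ s] (fun ω => f s ω x) := ((hmart x).stronglyAdapted s).measurable
      exact ((Real.measurable_log.comp this).neg.min measurable_const).stronglyMeasurable
    have hgmm : ∀ n, Measurable (g n) := fun n => (hgm n).measurable.mono (ℱ.le s) le_rfl
    have hA : ∀ n, ∫ ω, f (s+1) ω x * g n ω ∂μ = ∫ ω, f s ω x * g n ω ∂μ := by
      intro n
      have := hpull x (g n) (hgm n) n (hgbd n)
      simpa [mul_comm] using this
    have hint_ag : ∀ n, Integrable (fun ω => f s ω x * g n ω) μ := by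
      intro n
      apply hbint _ (((hsm s x).measurable.mul (hgmm n)).aestronglyMeasurable) n
      intro ω
      show |f s ω x * g n ω| ≤ n
      rw [abs_of_nonneg (mul_nonneg (hnn s ω x) (hgnn n ω))]
      calc f s ω x * g n ω ≤ 1 * g n ω :=
            mul_le_mul_of_nonneg_right (hle1 s ω x) (hgnn n ω)
        _ = g n ω := one_mul _
        _ ≤ n := min_le_right _ _
    have hint_bg : ∀ n, Integrable (fun ω => f (s+1) ω x * g n ω) μ := by
      intro n
      apply hbint _ (((hsm (s+1) x).measurable.mul (hgmm n)).aestronglyMeasurable) n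
      intro ω
      show |f (s+1) ω x * g n ω| ≤ n
      rw [abs_of_nonneg (mul_nonneg (hnn (s+1) ω x) (hgnn n ω))]
      calc f (s+1) ω x * g n ω ≤ 1 * g n ω :=
            mul_le_mul_of_nonneg_right (hle1 (s+1) ω x) (hgnn n ω)
        _ = g n ω := one_mul _
        _ ≤ n := min_le_right _ _
    have hint_nml : Integrable (fun ω => Real.negMulLog (f s ω x)) μ := by
      have hmg : Measurable (fun ω => Real.negMulLog (f s ω x)) :=
        Real.continuous_negMulLog.measurable.comp (hsm s x).measurable
      apply hbint _ hmg.aestronglyMeasurable 1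
      intro ω
      rw [abs_of_nonneg (Real.negMulLog_nonneg (hnn s ω x) (hle1 s ω x))]
      exact negMulLog_le_one (hnn s ω x) (hle1 s ω x)
    have hB : ∀ n, ∫ ω, f s ω x * g n ω ∂μ ≤ ∫ ω, Real.negMulLog (f s ω x) ∂μ := by
      intro n
      apply integral_mono (hint_ag n) hint_nml
      intro ω
      have : f s ω x * g n ω ≤ f s ω x * (-Real.log (f s ω x)) :=
        mul_le_mul_of_nonneg_left (min_le_left _ _) (hnn s ω x)
      calc f s ω x * g n ω ≤ f s ω x * (-Real.log (f s ω x)) := this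
        _ = Real.negMulLog (f s ω x) := by rw [Real.negMulLog]; ring
    have hC : ∫⁻ ω, ENNReal.ofReal (f (s+1) ω x * (-Real.log (f s ω x))) ∂μ
        = ⨆ n, ∫⁻ ω, ENNReal.ofReal (f (s+1) ω x * g n ω) ∂μ := by
      rw [← lintegral_iSup']
      · apply lintegral_congr
        intro ω
        apply le_antisymm
        · apply le_iSup_of_le ⌈-Real.log (f s ω x)⌉₊
          apply le_of_eq
          congr 1
          have hmin : -Real.log (f s ω x) ⊓ ((⌈-Real.log (f s ω x)⌉₊ : ℕ) : ℝ)
              = -Real.log (f s ω x) := min_eq_left (Nat.le_ceil _)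
          show _ = f (s+1) ω x * (-Real.log (f s ω x) ⊓ ((⌈-Real.log (f s ω x)⌉₊ : ℕ) : ℝ))
          rw [hmin]
        · apply iSup_le
          intro n
          exact ENNReal.ofReal_le_ofReal
            (mul_le_mul_of_nonneg_left (min_le_left _ _) (hnn (s+1) ω x))
      · intro n
        exact (ENNReal.measurable_ofReal.comp
          ((hsm (s+1) x).measurable.mul (hgmm n))).aemeasurable
      · apply ae_of_all
        intro ω n n' hnn'
        apply ENNReal.ofReal_le_ofReal
        apply mul_le_mul_of_nonneg_left _ (hnn (s+1) ω x)
        exact le_min (min_le_left _ _) (le_trans (min_le_right _ _) (Nat.cast_le.2 hnn'))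
    rw [hC]
    apply iSup_le
    intro n
    rw [← ofReal_integral_eq_lintegral_ofReal (hint_bg n)
      (ae_of_all _ (fun ω => mul_nonneg (hnn (s+1) ω x) (hgnn n ω)))]
    apply ENNReal.ofReal_le_ofReal
    rw [hA n]
    exact hB n
  -- abbreviations
  set D : Ω → ℝ := fun ω => ∑ x, |f (s+1) ω x - f s ω x| with hDdef
  set N : Ω → ℝ := fun ω => ∑ x, Real.negMulLog (f (s+1) ω x) with hNdef
  set Hs : Ω → ℝ := fun ω => ∑ x, Real.negMulLog (f s ω x) with hHdef
  show (∫ ω, D ω ∂μ) ^ 2 ≤ 2 * ((∫ ω, Hs ω ∂μ) - ∫ ω, N ω ∂μ)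
  have hDm : Measurable D := by
    apply Finset.measurable_sum
    intro x _
    exact ((hsm (s+1) x).measurable.sub (hsm s x).measurable).abs
  have hDnn : ∀ ω, 0 ≤ D ω := fun ω => Finset.sum_nonneg fun x _ => abs_nonneg _
  have hDbd : ∀ ω, |D ω| ≤ (Fintype.card X : ℝ) := by
    intro ω
    rw [abs_of_nonneg (hDnn ω)]
    calc D ω ≤ ∑ _x : X, (1:ℝ) := Finset.sum_le_sum fun x _ => abs_le.2
          ⟨by linarith [hnn (s+1) ω x, hle1 s ω x], by linarith [hle1 (s+1) ω x, hnn s ω x]⟩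
      _ = Fintype.card X := by simp
  have hintD : Integrable D μ := hbint D hDm.aestronglyMeasurable _ hDbd
  have hintD2 : Integrable (fun ω => D ω ^ 2) μ := by
    apply hbint _ ((hDm.pow_const 2).aestronglyMeasurable) ((Fintype.card X : ℝ) ^ 2)
    intro ω
    rw [abs_of_nonneg (sq_nonneg _)]
    exact pow_le_pow_left₀ (hDnn ω) (le_of_abs_le (hDbd ω)) 2
  have hmlm : ∀ t x, Measurable (fun ω => Real.negMulLog (f t ω x)) := fun t x =>
    Real.continuous_negMulLog.measurable.comp (hsm t x).measurable
  have hintml : ∀ t x, Integrable (fun ω => Real.negMulLog (f t ω x)) μ := by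
    intro t x
    apply hbint _ (hmlm t x).aestronglyMeasurable 1
    intro ω
    rw [abs_of_nonneg (Real.negMulLog_nonneg (hnn t ω x) (hle1 t ω x))]
    exact negMulLog_le_one (hnn t ω x) (hle1 t ω x)
  have hNm : Measurable N := by
    apply Finset.measurable_sum
    intro x _
    exact hmlm (s+1) x
  have hHm : Measurable Hs := by
    apply Finset.measurable_sum
    intro x _
    exact hmlm s x
  have hNnn : ∀ ω, 0 ≤ N ω := fun ω =>
    Finset.sum_nonneg fun x _ => Real.negMulLog_nonneg (hnn (s+1) ω x) (hle1 (s+1) ω x)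
  have hHnn : ∀ ω, 0 ≤ Hs ω := fun ω =>
    Finset.sum_nonneg fun x _ => Real.negMulLog_nonneg (hnn s ω x) (hle1 s ω x)
  have hNbd : ∀ ω, |N ω| ≤ (Fintype.card X : ℝ) := by
    intro ω
    rw [abs_of_nonneg (hNnn ω)]
    calc N ω ≤ ∑ _x : X, (1:ℝ) := Finset.sum_le_sum fun x _ =>
          negMulLog_le_one (hnn (s+1) ω x) (hle1 (s+1) ω x)
      _ = Fintype.card X := by simp
  have hintN : Integrable N μ := hbint N hNm.aestronglyMeasurable _ hNbd
  -- pointwise Pinsker, a.e.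
  have hae : ∀ᵐ ω ∂μ, ∀ x, f s ω x = 0 → f (s+1) ω x = 0 := ae_all_iff.mpr hsupp
  have hps : ∀ᵐ ω ∂μ, D ω ^ 2 + 2 * N ω
      ≤ 2 * ∑ x, f (s+1) ω x * (-Real.log (f s ω x)) := by
    filter_upwards [hae] with ω hω
    have hp : (∑ x, |f (s+1) ω x - f s ω x|) ^ 2
        ≤ 2 * ∑ x, (f (s+1) ω x * Real.log (f (s+1) ω x)
            - f (s+1) ω x * Real.log (f s ω x)) :=
      pinsker_fin (fun x => f (s+1) ω x) (fun x => f s ω x)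
        (fun x => hnn _ _ _) (fun x => hnn _ _ _) (hsum _ _) (hsum _ _) hω
    have heq : ∑ x, (f (s+1) ω x * Real.log (f (s+1) ω x) - f (s+1) ω x * Real.log (f s ω x))
        = -N ω + ∑ x, f (s+1) ω x * (-Real.log (f s ω x)) := by
      rw [hNdef, ← Finset.sum_neg_distrib, ← Finset.sum_add_distrib]
      apply Finset.sum_congr rfl
      intro x _
      rw [Real.negMulLog]
      ring
    rw [heq] at hp
    have hDω : D ω = ∑ x, |f (s+1) ω x - f s ω x| := rfl
    rw [hDω]
    linarith [hp]
  -- integrate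
  have hGnn : ∀ ω, 0 ≤ D ω ^ 2 + 2 * N ω := fun ω => by
    have := hNnn ω; positivity
  have hmeasG : Measurable (fun ω => D ω ^ 2 + 2 * N ω) :=
    (hDm.pow_const 2).add (hNm.const_mul 2)
  have hHsint : ∫ ω, Hs ω ∂μ = ∑ x, ∫ ω, Real.negMulLog (f s ω x) ∂μ := by
    rw [hHdef]
    exact integral_finset_sum _ fun x _ => hintml s x
  have h1 : ∫⁻ ω, ENNReal.ofReal (D ω ^ 2 + 2 * N ω) ∂μ
      ≤ ENNReal.ofReal (2 * ∫ ω, Hs ω ∂μ) := by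
    calc ∫⁻ ω, ENNReal.ofReal (D ω ^ 2 + 2 * N ω) ∂μ
        ≤ ∫⁻ ω, ENNReal.ofReal (2 * ∑ x, f (s+1) ω x * (-Real.log (f s ω x))) ∂μ :=
          lintegral_mono_ae (hps.mono fun ω h => ENNReal.ofReal_le_ofReal h)
      _ = ∫⁻ ω, 2 * ∑ x, ENNReal.ofReal (f (s+1) ω x * (-Real.log (f s ω x))) ∂μ := by
          apply lintegral_congr
          intro ω
          rw [ENNReal.ofReal_mul (by norm_num : (0:ℝ) ≤ 2),
            ENNReal.ofReal_sum_of_nonneg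
              (fun x _ => mul_nonneg (hnn (s+1) ω x) (hlognn s ω x))]
          norm_num
      _ = 2 * ∑ x, ∫⁻ ω, ENNReal.ofReal (f (s+1) ω x * (-Real.log (f s ω x))) ∂μ := by
          have hmx : ∀ x : X,
              Measurable (fun ω => ENNReal.ofReal (f (s+1) ω x * (-Real.log (f s ω x)))) :=
            fun x => ENNReal.measurable_ofReal.comp ((hsm (s+1) x).measurable.mul
              ((Real.measurable_log.comp (hsm s x).measurable).neg))
          rw [lintegral_const_mul 2 (Finset.measurable_sum _ (fun x _ => hmx x)),
            lintegral_finset_sum _ (fun x _ => hmx x)]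
      _ ≤ 2 * ∑ x, ENNReal.ofReal (∫ ω, Real.negMulLog (f s ω x) ∂μ) := by
          gcongr with x _
          exact hL x
      _ = ENNReal.ofReal (2 * ∫ ω, Hs ω ∂μ) := by
          rw [← ENNReal.ofReal_sum_of_nonneg
            (fun x _ => integral_nonneg fun ω =>
              Real.negMulLog_nonneg (hnn s ω x) (hle1 s ω x)), ← hHsint,
            ENNReal.ofReal_mul (by norm_num : (0:ℝ) ≤ 2)]
          norm_num
  have hkey : ∫ ω, (D ω ^ 2 + 2 * N ω) ∂μ ≤ 2 * ∫ ω, Hs ω ∂μ := by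
    rw [integral_eq_lintegral_of_nonneg_ae (ae_of_all _ hGnn) hmeasG.aestronglyMeasurable]
    calc (∫⁻ ω, ENNReal.ofReal (D ω ^ 2 + 2 * N ω) ∂μ).toReal
        ≤ (ENNReal.ofReal (2 * ∫ ω, Hs ω ∂μ)).toReal :=
          ENNReal.toReal_mono ENNReal.ofReal_ne_top h1
      _ = 2 * ∫ ω, Hs ω ∂μ := ENNReal.toReal_ofReal
          (mul_nonneg (by norm_num) (integral_nonneg hHnn))
  have hsplitG : ∫ ω, (D ω ^ 2 + 2 * N ω) ∂μ
      = (∫ ω, D ω ^ 2 ∂μ) + 2 * ∫ ω, N ω ∂μ := by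
    rw [integral_add hintD2 (hintN.const_mul 2), integral_const_mul]
  have hvar : (∫ ω, D ω ∂μ) ^ 2 ≤ ∫ ω, D ω ^ 2 ∂μ := by
    have h0 : 0 ≤ ∫ ω, (D ω - ∫ ω', D ω' ∂μ) ^ 2 ∂μ := integral_nonneg fun ω => sq_nonneg _
    have hptw : (fun ω => (D ω - ∫ ω', D ω' ∂μ) ^ 2)
        = fun ω => (D ω ^ 2 - (2 * ∫ ω', D ω' ∂μ) * D ω) + (∫ ω', D ω' ∂μ) ^ 2 :=
      funext fun ω => by ring
    have hi2 : Integrable (fun ω => (2 * ∫ ω', D ω' ∂μ) * D ω) μ := hintD.const_mul _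
    have hi1 : Integrable (fun ω => D ω ^ 2 - (2 * ∫ ω', D ω' ∂μ) * D ω) μ := hintD2.sub hi2
    rw [hptw, integral_add hi1 (integrable_const _), integral_sub hintD2 hi2,
      integral_const_mul, integral_const, probReal_univ, one_smul] at h0
    nlinarith [h0]
  have hintpos : 0 ≤ ∫ ω, Hs ω ∂μ := integral_nonneg hHnn
  nlinarith [hvar, hkey, hsplitG]

/-- The variation of a `k`-step martingale of probability vectors on a finite set `X`,
starting at the constant `p`, is at most `sqrt (2 k H(p))`, where `H` is the Shannon
entropy with natural logarithm (`0 log 0 = 0` via `Real.negMulLog`). -/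
theorem stmt6 {Ω : Type} {m : MeasurableSpace Ω} (μ : Measure Ω) [IsProbabilityMeasure μ]
    (ℱ : Filtration ℕ m) (k : ℕ) {X : Type} [Fintype X] (p : X → ℝ)
    (f : ℕ → Ω → X → ℝ)
    (hnn : ∀ t ω x, 0 ≤ f t ω x) (hsum : ∀ t ω, ∑ x, f t ω x = 1)
    (h0 : ∀ ω, f 0 ω = p)
    (hmart : ∀ x, Martingale (fun t ω => f t ω x) ℱ μ) :
    ∑ t ∈ Finset.Icc 1 k, ∫ ω, ∑ x, |f t ω x - f (t - 1) ω x| ∂μ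
      ≤ Real.sqrt (2 * k * ∑ x, Real.negMulLog (p x)) := by
  classical
  have hle1 : ∀ t ω x, f t ω x ≤ 1 := by
    intro t ω x
    have h := Finset.single_le_sum (f := fun y => f t ω y) (fun y _ => hnn t ω y)
      (Finset.mem_univ x)
    rw [hsum t ω] at h; exact h
  set EH : ℕ → ℝ := fun t => ∫ ω, ∑ x, Real.negMulLog (f t ω x) ∂μ with hEH
  have hstep : ∀ s : ℕ, (∫ ω, ∑ x, |f (s+1) ω x - f s ω x| ∂μ) ^ 2
      ≤ 2 * (EH s - EH (s+1)) := fun s => step_bound μ ℱ f hnn hsum hmart s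
  have hDnn : ∀ s : ℕ, 0 ≤ ∫ ω, ∑ x, |f (s+1) ω x - f s ω x| ∂μ := fun s =>
    integral_nonneg fun ω => Finset.sum_nonneg fun x _ => abs_nonneg _
  have hdnn : ∀ s : ℕ, 0 ≤ 2 * (EH s - EH (s+1)) := fun s =>
    le_trans (sq_nonneg _) (hstep s)
  -- rewrite the Icc sum as a range sum
  have hIcc : ∑ t ∈ Finset.Icc 1 k, ∫ ω, ∑ x, |f t ω x - f (t - 1) ω x| ∂μ
      = ∑ i ∈ Finset.range k, ∫ ω, ∑ x, |f (i+1) ω x - f i ω x| ∂μ := by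
    rw [← Finset.Ico_add_one_right_eq_Icc, Finset.sum_Ico_eq_sum_range]
    have hk : k + 1 - 1 = k := by omega
    rw [hk]
    apply Finset.sum_congr rfl
    intro i _
    have h1 : 1 + i = i + 1 := by omega
    have h2 : 1 + i - 1 = i := by omega
    rw [h2, h1]
  rw [hIcc]
  -- each term is at most sqrt of the entropy decrement
  have hterm : ∀ i : ℕ, ∫ ω, ∑ x, |f (i+1) ω x - f i ω x| ∂μ
      ≤ Real.sqrt (2 * (EH i - EH (i+1))) := by
    intro i
    rw [← Real.sqrt_sq (hDnn i)]
    exact Real.sqrt_le_sqrt (hstep i)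
  have hCS : (∑ i ∈ Finset.range k, Real.sqrt (2 * (EH i - EH (i+1)))) ^ 2
      ≤ (∑ _i ∈ Finset.range k, (1:ℝ)) * ∑ i ∈ Finset.range k, 2 * (EH i - EH (i+1)) := by
    apply Finset.sum_sq_le_sum_mul_sum_of_sq_eq_mul
    · intro i _; norm_num
    · intro i _; exact hdnn i
    · intro i _
      rw [Real.sq_sqrt (hdnn i), one_mul]
  have htel : ∑ i ∈ Finset.range k, 2 * (EH i - EH (i+1))
      = 2 * (EH 0 - EH k) := by
    rw [← Finset.mul_sum, Finset.sum_range_sub' EH k]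
  have hEH0 : EH 0 = ∑ x, Real.negMulLog (p x) := by
    show (∫ ω, ∑ x, Real.negMulLog (f 0 ω x) ∂μ) = _
    have : (fun ω => ∑ x, Real.negMulLog (f 0 ω x))
        = fun _ => ∑ x, Real.negMulLog (p x) := funext fun ω => by rw [h0 ω]
    rw [this, integral_const, probReal_univ, one_smul]
  have hEHk : 0 ≤ EH k := integral_nonneg fun ω =>
    Finset.sum_nonneg fun x _ => Real.negMulLog_nonneg (hnn k ω x) (hle1 k ω x)
  calc ∑ i ∈ Finset.range k, ∫ ω, ∑ x, |f (i+1) ω x - f i ω x| ∂μ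
      ≤ ∑ i ∈ Finset.range k, Real.sqrt (2 * (EH i - EH (i+1))) :=
        Finset.sum_le_sum fun i _ => hterm i
    _ ≤ Real.sqrt (2 * k * ∑ x, Real.negMulLog (p x)) := by
        rw [← Real.sqrt_sq (Finset.sum_nonneg fun i _ => Real.sqrt_nonneg _)]
        apply Real.sqrt_le_sqrt
        calc (∑ i ∈ Finset.range k, Real.sqrt (2 * (EH i - EH (i+1)))) ^ 2
            ≤ (∑ _i ∈ Finset.range k, (1:ℝ)) * ∑ i ∈ Finset.range k, 2 * (EH i - EH (i+1)) :=
              hCS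
          _ = (k : ℝ) * (2 * (EH 0 - EH k)) := by
              rw [htel, Finset.sum_const, Finset.card_range, nsmul_eq_mul, mul_one]
          _ ≤ 2 * k * ∑ x, Real.negMulLog (p x) := by
              rw [← hEH0]
              nlinarith [hEHk, Nat.cast_nonneg (α := ℝ) k]
end

section
/- Let p_0, ..., p_k be a martingale of probability vectors on a countable set X with p_0 = p constant, where H(p) = -Σ_x p(x) log p(x) < ∞. Then E(Σ_{t=1}^k ||p_t - p_{t-1}||_1) ≤ sqrt(2 k H(p)). -/
open MeasureTheory Real ENNReal Filter

private lemma hd_log1p {s : ℝ} (hs : -1 < s) :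
    HasDerivAt (fun s : ℝ => Real.log (1 + s)) ((1 + s)⁻¹) s := by
  have h1 : (0:ℝ) < 1 + s := by linarith
  have := (Real.hasDerivAt_log h1.ne').comp s ((hasDerivAt_id s).const_add 1)
  simpa [Function.comp_def] using this

private lemma hd_mul_log1p {s : ℝ} (hs : -1 < s) :
    HasDerivAt (fun s : ℝ => (1 + s) * Real.log (1 + s)) (Real.log (1 + s) + 1) s := by
  have h1 : (0:ℝ) < 1 + s := by linarith
  have := (Real.hasDerivAt_mul_log h1.ne').comp s ((hasDerivAt_id s).const_add 1)
  simpa [Function.comp_def] using this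

noncomputable def Gaux (s : ℝ) : ℝ := (4*s+8) * Real.log (1+s) - 8*s

private lemma hd_G {s : ℝ} (hs : -1 < s) :
    HasDerivAt Gaux (4 * Real.log (1+s) + (4*s+8) * (1+s)⁻¹ - 8) s := by
  have h1 : HasDerivAt (fun s : ℝ => (4*s+8)) 4 s := by
    simpa using ((hasDerivAt_id s).const_mul (4:ℝ)).add_const 8
  have := (h1.mul (hd_log1p hs)).sub ((hasDerivAt_id s).const_mul (8:ℝ))
  exact this.congr_deriv (by norm_num)


private lemma G_mono : MonotoneOn Gaux (Set.Ioi (-1 : ℝ)) := by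
  have hderiv : ∀ s ∈ interior (Set.Ioi (-1:ℝ)), 0 ≤ deriv Gaux s := by
    intro s hs
    rw [interior_Ioi] at hs
    have hs' : (-1:ℝ) < s := hs
    have h1 : (0:ℝ) < 1 + s := by linarith
    rw [(hd_G hs').deriv]
    have hlog : 1 - (1+s)⁻¹ ≤ Real.log (1+s) := Real.one_sub_inv_le_log_of_pos h1
    have h2 : (4*s+8) * (1+s)⁻¹ = 4 + 4 * (1+s)⁻¹ := by
      field_simp; ring
    nlinarith [hlog]
  exact monotoneOn_of_deriv_nonneg (convex_Ioi _)
    (fun s hs => ((hd_G hs).continuousAt).continuousWithinAt)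
    (by rw [interior_Ioi]; exact fun s hs => ((hd_G hs).differentiableAt).differentiableWithinAt)
    hderiv

noncomputable def Faux (s : ℝ) : ℝ := (2*s+6) * ((1+s) * Real.log (1+s) - s) - 3*s^2

private lemma hd_F {s : ℝ} (hs : -1 < s) : HasDerivAt Faux (Gaux s) s := by
  have h1 : HasDerivAt (fun s : ℝ => (2*s+6)) 2 s := by
    simpa using ((hasDerivAt_id s).const_mul (2:ℝ)).add_const 6
  have h2 : HasDerivAt (fun s : ℝ => (1+s) * Real.log (1+s) - s) (Real.log (1+s) + 1 - 1) s :=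
    (hd_mul_log1p hs).sub (hasDerivAt_id s)
  have h3 : HasDerivAt (fun s : ℝ => 3*s^2) (3*(2*s)) s := by
    simpa using (((hasDerivAt_pow 2 s)).const_mul (3:ℝ))
  have := (h1.mul h2).sub h3
  refine this.congr_deriv ?_
  simp only [Gaux]
  ring

private lemma F_cont : Continuous Faux := by
  have h : Continuous fun s : ℝ => (1+s) * Real.log (1+s) :=
    Real.continuous_mul_log.comp (continuous_const.add continuous_id)
  unfold Faux
  fun_prop

private lemma F_nonneg {s : ℝ} (hs : -1 ≤ s) : 0 ≤ Faux s := by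
  have hF0 : Faux 0 = 0 := by simp [Faux]
  have hG0 : Gaux 0 = 0 := by simp [Gaux]
  rcases le_or_gt 0 s with h | h
  · -- monotone on [0, ∞)
    have hmono : MonotoneOn Faux (Set.Ici (0:ℝ)) := by
      refine monotoneOn_of_deriv_nonneg (convex_Ici _) F_cont.continuousOn
        (by rw [interior_Ici]; exact fun x hx =>
          ((hd_F (by linarith [Set.mem_Ioi.mp hx] : (-1:ℝ) < x)).differentiableAt).differentiableWithinAt)
        ?_
      intro x hx
      rw [interior_Ici] at hx
      have hx' : (0:ℝ) < x := hx
      rw [(hd_F (by linarith)).deriv]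
      have := G_mono (Set.mem_Ioi.mpr (by norm_num : (-1:ℝ) < 0))
        (Set.mem_Ioi.mpr (by linarith : (-1:ℝ) < x)) hx'.le
      rw [hG0] at this; exact this
    have := hmono (Set.mem_Ici.mpr le_rfl) (Set.mem_Ici.mpr h) h
    rw [hF0] at this; exact this
  · -- antitone on [-1, 0]
    have hanti : AntitoneOn Faux (Set.Icc (-1:ℝ) 0) := by
      refine antitoneOn_of_deriv_nonpos (convex_Icc _ _) F_cont.continuousOn
        (by rw [interior_Icc]; exact fun x hx =>
          ((hd_F hx.1).differentiableAt).differentiableWithinAt)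
        ?_
      intro x hx
      rw [interior_Icc] at hx
      rw [(hd_F hx.1).deriv]
      have := G_mono (Set.mem_Ioi.mpr hx.1) (Set.mem_Ioi.mpr (by norm_num : (-1:ℝ) < 0)) hx.2.le
      rw [hG0] at this; exact this
    have := hanti (Set.mem_Icc.mpr ⟨hs, h.le⟩) (Set.mem_Icc.mpr ⟨by norm_num, le_rfl⟩) h.le
    rw [hF0] at this; exact this

/-- pointwise Pinsker-type inequality -/
lemma pinsker_pointwise {q r : ℝ} (hq : 0 ≤ q) (hr : 0 < r) :
    3*(q-r)^2 ≤ (2*q+4*r) * (q * Real.log q - q * Real.log r - q + r) := by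
  rcases eq_or_lt_of_le hq with h0 | hqpos
  · rw [← h0]; simp; nlinarith
  · set s : ℝ := q/r - 1 with hs_def
    have hs : -1 < s := by
      have : 0 < q / r := div_pos hqpos hr
      simp [hs_def]; linarith
    have hq_eq : q = r * (1 + s) := by rw [hs_def]; field_simp; ring
    have h1s : (0:ℝ) < 1 + s := by linarith
    have hlog : Real.log (1 + s) = Real.log q - Real.log r := by
      rw [hq_eq, Real.log_mul hr.ne' h1s.ne']; ring
    have hF := F_nonneg hs.le
    unfold Faux at hF
    have hr2 : (0:ℝ) < r^2 := by positivity
    have key : 0 ≤ r^2 * ((2*s+6) * ((1+s) * Real.log (1+s) - s) - 3*s^2) := by positivity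
    calc 3*(q-r)^2 = r^2 * (3*s^2) := by rw [hq_eq]; ring
    _ ≤ r^2 * ((2*s+6) * ((1+s) * Real.log (1+s) - s)) := by nlinarith
    _ = (2*q+4*r) * (q * Real.log q - q * Real.log r - q + r) := by
        rw [hlog, hq_eq]; ring


section helpers

lemma negMulLog_le_one_sub {x : ℝ} (hx : 0 ≤ x) : Real.negMulLog x ≤ 1 - x := by
  rcases eq_or_lt_of_le hx with h | h
  · simp [← h, Real.negMulLog]
  · have h1 : Real.log x⁻¹ ≤ x⁻¹ - 1 := Real.log_le_sub_one_of_pos (inv_pos.mpr h)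
    have h2 : Real.negMulLog x = x * Real.log x⁻¹ := by
      rw [Real.log_inv, Real.negMulLog]; ring
    rw [h2]
    calc x * Real.log x⁻¹ ≤ x * (x⁻¹ - 1) := by
          exact mul_le_mul_of_nonneg_left h1 hx
    _ = 1 - x := by field_simp

/-- Cauchy–Schwarz for `tsum` in `ℝ≥0∞`. -/
lemma tsum_CS {X : Type} [Countable X] (a w : X → ℝ≥0∞) :
    ∑' x, (a x) ^ (1/2:ℝ) * (w x) ^ (1/2:ℝ)
      ≤ (∑' x, a x) ^ (1/2:ℝ) * (∑' x, w x) ^ (1/2:ℝ) := by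
  letI : MeasurableSpace X := ⊤
  haveI : MeasurableSingletonClass X := ⟨fun _ => trivial⟩
  have hconj : Real.HolderConjugate 2 2 := ⟨by norm_num, by norm_num, by norm_num⟩
  have h := ENNReal.lintegral_mul_le_Lp_mul_Lq (Measure.count : Measure X) hconj
    (f := fun x => (a x) ^ (1/2:ℝ)) (g := fun x => (w x) ^ (1/2:ℝ))
    measurable_from_top.aemeasurable measurable_from_top.aemeasurable
  have hpow : ∀ y : ℝ≥0∞, (y ^ (1/2:ℝ)) ^ (2:ℝ) = y := by
    intro y
    rw [← ENNReal.rpow_mul]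
    norm_num
  simp only [Pi.mul_apply, hpow, MeasureTheory.lintegral_count] at h
  convert h using 2 <;> norm_num

end helpers

section core

variable {Ω : Type} {m : MeasurableSpace Ω} {m0 : MeasurableSpace Ω}
variable {μ : Measure Ω} [IsProbabilityMeasure μ]
variable {Q R : Ω → ℝ}

lemma bdd_integrable (hQsm : StronglyMeasurable[m0] Q) (h0 : ∀ ω, 0 ≤ Q ω)
    (h1 : ∀ ω, Q ω ≤ 1) : Integrable Q μ := by
  refine (integrable_const (1:ℝ)).mono' hQsm.aestronglyMeasurable ?_
  filter_upwards with ω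
  rw [Real.norm_eq_abs, abs_of_nonneg (h0 ω)]
  exact h1 ω

/-- The core per-coordinate, per-step estimate. -/
lemma core_estimate (hm : m ≤ m0)
    (hQsm : StronglyMeasurable[m0] Q) (hRsm : StronglyMeasurable[m] R)
    (hQ0 : ∀ ω, 0 ≤ Q ω) (hQ1 : ∀ ω, Q ω ≤ 1)
    (hR0 : ∀ ω, 0 ≤ R ω) (hR1 : ∀ ω, R ω ≤ 1)
    (hcond : μ[Q|m] =ᵐ[μ] R)
    (hQR : ∫ ω, Q ω ∂μ = ∫ ω, R ω ∂μ) :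
    0 ≤ (∫ ω, Real.negMulLog (R ω) ∂μ) - ∫ ω, Real.negMulLog (Q ω) ∂μ ∧
    ∫⁻ ω, ENNReal.ofReal |Q ω - R ω| ∂μ
      ≤ (ENNReal.ofReal ((∫ ω, Real.negMulLog (R ω) ∂μ) - ∫ ω, Real.negMulLog (Q ω) ∂μ))
          ^ (1/2:ℝ)
        * (ENNReal.ofReal (2 * ∫ ω, Q ω ∂μ)) ^ (1/2:ℝ) := by
  have hRsm0 : StronglyMeasurable[m0] R := hRsm.mono hm
  have hQm : Measurable[m0] Q := hQsm.measurable
  have hRm : Measurable[m0] R := hRsm0.measurable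
  have hQint : Integrable Q μ := bdd_integrable hQsm hQ0 hQ1
  have hRint : Integrable R μ := bdd_integrable hRsm0 hR0 hR1
  have hφQsm : StronglyMeasurable[m0] (fun ω => Real.negMulLog (Q ω)) :=
    (Real.continuous_negMulLog.comp_stronglyMeasurable hQsm)
  have hφRsm : StronglyMeasurable[m0] (fun ω => Real.negMulLog (R ω)) :=
    (Real.continuous_negMulLog.comp_stronglyMeasurable hRsm0)
  have hφQint : Integrable (fun ω => Real.negMulLog (Q ω)) μ :=
    bdd_integrable hφQsm (fun ω => Real.negMulLog_nonneg (hQ0 ω) (hQ1 ω))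
      (fun ω => (negMulLog_le_one_sub (hQ0 ω)).trans (by linarith [hQ0 ω]))
  have hφRint : Integrable (fun ω => Real.negMulLog (R ω)) μ :=
    bdd_integrable hφRsm (fun ω => Real.negMulLog_nonneg (hR0 ω) (hR1 ω))
      (fun ω => (negMulLog_le_one_sub (hR0 ω)).trans (by linarith [hR0 ω]))
  haveI : SigmaFinite (μ.trim hm) := by infer_instance
  -- Step O1 : a.e. on {R = 0}, Q = 0
  have hO1 : ∀ᵐ ω ∂μ, R ω = 0 → Q ω = 0 := by
    have hsm : MeasurableSet[m] {ω | R ω = 0} := hRsm.measurable (measurableSet_singleton 0)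
    have hs0 : MeasurableSet[m0] {ω | R ω = 0} := hm _ hsm
    have h1 : ∫ ω in {ω | R ω = 0}, Q ω ∂μ = ∫ ω in {ω | R ω = 0}, R ω ∂μ := by
      rw [← setIntegral_condExp hm hQint hsm]
      exact setIntegral_congr_ae hs0 (hcond.mono fun ω h _ => h)
    have h2 : ∫ ω in {ω | R ω = 0}, R ω ∂μ = 0 := by
      refine setIntegral_eq_zero_of_forall_eq_zero fun ω hω => hω
    have h3 : Q =ᵐ[μ.restrict {ω | R ω = 0}] 0 := by
      rw [← setIntegral_eq_zero_iff_of_nonneg_ae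
        (Filter.Eventually.of_forall fun ω => hQ0 ω) (hQint.integrableOn)]
      rw [h1, h2]
    have h4 := (ae_restrict_iff' hs0).mp h3
    filter_upwards [h4] with ω hω hR0'
    exact hω hR0'
  -- Step O2 : the truncated logarithmic term
  set QT : Ω → ℝ := fun ω => if R ω = 0 then 0 else Q ω * (-Real.log (R ω)) with hQT_def
  have hQT_nonneg : ∀ ω, 0 ≤ QT ω := by
    intro ω
    simp only [hQT_def]
    split_ifs with h
    · exact le_rfl
    · have hRpos : 0 < R ω := lt_of_le_of_ne (hR0 ω) (Ne.symm h)
      have : Real.log (R ω) ≤ 0 := Real.log_nonpos (hR0 ω) (hR1 ω)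
      nlinarith [hQ0 ω]
  have hQTm : Measurable[m0] QT := by
    refine Measurable.ite (hRm (measurableSet_singleton 0)) measurable_const ?_
    exact hQm.mul hRm.log.neg
  -- truncation functions
  set G : ℕ → Ω → ℝ := fun n ω => if 1/(n+1:ℝ) ≤ R ω then -Real.log (R ω) else 0 with hG_def
  have hGset : ∀ n : ℕ, MeasurableSet[m] {ω | 1/(n+1:ℝ) ≤ R ω} :=
    fun n => hRsm.measurable measurableSet_Ici
  have hGsm : ∀ n, StronglyMeasurable[m] (G n) := fun n =>
    ((Measurable.ite (hGset n) hRsm.measurable.log.neg measurable_const)).stronglyMeasurable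
  have hGnonneg : ∀ n ω, 0 ≤ G n ω := by
    intro n ω
    simp only [hG_def]
    split_ifs with h
    · have h1 : (0:ℝ) < 1/(n+1:ℝ) := by positivity
      have : Real.log (R ω) ≤ 0 := Real.log_nonpos (by linarith) (hR1 ω)
      linarith
    · exact le_rfl
  have hGbd : ∀ n ω, ‖G n ω‖ ≤ Real.log (n+1:ℝ) := by
    intro n ω
    have hlog_nn : 0 ≤ Real.log (n+1:ℝ) := Real.log_nonneg (by push_cast; linarith)
    rw [Real.norm_eq_abs, abs_of_nonneg (hGnonneg n ω)]
    simp only [hG_def]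
    split_ifs with h
    · have h1 : (0:ℝ) < 1/(n+1:ℝ) := by positivity
      have hRpos : 0 < R ω := lt_of_lt_of_le h1 h
      have h2 : (R ω)⁻¹ ≤ (n+1:ℝ) := by
        rw [inv_le_comm₀ hRpos (by positivity), ← one_div]
        exact h
      calc -Real.log (R ω) = Real.log (R ω)⁻¹ := (Real.log_inv _).symm
      _ ≤ Real.log (n+1:ℝ) := Real.log_le_log (by positivity) h2
    · exact hlog_nn
  have hGmono : ∀ ω, Monotone (fun n => G n ω) := by
    intro ω n m' hnm
    simp only [hG_def]
    have hmono : (1:ℝ)/(m'+1:ℝ) ≤ 1/(n+1:ℝ) := by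
      apply one_div_le_one_div_of_le (by positivity)
      push_cast; exact_mod_cast by exact_mod_cast (by exact_mod_cast Nat.add_le_add_right hnm 1 : (n+1:ℕ) ≤ m'+1)
    split_ifs with h1 h2 h2
    · exact le_rfl
    · exact absurd (le_trans hmono h1) h2
    · have h1' : (0:ℝ) < 1/(m'+1:ℝ) := by positivity
      have : Real.log (R ω) ≤ 0 := Real.log_nonpos (by linarith [le_trans h1'.le h2]) (hR1 ω)
      linarith
    · exact le_rfl
  have hGQint : ∀ n, Integrable (fun ω => G n ω * Q ω) μ := by
    intro n
    refine (integrable_const (Real.log (n+1:ℝ))).mono'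
      (((hGsm n).mono hm).measurable.mul hQm).stronglyMeasurable.aestronglyMeasurable ?_
    filter_upwards with ω
    rw [Real.norm_eq_abs, abs_mul, abs_of_nonneg (hQ0 ω)]
    calc |G n ω| * Q ω ≤ Real.log (n+1:ℝ) * 1 := by
          apply mul_le_mul _ (hQ1 ω) (hQ0 ω) _
          · simpa [Real.norm_eq_abs] using hGbd n ω
          · simpa [Real.norm_eq_abs, abs_nonneg] using (abs_nonneg (G n ω)).trans (by simpa [Real.norm_eq_abs] using hGbd n ω)
    _ = Real.log (n+1:ℝ) := mul_one _
  have hGRint : ∀ n, Integrable (fun ω => G n ω * R ω) μ := by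
    intro n
    refine (integrable_const (Real.log (n+1:ℝ))).mono'
      (((hGsm n).mono hm).measurable.mul hRm).stronglyMeasurable.aestronglyMeasurable ?_
    filter_upwards with ω
    rw [Real.norm_eq_abs, abs_mul, abs_of_nonneg (hR0 ω)]
    calc |G n ω| * R ω ≤ Real.log (n+1:ℝ) * 1 := by
          apply mul_le_mul _ (hR1 ω) (hR0 ω) _
          · simpa [Real.norm_eq_abs] using hGbd n ω
          · simpa [Real.norm_eq_abs, abs_nonneg] using (abs_nonneg (G n ω)).trans (by simpa [Real.norm_eq_abs] using hGbd n ω)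
    _ = Real.log (n+1:ℝ) := mul_one _
  -- pull-out property
  have key_n : ∀ n, ∫ ω, G n ω * Q ω ∂μ = ∫ ω, G n ω * R ω ∂μ := by
    intro n
    have hpull : μ[G n * Q|m] =ᵐ[μ] G n * μ[Q|m] :=
      condExp_stronglyMeasurable_mul_of_bound hm (hGsm n) hQint (Real.log (n+1:ℝ))
        (Filter.Eventually.of_forall (hGbd n))
    have h1 : ∫ ω, (G n * Q) ω ∂μ = ∫ ω, (μ[G n * Q|m]) ω ∂μ :=
      (integral_condExp hm).symm
    calc ∫ ω, G n ω * Q ω ∂μ = ∫ ω, (μ[G n * Q|m]) ω ∂μ := h1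
    _ = ∫ ω, G n ω * R ω ∂μ := by
        refine integral_congr_ae ?_
        filter_upwards [hpull, hcond] with ω hω1 hω2
        rw [hω1]
        simp only [Pi.mul_apply, hω2]
  -- monotone convergence
  have hsup_Q : ∀ ω, (⨆ n, ENNReal.ofReal (G n ω * Q ω)) = ENNReal.ofReal (QT ω) := by
    intro ω
    rcases eq_or_lt_of_le (hR0 ω) with hR | hRpos
    · have : ∀ n, G n ω = 0 := by
        intro n
        simp only [hG_def]
        rw [if_neg]
        rw [← hR]
        push_neg
        positivity
      simp [this, hQT_def, ← hR]
    · obtain ⟨N, hN⟩ := exists_nat_ge (1/R ω)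
      have hcondN : 1/(N+1:ℝ) ≤ R ω := by
        rw [div_le_iff₀ (by positivity)]
        rw [div_le_iff₀ hRpos] at hN
        nlinarith
      have hQT_eq : QT ω = Q ω * (-Real.log (R ω)) := by
        simp only [hQT_def]; rw [if_neg hRpos.ne']
      apply le_antisymm
      · refine iSup_le fun n => ?_
        apply ENNReal.ofReal_le_ofReal
        rw [hQT_eq]
        simp only [hG_def]
        split_ifs with h
        · rw [mul_comm]
        · have : Real.log (R ω) ≤ 0 := Real.log_nonpos (hR0 ω) (hR1 ω)
          nlinarith [hQ0 ω]
      · refine le_trans ?_ (le_iSup _ N)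
        apply ENNReal.ofReal_le_ofReal
        rw [hQT_eq]
        simp only [hG_def, if_pos hcondN]
        rw [mul_comm]
  have hsup_R : ∀ ω, (⨆ n, ENNReal.ofReal (G n ω * R ω)) = ENNReal.ofReal (Real.negMulLog (R ω)) := by
    intro ω
    rcases eq_or_lt_of_le (hR0 ω) with hR | hRpos
    · have : ∀ n, G n ω = 0 := by
        intro n
        simp only [hG_def]
        rw [if_neg]
        rw [← hR]
        push_neg
        positivity
      simp [this, Real.negMulLog, ← hR]
    · obtain ⟨N, hN⟩ := exists_nat_ge (1/R ω)
      have hcondN : 1/(N+1:ℝ) ≤ R ω := by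
        rw [div_le_iff₀ (by positivity)]
        rw [div_le_iff₀ hRpos] at hN
        nlinarith
      have hRT_eq : Real.negMulLog (R ω) = R ω * (-Real.log (R ω)) := by
        simp only [Real.negMulLog]; ring
      apply le_antisymm
      · refine iSup_le fun n => ?_
        apply ENNReal.ofReal_le_ofReal
        rw [hRT_eq]
        simp only [hG_def]
        split_ifs with h
        · rw [mul_comm]
        · have : Real.log (R ω) ≤ 0 := Real.log_nonpos (hR0 ω) (hR1 ω)
          nlinarith [hR0 ω]
      · refine le_trans ?_ (le_iSup _ N)
        apply ENNReal.ofReal_le_ofReal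
        rw [hRT_eq]
        simp only [hG_def, if_pos hcondN]
        rw [mul_comm]
  have hlint_QT : ∫⁻ ω, ENNReal.ofReal (QT ω) ∂μ
      = ENNReal.ofReal (∫ ω, Real.negMulLog (R ω) ∂μ) := by
    have hmQ : ∀ n, Measurable (fun ω => ENNReal.ofReal (G n ω * Q ω)) := fun n =>
      (((hGsm n).mono hm).measurable.mul hQm).ennreal_ofReal
    have hmR : ∀ n, Measurable (fun ω => ENNReal.ofReal (G n ω * R ω)) := fun n =>
      (((hGsm n).mono hm).measurable.mul hRm).ennreal_ofReal
    have hmonoQ : Monotone (fun n => fun ω => ENNReal.ofReal (G n ω * Q ω)) := by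
      intro n m' hnm
      intro ω
      exact ENNReal.ofReal_le_ofReal (mul_le_mul_of_nonneg_right (hGmono ω hnm) (hQ0 ω))
    have hmonoR : Monotone (fun n => fun ω => ENNReal.ofReal (G n ω * R ω)) := by
      intro n m' hnm
      intro ω
      exact ENNReal.ofReal_le_ofReal (mul_le_mul_of_nonneg_right (hGmono ω hnm) (hR0 ω))
    calc ∫⁻ ω, ENNReal.ofReal (QT ω) ∂μ
        = ∫⁻ ω, ⨆ n, ENNReal.ofReal (G n ω * Q ω) ∂μ := by
          refine lintegral_congr fun ω => (hsup_Q ω).symm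
    _ = ⨆ n, ∫⁻ ω, ENNReal.ofReal (G n ω * Q ω) ∂μ := lintegral_iSup hmQ hmonoQ
    _ = ⨆ n, ENNReal.ofReal (∫ ω, G n ω * Q ω ∂μ) := by
          refine iSup_congr fun n => ?_
          rw [← ofReal_integral_eq_lintegral_ofReal (hGQint n)
            (Filter.Eventually.of_forall fun ω => mul_nonneg (hGnonneg n ω) (hQ0 ω))]
    _ = ⨆ n, ENNReal.ofReal (∫ ω, G n ω * R ω ∂μ) := by
          refine iSup_congr fun n => ?_
          rw [key_n n]
    _ = ⨆ n, ∫⁻ ω, ENNReal.ofReal (G n ω * R ω) ∂μ := by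
          refine iSup_congr fun n => ?_
          rw [ofReal_integral_eq_lintegral_ofReal (hGRint n)
            (Filter.Eventually.of_forall fun ω => mul_nonneg (hGnonneg n ω) (hR0 ω))]
    _ = ∫⁻ ω, ⨆ n, ENNReal.ofReal (G n ω * R ω) ∂μ := (lintegral_iSup hmR hmonoR).symm
    _ = ∫⁻ ω, ENNReal.ofReal (Real.negMulLog (R ω)) ∂μ := by
          refine lintegral_congr fun ω => hsup_R ω
    _ = ENNReal.ofReal (∫ ω, Real.negMulLog (R ω) ∂μ) :=
          (ofReal_integral_eq_lintegral_ofReal hφRint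
            (Filter.Eventually.of_forall fun ω => Real.negMulLog_nonneg (hR0 ω) (hR1 ω))).symm
  have hQTint : Integrable QT μ := by
    refine ⟨hQTm.stronglyMeasurable.aestronglyMeasurable, ?_⟩
    rw [hasFiniteIntegral_iff_ofReal (Filter.Eventually.of_forall hQT_nonneg), hlint_QT]
    exact ENNReal.ofReal_lt_top
  have hQT_integral : ∫ ω, QT ω ∂μ = ∫ ω, Real.negMulLog (R ω) ∂μ := by
    have h1 := ofReal_integral_eq_lintegral_ofReal hQTint
      (Filter.Eventually.of_forall hQT_nonneg)
    rw [hlint_QT] at h1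
    have h2 : 0 ≤ ∫ ω, QT ω ∂μ := integral_nonneg hQT_nonneg
    have h3 : 0 ≤ ∫ ω, Real.negMulLog (R ω) ∂μ :=
      integral_nonneg fun ω => Real.negMulLog_nonneg (hR0 ω) (hR1 ω)
    exact (ENNReal.ofReal_eq_ofReal_iff h2 h3).mp h1
  -- the bracket
  set br : Ω → ℝ := fun ω =>
    Real.negMulLog (R ω) - Real.negMulLog (Q ω) + (Q ω - R ω) * (-1 - Real.log (R ω))
    with hbr_def
  have hbr_eq : br =ᵐ[μ] fun ω => R ω - Q ω - Real.negMulLog (Q ω) + QT ω := by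
    filter_upwards [hO1] with ω hω
    rcases eq_or_lt_of_le (hR0 ω) with hR | hRpos
    · have hQz : Q ω = 0 := hω hR.symm
      simp [hbr_def, hQT_def, ← hR, hQz, Real.negMulLog]
    · have hQT_eq : QT ω = Q ω * (-Real.log (R ω)) := by
        simp only [hQT_def]; rw [if_neg hRpos.ne']
      simp only [hbr_def, hQT_eq, Real.negMulLog]
      ring
  have hf2 : Integrable (fun ω => R ω - Q ω) μ := hRint.sub hQint
  have hf3 : Integrable (fun ω => R ω - Q ω - Real.negMulLog (Q ω)) μ := hf2.sub hφQint
  have hbr_int : Integrable br μ := (hf3.add hQTint).congr hbr_eq.symm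
  have hbr_integral : ∫ ω, br ω ∂μ
      = (∫ ω, Real.negMulLog (R ω) ∂μ) - ∫ ω, Real.negMulLog (Q ω) ∂μ := by
    rw [integral_congr_ae hbr_eq]
    rw [integral_add hf3 hQTint, integral_sub hf2 hφQint, integral_sub hRint hQint,
      hQT_integral, hQR]
    ring
  have hbr_nonneg : ∀ᵐ ω ∂μ, 0 ≤ br ω := by
    filter_upwards [hO1] with ω hω
    rcases eq_or_lt_of_le (hR0 ω) with hR | hRpos
    · have hQz : Q ω = 0 := hω hR.symm
      simp [hbr_def, ← hR, hQz, Real.negMulLog]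
    · have hpins := pinsker_pointwise (hQ0 ω) hRpos
      have hbr_val : br ω
          = Q ω * Real.log (Q ω) - Q ω * Real.log (R ω) - Q ω + R ω := by
        simp only [hbr_def, Real.negMulLog]; ring
      rw [hbr_val]
      nlinarith [sq_nonneg (Q ω - R ω), hQ0 ω, hRpos]
  have hbr_m : Measurable[m0] br := by
    have h1 : Measurable[m0] (fun ω => Real.negMulLog (R ω)) := hφRsm.measurable
    have h2 : Measurable[m0] (fun ω => Real.negMulLog (Q ω)) := hφQsm.measurable
    exact (h1.sub h2).add ((hQm.sub hRm).mul (measurable_const.sub hRm.log))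
  -- pointwise Cauchy-Schwarz
  have hpt : ∀ᵐ ω ∂μ, ENNReal.ofReal |Q ω - R ω|
      ≤ (ENNReal.ofReal (br ω)) ^ (1/2:ℝ)
        * (ENNReal.ofReal ((2*Q ω + 4*R ω)/3)) ^ (1/2:ℝ) := by
    filter_upwards [hO1, hbr_nonneg] with ω hω hbrnn
    have hw_nonneg : 0 ≤ (2*Q ω + 4*R ω)/3 := by
      have := hQ0 ω; have := hR0 ω
      nlinarith
    have hsq : (Q ω - R ω)^2 ≤ br ω * ((2*Q ω + 4*R ω)/3) := by
      rcases eq_or_lt_of_le (hR0 ω) with hR | hRpos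
      · have hQz : Q ω = 0 := hω hR.symm
        simp [hQz, ← hR]
      · have hpins := pinsker_pointwise (hQ0 ω) hRpos
        have hbr_val : br ω
            = Q ω * Real.log (Q ω) - Q ω * Real.log (R ω) - Q ω + R ω := by
          simp only [hbr_def, Real.negMulLog]; ring
        rw [hbr_val]
        nlinarith
    have habs : |Q ω - R ω| ≤ Real.sqrt (br ω) * Real.sqrt ((2*Q ω + 4*R ω)/3) := by
      rw [← Real.sqrt_mul hbrnn]
      rw [← Real.sqrt_sq_eq_abs]
      exact Real.sqrt_le_sqrt hsq
    calc ENNReal.ofReal |Q ω - R ω|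
        ≤ ENNReal.ofReal (Real.sqrt (br ω) * Real.sqrt ((2*Q ω + 4*R ω)/3)) :=
          ENNReal.ofReal_le_ofReal habs
    _ = ENNReal.ofReal (Real.sqrt (br ω)) * ENNReal.ofReal (Real.sqrt ((2*Q ω + 4*R ω)/3)) :=
          ENNReal.ofReal_mul (Real.sqrt_nonneg _)
    _ = (ENNReal.ofReal (br ω)) ^ (1/2:ℝ) * (ENNReal.ofReal ((2*Q ω + 4*R ω)/3)) ^ (1/2:ℝ) := by
          rw [Real.sqrt_eq_rpow, Real.sqrt_eq_rpow,
            ENNReal.ofReal_rpow_of_nonneg hbrnn (by norm_num),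
            ENNReal.ofReal_rpow_of_nonneg hw_nonneg (by norm_num)]
  -- Hoelder
  have h2Q : Integrable (fun ω => 2 * Q ω) μ := hQint.const_mul 2
  have h4R : Integrable (fun ω => 4 * R ω) μ := hRint.const_mul 4
  have hsum24 : Integrable (fun ω => 2*Q ω + 4*R ω) μ := h2Q.add h4R
  have hw_int : Integrable (fun ω => (2*Q ω + 4*R ω)/3) μ := hsum24.div_const 3
  have hw_integral : ∫ ω, (2*Q ω + 4*R ω)/3 ∂μ = 2 * ∫ ω, Q ω ∂μ := by
    rw [integral_div, integral_add h2Q h4R, integral_const_mul, integral_const_mul, ← hQR]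
    ring
  have hconj : Real.HolderConjugate 2 2 := ⟨by norm_num, by norm_num, by norm_num⟩
  have hpow : ∀ y : ℝ≥0∞, (y ^ (1/2:ℝ)) ^ (2:ℝ) = y := by
    intro y
    rw [← ENNReal.rpow_mul]
    norm_num
  have hhold := ENNReal.lintegral_mul_le_Lp_mul_Lq μ hconj
    (f := fun ω => (ENNReal.ofReal (br ω)) ^ (1/2:ℝ))
    (g := fun ω => (ENNReal.ofReal ((2*Q ω + 4*R ω)/3)) ^ (1/2:ℝ))
    ((hbr_m.ennreal_ofReal.pow_const _).aemeasurable)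
    ((((hQm.const_mul 2).add (hRm.const_mul 4)).div_const 3).ennreal_ofReal.pow_const _).aemeasurable
  simp only [Pi.mul_apply, hpow] at hhold
  constructor
  · rw [← hbr_integral]
    exact integral_nonneg_of_ae hbr_nonneg
  · calc ∫⁻ ω, ENNReal.ofReal |Q ω - R ω| ∂μ
        ≤ ∫⁻ ω, (ENNReal.ofReal (br ω)) ^ (1/2:ℝ)
            * (ENNReal.ofReal ((2*Q ω + 4*R ω)/3)) ^ (1/2:ℝ) ∂μ := lintegral_mono_ae hpt
    _ ≤ (∫⁻ ω, ENNReal.ofReal (br ω) ∂μ) ^ (1/2:ℝ)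
        * (∫⁻ ω, ENNReal.ofReal ((2*Q ω + 4*R ω)/3) ∂μ) ^ (1/2:ℝ) := hhold
    _ = (ENNReal.ofReal ((∫ ω, Real.negMulLog (R ω) ∂μ) - ∫ ω, Real.negMulLog (Q ω) ∂μ))
          ^ (1/2:ℝ) * (ENNReal.ofReal (2 * ∫ ω, Q ω ∂μ)) ^ (1/2:ℝ) := by
        rw [← ofReal_integral_eq_lintegral_ofReal hbr_int hbr_nonneg,
          ← ofReal_integral_eq_lintegral_ofReal hw_int
            (Filter.Eventually.of_forall fun ω => by
              show (0:ℝ) ≤ (2*Q ω + 4*R ω)/3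
              have := hQ0 ω; have := hR0 ω; nlinarith),
          hbr_integral, hw_integral]

end core

/-- The variation of a `k`-step martingale of probability mass functions on a countable
set `X`, starting at a constant `p` with finite entropy `H(p)`, is at most
`sqrt (2 k H(p))`. Entropy with natural logarithm, `0 log 0 = 0` via `Real.negMulLog`. -/
theorem stmt8 {Ω : Type} {m : MeasurableSpace Ω} (μ : Measure Ω) [IsProbabilityMeasure μ]
    (ℱ : Filtration ℕ m) (k : ℕ) {X : Type} [Countable X] (p : X → ℝ)
    (f : ℕ → Ω → X → ℝ)
    (hnn : ∀ t ω x, 0 ≤ f t ω x) (hsum : ∀ t ω, ∑' x, f t ω x = 1)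
    (h0 : ∀ ω, f 0 ω = p)
    (hmart : ∀ x, Martingale (fun t ω => f t ω x) ℱ μ)
    (hH : Summable fun x => Real.negMulLog (p x)) :
    ∑ t ∈ Finset.Icc 1 k, ∫ ω, ∑' x, |f t ω x - f (t - 1) ω x| ∂μ
      ≤ Real.sqrt (2 * k * ∑' x, Real.negMulLog (p x)) := by
  classical
  have hΩ : Nonempty Ω := by
    by_contra h
    rw [not_nonempty_iff] at h
    have h1 : μ Set.univ = 1 := measure_univ
    rw [Set.univ_eq_empty_iff.mpr h, measure_empty] at h1
    norm_num at h1
  obtain ⟨ω0⟩ := hΩ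
  have hp0 : ∀ x, 0 ≤ p x := fun x => h0 ω0 ▸ hnn 0 ω0 x
  have hpsum : ∑' x, p x = 1 := by rw [← h0 ω0]; exact hsum 0 ω0
  have hfsummable : ∀ t ω, Summable (f t ω) := by
    intro t ω
    by_contra h
    have := hsum t ω
    rw [tsum_eq_zero_of_not_summable h] at this
    norm_num at this
  have hp_summable : Summable p := h0 ω0 ▸ hfsummable 0 ω0
  have hle1 : ∀ t ω x, f t ω x ≤ 1 := by
    intro t ω x
    rw [← hsum t ω]
    exact Summable.le_tsum (hfsummable t ω) x (fun j _ => hnn t ω j)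
  have hp1 : ∀ x, p x ≤ 1 := fun x => h0 ω0 ▸ hle1 0 ω0 x
  have hsm : ∀ t x, StronglyMeasurable[m] (fun ω => f t ω x) := fun t x =>
    ((hmart x).stronglyAdapted t).mono (ℱ.le t)
  have hint_eq : ∀ t x, ∫ ω, f t ω x ∂μ = p x := by
    intro t x
    have h1 : μ[fun ω => f t ω x | ℱ 0] =ᵐ[μ] fun ω => f 0 ω x :=
      (hmart x).condExp_ae_eq (Nat.zero_le t)
    have h2 := (integral_condExp (ℱ.le 0) (μ := μ) (f := fun ω => f t ω x)).symm
    rw [h2, integral_congr_ae h1]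
    simp only [h0]
    simp [measure_univ]
  -- entropy-type integrals
  set e : ℕ → X → ℝ := fun t x => ∫ ω, Real.negMulLog (f t ω x) ∂μ with he_def
  have he0 : ∀ x, e 0 x = Real.negMulLog (p x) := by
    intro x
    simp only [he_def, h0]
    simp [measure_univ]
  have he_nonneg : ∀ t x, 0 ≤ e t x := fun t x =>
    integral_nonneg fun ω => Real.negMulLog_nonneg (hnn t ω x) (hle1 t ω x)
  set d : ℕ → X → ℝ := fun t x => e (t-1) x - e t x with hd_def
  -- the core estimate, for t ∈ [1, k]
  have key : ∀ t ∈ Finset.Icc 1 k, ∀ x,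
      0 ≤ d t x ∧
      (∫⁻ ω, ENNReal.ofReal |f t ω x - f (t-1) ω x| ∂μ)
        ≤ (ENNReal.ofReal (d t x)) ^ (1/2:ℝ) * (ENNReal.ofReal (2 * p x)) ^ (1/2:ℝ) := by
    intro t ht x
    have hcore := core_estimate (m := ℱ (t-1)) (ℱ.le (t-1))
      (hsm t x) ((hmart x).stronglyAdapted (t-1))
      (fun ω => hnn t ω x) (fun ω => hle1 t ω x)
      (fun ω => hnn (t-1) ω x) (fun ω => hle1 (t-1) ω x)
      ((hmart x).condExp_ae_eq (Nat.sub_le t 1))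
      (by rw [hint_eq, hint_eq])
    rw [hint_eq t x] at hcore
    exact ⟨hcore.1, hcore.2⟩
  -- telescoping
  have htel : ∀ x, ∑ t ∈ Finset.Icc 1 k, d t x = Real.negMulLog (p x) - e k x := by
    intro x
    have tele : ∀ K : ℕ, ∑ t ∈ Finset.Icc 1 K, d t x = e 0 x - e K x := by
      intro K
      induction K with
      | zero => simp
      | succ K ih =>
        rw [Finset.sum_Icc_succ_top (Nat.le_add_left 1 K), ih]
        simp only [hd_def, Nat.add_sub_cancel]
        ring
    rw [tele k, he0]
  have hd_le : ∀ x, ∀ t ∈ Finset.Icc 1 k, d t x ≤ Real.negMulLog (p x) := by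
    intro x t ht
    have h1 : d t x ≤ ∑ s ∈ Finset.Icc 1 k, d s x :=
      Finset.single_le_sum (fun s hs => (key s hs x).1) ht
    rw [htel x] at h1
    linarith [he_nonneg k x]
  have hd_summable : ∀ t ∈ Finset.Icc 1 k, Summable (fun x => d t x) := by
    intro t ht
    exact Summable.of_nonneg_of_le (fun x => (key t ht x).1) (fun x => hd_le x t ht) hH
  set D : ℕ → ℝ := fun t => ∑' x, d t x with hD_def
  have hD_nonneg : ∀ t ∈ Finset.Icc 1 k, 0 ≤ D t := fun t ht =>
    tsum_nonneg fun x => (key t ht x).1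
  have hHp_nonneg : 0 ≤ ∑' x, Real.negMulLog (p x) :=
    tsum_nonneg fun x => Real.negMulLog_nonneg (hp0 x) (hp1 x)
  have hDsum : ∑ t ∈ Finset.Icc 1 k, D t ≤ ∑' x, Real.negMulLog (p x) := by
    have hswap : ∑ t ∈ Finset.Icc 1 k, D t = ∑' x, ∑ t ∈ Finset.Icc 1 k, d t x :=
      (Summable.tsum_finsetSum hd_summable).symm
    rw [hswap]
    have hsummable2 : Summable (fun x => ∑ t ∈ Finset.Icc 1 k, d t x) := by
      refine Summable.of_nonneg_of_le
        (fun x => Finset.sum_nonneg fun t ht => (key t ht x).1) (fun x => ?_) hH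
      rw [htel x]
      linarith [he_nonneg k x]
    refine Summable.tsum_le_tsum (fun x => ?_) hsummable2 hH
    rw [htel x]
    linarith [he_nonneg k x]
  -- per-step bound on the L¹ variation
  have hstep : ∀ t ∈ Finset.Icc 1 k,
      ∫ ω, ∑' x, |f t ω x - f (t-1) ω x| ∂μ ≤ Real.sqrt (2 * D t) := by
    intro t ht
    set g : Ω → ℝ := fun ω => ∑' x, |f t ω x - f (t-1) ω x| with hg_def
    have hg_nonneg : ∀ ω, 0 ≤ g ω := fun ω => tsum_nonneg fun x => abs_nonneg _
    have habs_summable : ∀ ω, Summable (fun x => |f t ω x - f (t-1) ω x|) := by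
      intro ω
      refine Summable.of_nonneg_of_le (fun x => abs_nonneg _) (fun x => ?_)
        ((hfsummable t ω).add (hfsummable (t-1) ω))
      calc |f t ω x - f (t-1) ω x| ≤ |f t ω x| + |f (t-1) ω x| := abs_sub _ _
      _ = f t ω x + f (t-1) ω x := by
          rw [abs_of_nonneg (hnn t ω x), abs_of_nonneg (hnn (t-1) ω x)]
    have hofReal : ∀ ω, ENNReal.ofReal (g ω)
        = ∑' x, ENNReal.ofReal |f t ω x - f (t-1) ω x| := fun ω =>
      ENNReal.ofReal_tsum_of_nonneg (fun x => abs_nonneg _) (habs_summable ω)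
    set G : Ω → ℝ≥0∞ := fun ω => ∑' x, ENNReal.ofReal |f t ω x - f (t-1) ω x| with hG_def
    have hGmeas : Measurable G :=
      Measurable.ennreal_tsum fun x =>
        (((hsm t x).measurable.sub (hsm (t-1) x).measurable).abs).ennreal_ofReal
    have hgmeas : AEStronglyMeasurable g μ := by
      have hfun : g = fun ω => (G ω).toReal := by
        funext ω
        rw [hG_def]
        simp only
        rw [← hofReal ω, ENNReal.toReal_ofReal (hg_nonneg ω)]
      rw [hfun]
      exact hGmeas.ennreal_toReal.aestronglyMeasurable
    have hLeq : ∫ ω, g ω ∂μ = (∫⁻ ω, ENNReal.ofReal (g ω) ∂μ).toReal :=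
      integral_eq_lintegral_of_nonneg_ae (Eventually.of_forall hg_nonneg) hgmeas
    have hlint : ∫⁻ ω, ENNReal.ofReal (g ω) ∂μ
        = ∑' x, ∫⁻ ω, ENNReal.ofReal |f t ω x - f (t-1) ω x| ∂μ := by
      calc ∫⁻ ω, ENNReal.ofReal (g ω) ∂μ = ∫⁻ ω, G ω ∂μ := lintegral_congr hofReal
      _ = ∑' x, ∫⁻ ω, ENNReal.ofReal |f t ω x - f (t-1) ω x| ∂μ :=
          lintegral_tsum fun x =>
            ((((hsm t x).measurable.sub (hsm (t-1) x).measurable).abs).ennreal_ofReal).aemeasurable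
    have hbound : ∫⁻ ω, ENNReal.ofReal (g ω) ∂μ ≤ ENNReal.ofReal (2 * D t) ^ (1/2:ℝ) := by
      rw [hlint]
      calc ∑' x, ∫⁻ ω, ENNReal.ofReal |f t ω x - f (t-1) ω x| ∂μ
          ≤ ∑' x, (ENNReal.ofReal (d t x)) ^ (1/2:ℝ) * (ENNReal.ofReal (2 * p x)) ^ (1/2:ℝ) :=
            ENNReal.tsum_le_tsum fun x => (key t ht x).2
      _ ≤ (∑' x, ENNReal.ofReal (d t x)) ^ (1/2:ℝ)
            * (∑' x, ENNReal.ofReal (2 * p x)) ^ (1/2:ℝ) := tsum_CS _ _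
      _ = (ENNReal.ofReal (D t)) ^ (1/2:ℝ) * (ENNReal.ofReal 2) ^ (1/2:ℝ) := by
          rw [← ENNReal.ofReal_tsum_of_nonneg (fun x => (key t ht x).1) (hd_summable t ht)]
          rw [← ENNReal.ofReal_tsum_of_nonneg
            (fun x => mul_nonneg (by norm_num) (hp0 x)) (hp_summable.mul_left 2)]
          rw [tsum_mul_left, hpsum, mul_one]
      _ = ENNReal.ofReal (2 * D t) ^ (1/2:ℝ) := by
          rw [← ENNReal.mul_rpow_of_nonneg _ _ (by norm_num : (0:ℝ) ≤ 1/2)]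
          rw [← ENNReal.ofReal_mul (by linarith [hD_nonneg t ht] : (0:ℝ) ≤ D t)]
          rw [mul_comm (D t) 2]
    calc ∫ ω, ∑' x, |f t ω x - f (t-1) ω x| ∂μ
        = (∫⁻ ω, ENNReal.ofReal (g ω) ∂μ).toReal := hLeq
    _ ≤ (ENNReal.ofReal (2 * D t) ^ (1/2:ℝ)).toReal := by
        refine ENNReal.toReal_mono ?_ hbound
        exact ENNReal.rpow_ne_top_of_nonneg (by norm_num) ENNReal.ofReal_ne_top
    _ = Real.sqrt (2 * D t) := by
        rw [← ENNReal.toReal_rpow, ENNReal.toReal_ofReal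
          (by linarith [hD_nonneg t ht] : (0:ℝ) ≤ 2 * D t)]
        rw [Real.sqrt_eq_rpow]
  -- final Cauchy-Schwarz over the steps
  have hcard : ((Finset.Icc 1 k).card : ℝ) = (k : ℝ) := by
    rw [Nat.card_Icc]
    norm_num
  have hsum_nonneg : 0 ≤ ∑ t ∈ Finset.Icc 1 k, Real.sqrt (2 * D t) :=
    Finset.sum_nonneg fun t _ => Real.sqrt_nonneg _
  have hsq := sq_sum_le_card_mul_sum_sq (s := Finset.Icc 1 k)
    (f := fun t => Real.sqrt (2 * D t))
  have hsq2 : ∑ t ∈ Finset.Icc 1 k, Real.sqrt (2 * D t) ^ 2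
      = ∑ t ∈ Finset.Icc 1 k, 2 * D t :=
    Finset.sum_congr rfl fun t ht => Real.sq_sqrt (by linarith [hD_nonneg t ht])
  have hsum2D : ∑ t ∈ Finset.Icc 1 k, 2 * D t ≤ 2 * ∑' x, Real.negMulLog (p x) := by
    rw [← Finset.mul_sum]
    linarith [hDsum]
  have hfinal : ∑ t ∈ Finset.Icc 1 k, Real.sqrt (2 * D t)
      ≤ Real.sqrt (2 * k * ∑' x, Real.negMulLog (p x)) := by
    rw [Real.le_sqrt hsum_nonneg (by positivity)]
    calc (∑ t ∈ Finset.Icc 1 k, Real.sqrt (2 * D t)) ^ 2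
        ≤ ((Finset.Icc 1 k).card : ℝ) * ∑ t ∈ Finset.Icc 1 k, Real.sqrt (2 * D t) ^ 2 := hsq
    _ = (k : ℝ) * ∑ t ∈ Finset.Icc 1 k, 2 * D t := by rw [hcard, hsq2]
    _ ≤ (k : ℝ) * (2 * ∑' x, Real.negMulLog (p x)) := by
        refine mul_le_mul_of_nonneg_left hsum2D (by positivity)
    _ = 2 * k * ∑' x, Real.negMulLog (p x) := by ring
  calc ∑ t ∈ Finset.Icc 1 k, ∫ ω, ∑' x, |f t ω x - f (t - 1) ω x| ∂μ
      ≤ ∑ t ∈ Finset.Icc 1 k, Real.sqrt (2 * D t) := Finset.sum_le_sum hstep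
  _ ≤ Real.sqrt (2 * k * ∑' x, Real.negMulLog (p x)) := hfinal
end

section
/- Let p_0, ..., p_k be a martingale of probability vectors on a finite set X with p_0 = p constant. Then E(Σ_{t=1}^k ||p_t - p_{t-1}||_1) ≤ Σ_{x∈X} sqrt(k · p(x)(1 - p(x))), and hence ≤ sqrt(k(d-1)) where d = |X|. -/
open MeasureTheory Real

section MZaux

variable {Ω : Type} {m : MeasurableSpace Ω} {μ : Measure Ω} [IsProbabilityMeasure μ]

/-- Integrability of bounded a.e.-strongly-measurable functions on a probability space. -/
lemma MZ.integrable_of_bdd {g : Ω → ℝ} (hg : AEStronglyMeasurable g μ) (C : ℝ)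
    (h : ∀ ω, |g ω| ≤ C) : Integrable g μ :=
  (integrable_const C).mono' hg (Filter.Eventually.of_forall fun ω => by
    simpa [Real.norm_eq_abs] using h ω)

/-- Jensen / Cauchy–Schwarz: `∫ |h| ≤ sqrt (∫ h²)` on a probability space, for bounded `h`. -/
lemma MZ.integral_abs_le_sqrt {h : Ω → ℝ} (hmeas : AEStronglyMeasurable h μ) (C : ℝ)
    (hbd : ∀ ω, |h ω| ≤ C) :
    ∫ ω, |h ω| ∂μ ≤ Real.sqrt (∫ ω, (h ω) ^ 2 ∂μ) := by
  set c : ℝ := ∫ ω, |h ω| ∂μ with hc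
  have hmabs : AEStronglyMeasurable (fun ω => |h ω|) μ := by
    simpa [Real.norm_eq_abs] using hmeas.norm
  have habs : Integrable (fun ω => |h ω|) μ :=
    MZ.integrable_of_bdd hmabs C (fun ω => by simpa using hbd ω)
  have hmsq : AEStronglyMeasurable (fun ω => (h ω) ^ 2) μ :=
    (hmeas.mul hmeas).congr (Filter.Eventually.of_forall fun ω => (pow_two (h ω)).symm)
  have hsq : Integrable (fun ω => (h ω) ^ 2) μ :=
    MZ.integrable_of_bdd hmsq (C ^ 2) (fun ω => by
      rw [abs_pow]
      exact pow_le_pow_left₀ (abs_nonneg _) (hbd ω) 2)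
  have hcnn : 0 ≤ c := integral_nonneg fun ω => abs_nonneg _
  have i1 : Integrable (fun ω => (h ω) ^ 2 - 2 * c * |h ω|) μ :=
    hsq.sub (habs.const_mul (2 * c))
  have i2 : Integrable (fun ω => 2 * c * |h ω|) μ := habs.const_mul (2 * c)
  have hexp : ∫ ω, (|h ω| - c) ^ 2 ∂μ = (∫ ω, (h ω) ^ 2 ∂μ) - c ^ 2 := by
    have hptw : ∀ ω, (|h ω| - c) ^ 2 = ((h ω) ^ 2 - 2 * c * |h ω|) + c ^ 2 := by
      intro ω; rw [sub_sq, sq_abs]; ring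
    simp_rw [hptw]
    rw [integral_add i1 (integrable_const _), integral_sub hsq i2, integral_const_mul _ _,
      integral_const]
    simp only [probReal_univ, measure_univ, ENNReal.toReal_one, smul_eq_mul, one_mul, ← hc]
    ring
  have h0 : 0 ≤ (∫ ω, (h ω) ^ 2 ∂μ) - c ^ 2 := by
    rw [← hexp]; exact integral_nonneg fun ω => sq_nonneg _
  exact (Real.le_sqrt hcnn (by nlinarith)).2 (by linarith)

/-- The per-coordinate Mertens–Zamir bound for a [0,1]-valued martingale. -/
lemma MZ.key {ℱ : Filtration ℕ m} {k : ℕ} {g : ℕ → Ω → ℝ} {p : ℝ}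
    (h0 : ∀ ω, g 0 ω = p)
    (hnn : ∀ t ω, 0 ≤ g t ω) (hle : ∀ t ω, g t ω ≤ 1)
    (hmart : Martingale g ℱ μ) :
    ∑ t ∈ Finset.Icc 1 k, ∫ ω, |g t ω - g (t - 1) ω| ∂μ
      ≤ Real.sqrt (k * (p * (1 - p))) := by
  have hms : ∀ t, AEStronglyMeasurable (g t) μ :=
    fun t => ((hmart.stronglyAdapted t).mono (ℱ.le t)).aestronglyMeasurable
  have hbd : ∀ t ω, |g t ω| ≤ 1 := fun t ω => abs_le.2 ⟨by linarith [hnn t ω], hle t ω⟩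
  have hint : ∀ t, Integrable (g t) μ := fun t => hmart.integrable t
  have hintsq : ∀ s t, Integrable (fun ω => g s ω * g t ω) μ := fun s t =>
    MZ.integrable_of_bdd ((hms s).mul (hms t)) 1 (fun ω => by
      have h1 := hnn s ω; have h2 := hle s ω; have h3 := hnn t ω; have h4 := hle t ω
      rw [abs_mul, abs_of_nonneg h1, abs_of_nonneg h3]
      nlinarith)
  -- orthogonality of increments
  have horth : ∀ t, ∫ ω, g t ω * g (t + 1) ω ∂μ = ∫ ω, g t ω * g t ω ∂μ := by
    intro t
    have hfg : Integrable (g t * g (t + 1)) μ := hintsq t (t + 1)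
    have h1 : μ[g t * g (t + 1)|ℱ t] =ᵐ[μ] g t * μ[g (t + 1)|ℱ t] :=
      condExp_mul_of_stronglyMeasurable_left (hmart.stronglyAdapted t) hfg (hint (t + 1))
    have h2 : μ[g (t + 1)|ℱ t] =ᵐ[μ] g t := hmart.condExp_ae_eq (Nat.le_succ t)
    have h3 : μ[g t * g (t + 1)|ℱ t] =ᵐ[μ] fun ω => g t ω * g t ω := by
      filter_upwards [h1, h2] with ω hω1 hω2
      rw [hω1, Pi.mul_apply, hω2]
    calc ∫ ω, g t ω * g (t + 1) ω ∂μ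
        = ∫ ω, (g t * g (t + 1)) ω ∂μ := rfl
      _ = ∫ ω, (μ[g t * g (t + 1)|ℱ t]) ω ∂μ := (integral_condExp (ℱ.le t)).symm
      _ = ∫ ω, g t ω * g t ω ∂μ := integral_congr_ae h3
  -- increment of second moment
  have hstep : ∀ t, ∫ ω, (g (t + 1) ω - g t ω) ^ 2 ∂μ
      = (∫ ω, g (t + 1) ω * g (t + 1) ω ∂μ) - ∫ ω, g t ω * g t ω ∂μ := by
    intro t
    have hptw : ∀ ω, (g (t + 1) ω - g t ω) ^ 2
        = (g (t + 1) ω * g (t + 1) ω - 2 * (g t ω * g (t + 1) ω)) + g t ω * g t ω := by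
      intro ω; ring
    have iA : Integrable (fun ω => g (t + 1) ω * g (t + 1) ω
        - 2 * (g t ω * g (t + 1) ω)) μ :=
      (hintsq (t + 1) (t + 1)).sub ((hintsq t (t + 1)).const_mul 2)
    have iB : Integrable (fun ω => 2 * (g t ω * g (t + 1) ω)) μ :=
      (hintsq t (t + 1)).const_mul 2
    simp_rw [hptw]
    rw [integral_add iA (hintsq t t), integral_sub (hintsq (t + 1) (t + 1)) iB,
      integral_const_mul _ _, horth t]
    ring
  -- telescoping: sum of squared increments
  have htel : ∀ n : ℕ, ∑ t ∈ Finset.Icc 1 n, ∫ ω, (g t ω - g (t - 1) ω) ^ 2 ∂μ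
      = (∫ ω, g n ω * g n ω ∂μ) - p ^ 2 := by
    intro n
    induction n with
    | zero => simp [h0, pow_two]
    | succ n ih =>
      rw [Finset.sum_Icc_succ_top (Nat.one_le_iff_ne_zero.2 (Nat.succ_ne_zero n)), ih]
      have : ∫ ω, (g (n + 1) ω - g (n + 1 - 1) ω) ^ 2 ∂μ
          = (∫ ω, g (n + 1) ω * g (n + 1) ω ∂μ) - ∫ ω, g n ω * g n ω ∂μ := by
        simpa using hstep n
      rw [this]
      ring
  -- E g_k = p and E g_k² ≤ E g_k
  have hmean : ∫ ω, g k ω ∂μ = p := by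
    have h2 : μ[g k|ℱ 0] =ᵐ[μ] g 0 := hmart.condExp_ae_eq (Nat.zero_le k)
    calc ∫ ω, g k ω ∂μ = ∫ ω, (μ[g k|ℱ 0]) ω ∂μ := (integral_condExp (ℱ.le 0)).symm
      _ = ∫ ω, g 0 ω ∂μ := integral_congr_ae h2
      _ = p := by simp [h0]
  have hsumD : ∑ t ∈ Finset.Icc 1 k, ∫ ω, (g t ω - g (t - 1) ω) ^ 2 ∂μ ≤ p * (1 - p) := by
    rw [htel k]
    have hmono : ∫ ω, g k ω * g k ω ∂μ ≤ ∫ ω, g k ω ∂μ :=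
      integral_mono (hintsq k k) (hint k) (fun ω => by
        have h1 := hnn k ω; have h2 := hle k ω; nlinarith)
    rw [hmean] at hmono
    nlinarith
  -- per-step Jensen
  have hjen : ∀ t, ∫ ω, |g t ω - g (t - 1) ω| ∂μ
      ≤ Real.sqrt (∫ ω, (g t ω - g (t - 1) ω) ^ 2 ∂μ) := fun t =>
    MZ.integral_abs_le_sqrt ((hms t).sub (hms (t - 1))) 2 (fun ω =>
      abs_le.2 ⟨by linarith [hnn t ω, hle (t - 1) ω], by linarith [hle t ω, hnn (t - 1) ω]⟩)
  have hsum1 : ∑ t ∈ Finset.Icc 1 k, ∫ ω, |g t ω - g (t - 1) ω| ∂μ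
      ≤ ∑ t ∈ Finset.Icc 1 k, Real.sqrt (∫ ω, (g t ω - g (t - 1) ω) ^ 2 ∂μ) :=
    Finset.sum_le_sum fun t _ => hjen t
  -- Cauchy–Schwarz over time
  have hcs : ∑ t ∈ Finset.Icc 1 k, Real.sqrt (∫ ω, (g t ω - g (t - 1) ω) ^ 2 ∂μ)
      ≤ Real.sqrt (k * (p * (1 - p))) := by
    set S := ∑ t ∈ Finset.Icc 1 k, Real.sqrt (∫ ω, (g t ω - g (t - 1) ω) ^ 2 ∂μ) with hS
    have hSnn : 0 ≤ S := Finset.sum_nonneg fun t _ => Real.sqrt_nonneg _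
    have hsq : S ^ 2 ≤ k * (p * (1 - p)) := by
      have h1 : S ^ 2 ≤ (Finset.Icc 1 k).card
          * ∑ t ∈ Finset.Icc 1 k, (Real.sqrt (∫ ω, (g t ω - g (t - 1) ω) ^ 2 ∂μ)) ^ 2 :=
        sq_sum_le_card_mul_sum_sq
      have h2 : ∀ t ∈ Finset.Icc 1 k, (Real.sqrt (∫ ω, (g t ω - g (t - 1) ω) ^ 2 ∂μ)) ^ 2
          = ∫ ω, (g t ω - g (t - 1) ω) ^ 2 ∂μ := fun t _ =>
        Real.sq_sqrt (integral_nonneg fun ω => sq_nonneg _)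
      rw [Finset.sum_congr rfl h2] at h1
      have hcard : (((Finset.Icc 1 k).card : ℕ) : ℝ) = (k : ℝ) := by
        rw [Nat.card_Icc]; simp
      rw [hcard] at h1
      calc S ^ 2 ≤ (k : ℝ) * ∑ t ∈ Finset.Icc 1 k, ∫ ω, (g t ω - g (t - 1) ω) ^ 2 ∂μ := h1
        _ ≤ (k : ℝ) * (p * (1 - p)) :=
          mul_le_mul_of_nonneg_left hsumD (Nat.cast_nonneg k)
    exact (Real.le_sqrt hSnn (by nlinarith)).2 hsq
  exact hsum1.trans hcs

end MZaux

/-- Classical (Mertens–Zamir) bound: the variation of a `k`-step martingale of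
probability vectors on a finite set `X` with `d` elements, starting at the constant `p`,
is at most `Σ_x sqrt (k p(x)(1 - p(x)))`, and hence at most `sqrt (k (d - 1))`. -/
theorem stmt10 {Ω : Type} {m : MeasurableSpace Ω} (μ : Measure Ω) [IsProbabilityMeasure μ]
    (ℱ : Filtration ℕ m) (k : ℕ) {X : Type} [Fintype X] (p : X → ℝ)
    (f : ℕ → Ω → X → ℝ)
    (hnn : ∀ t ω x, 0 ≤ f t ω x) (hsum : ∀ t ω, ∑ x, f t ω x = 1)
    (h0 : ∀ ω, f 0 ω = p)
    (hmart : ∀ x, Martingale (fun t ω => f t ω x) ℱ μ) :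
    (∑ t ∈ Finset.Icc 1 k, ∫ ω, ∑ x, |f t ω x - f (t - 1) ω x| ∂μ
        ≤ ∑ x, Real.sqrt (k * (p x * (1 - p x))))
      ∧ ∑ t ∈ Finset.Icc 1 k, ∫ ω, ∑ x, |f t ω x - f (t - 1) ω x| ∂μ
        ≤ Real.sqrt (k * (Fintype.card X - 1)) := by
  have hΩ : Nonempty Ω := by
    by_contra h
    have h1 : μ Set.univ = 1 := measure_univ
    rw [Set.univ_eq_empty_iff.2 (not_nonempty_iff.1 h), measure_empty] at h1
    exact zero_ne_one h1
  obtain ⟨ω0⟩ := hΩ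
  -- basic facts on p
  have hple : ∀ t ω x, f t ω x ≤ 1 := by
    intro t ω x
    have h1 := Finset.single_le_sum (f := fun y => f t ω y) (fun y _ => hnn t ω y)
      (Finset.mem_univ x)
    rw [hsum t ω] at h1
    exact h1
  have hpnn : ∀ x, 0 ≤ p x := fun x => h0 ω0 ▸ hnn 0 ω0 x
  have hp1 : ∀ x, p x ≤ 1 := fun x => h0 ω0 ▸ hple 0 ω0 x
  have hpsum : ∑ x, p x = 1 := h0 ω0 ▸ hsum 0 ω0
  -- measurability / integrability of coordinates
  have hms : ∀ t x, AEStronglyMeasurable (fun ω => f t ω x) μ :=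
    fun t x => (((hmart x).stronglyAdapted t).mono (ℱ.le t)).aestronglyMeasurable
  have hintabs : ∀ t x, Integrable (fun ω => |f t ω x - f (t - 1) ω x|) μ := by
    intro t x
    have hd : AEStronglyMeasurable (fun ω => f t ω x - f (t - 1) ω x) μ :=
      (hms t x).sub (hms (t - 1) x)
    have hda : AEStronglyMeasurable (fun ω => |f t ω x - f (t - 1) ω x|) μ := by
      simpa [Real.norm_eq_abs] using hd.norm
    refine MZ.integrable_of_bdd hda 2 (fun ω => ?_)
    rw [abs_abs]
    exact abs_le.2 ⟨by linarith [hnn t ω x, hple (t - 1) ω x],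
      by linarith [hple t ω x, hnn (t - 1) ω x]⟩
  -- swap integral and sum, then sums
  have hswap : ∑ t ∈ Finset.Icc 1 k, ∫ ω, ∑ x, |f t ω x - f (t - 1) ω x| ∂μ
      = ∑ x, ∑ t ∈ Finset.Icc 1 k, ∫ ω, |f t ω x - f (t - 1) ω x| ∂μ := by
    rw [Finset.sum_comm]
    exact Finset.sum_congr rfl fun t _ => integral_finset_sum _ fun x _ => hintabs t x
  have hmain : ∑ t ∈ Finset.Icc 1 k, ∫ ω, ∑ x, |f t ω x - f (t - 1) ω x| ∂μ
      ≤ ∑ x, Real.sqrt (k * (p x * (1 - p x))) := by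
    rw [hswap]
    refine Finset.sum_le_sum fun x _ => ?_
    exact MZ.key (fun ω => by rw [h0]) (fun t ω => hnn t ω x) (fun t ω => hple t ω x)
      (hmart x)
  refine ⟨hmain, hmain.trans ?_⟩
  -- second bound: Σ_x sqrt(k p(1-p)) ≤ sqrt(k(d-1))
  have hXne : Nonempty X := by
    by_contra h
    rw [Finset.univ_eq_empty_iff.2 (not_nonempty_iff.1 h), Finset.sum_empty] at hpsum
    exact zero_ne_one hpsum
  have hd1 : 1 ≤ (Fintype.card X : ℝ) := by
    exact_mod_cast Fintype.card_pos
  set S := ∑ x, Real.sqrt ((k : ℝ) * (p x * (1 - p x))) with hS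
  have hSnn : 0 ≤ S := Finset.sum_nonneg fun x _ => Real.sqrt_nonneg _
  have hpsq : (1 : ℝ) ≤ (Fintype.card X : ℝ) * ∑ x, (p x) ^ 2 := by
    have h1 := sq_sum_le_card_mul_sum_sq (s := (Finset.univ : Finset X)) (f := p)
    rw [hpsum] at h1
    simpa [Finset.card_univ] using h1
  have hsq : S ^ 2 ≤ (k : ℝ) * ((Fintype.card X : ℝ) - 1) := by
    have h1 : S ^ 2 ≤ (Fintype.card X : ℝ)
        * ∑ x, (Real.sqrt ((k : ℝ) * (p x * (1 - p x)))) ^ 2 := by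
      have h2 := sq_sum_le_card_mul_sum_sq (s := (Finset.univ : Finset X))
        (f := fun x => Real.sqrt ((k : ℝ) * (p x * (1 - p x))))
      rw [Finset.card_univ] at h2
      exact h2
    have h2 : ∀ x ∈ (Finset.univ : Finset X),
        (Real.sqrt ((k : ℝ) * (p x * (1 - p x)))) ^ 2 = (k : ℝ) * (p x * (1 - p x)) :=
      fun x _ => Real.sq_sqrt (mul_nonneg (Nat.cast_nonneg k)
        (mul_nonneg (hpnn x) (by linarith [hp1 x])))
    rw [Finset.sum_congr rfl h2] at h1
    have h3 : ∑ x, (k : ℝ) * (p x * (1 - p x)) = (k : ℝ) * (1 - ∑ x, (p x) ^ 2) := by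
      rw [← Finset.mul_sum]
      congr 1
      have h4 : ∀ x ∈ (Finset.univ : Finset X), p x * (1 - p x) = p x - (p x) ^ 2 :=
        fun x _ => by ring
      rw [Finset.sum_congr rfl h4, Finset.sum_sub_distrib, hpsum]
    rw [h3] at h1
    have hd : (Fintype.card X : ℝ) * ((k : ℝ) * (1 - ∑ x, (p x) ^ 2))
        ≤ (k : ℝ) * ((Fintype.card X : ℝ) - 1) := by
      have hk : (0 : ℝ) ≤ (k : ℝ) := Nat.cast_nonneg k
      nlinarith
    exact h1.trans hd
  exact (Real.le_sqrt hSnn (by nlinarith)).2 hsq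
end

section
/- For a real-valued martingale q_0, ..., q_k with values in [0,1] and q_0 constant equal to α, E(Σ_{t=1}^k |q_t - q_{t-1}|) ≤ sqrt(k · α(1-α)). -/
open MeasureTheory Real

/-- For a real-valued martingale `q_0, ..., q_k` with values in `[0,1]` and `q_0`
constant equal to `α`, `E (Σ_{t=1}^k |q_t - q_{t-1}|) ≤ sqrt (k α (1 - α))`. -/
theorem stmt11 {Ω : Type} {m : MeasurableSpace Ω} (μ : Measure Ω) [IsProbabilityMeasure μ]
    (ℱ : Filtration ℕ m) (k : ℕ) (α : ℝ) (q : ℕ → Ω → ℝ)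
    (hbdd : ∀ t ω, q t ω ∈ Set.Icc (0 : ℝ) 1)
    (h0 : ∀ ω, q 0 ω = α)
    (hmart : Martingale q ℱ μ) :
    ∑ t ∈ Finset.Icc 1 k, ∫ ω, |q t ω - q (t - 1) ω| ∂μ
      ≤ Real.sqrt (k * (α * (1 - α))) := by
  have hms : ∀ t, StronglyMeasurable (q t) := fun t =>
    (hmart.stronglyMeasurable t).mono (ℱ.le t)
  have hint : ∀ t, Integrable (q t) μ := hmart.integrable
  have hintmul : ∀ s t, Integrable (fun ω => q s ω * q t ω) μ := by
    intro s t
    refine ⟨((hms s).mul (hms t)).aestronglyMeasurable, HasFiniteIntegral.of_bounded (C := 1) ?_⟩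
    filter_upwards with ω
    rw [Real.norm_eq_abs, abs_mul]
    exact mul_le_one₀ ((abs_le.2 ⟨le_trans (by norm_num) (hbdd s ω).1, (hbdd s ω).2⟩))
      (abs_nonneg _) ((abs_le.2 ⟨le_trans (by norm_num) (hbdd t ω).1, (hbdd t ω).2⟩))
  -- key: E[q t * q (t+1)] = E[q t ^ 2]
  have hkey : ∀ t : ℕ, ∫ ω, q t ω * q (t + 1) ω ∂μ = ∫ ω, q t ω * q t ω ∂μ := by
    intro t
    have h1 : μ[(q t) * (q (t+1)) | ℱ t] =ᵐ[μ] (q t) * μ[q (t+1) | ℱ t] :=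
      condExp_mul_of_stronglyMeasurable_left (hmart.stronglyMeasurable t) (hintmul t (t+1))
        (hint (t+1))
    have h2 : μ[q (t+1) | ℱ t] =ᵐ[μ] q t := hmart.condExp_ae_eq (Nat.le_succ t)
    have h3 : μ[(q t) * (q (t+1)) | ℱ t] =ᵐ[μ] (q t) * (q t) := by
      filter_upwards [h1, h2] with ω hω1 hω2
      simp only [Pi.mul_apply] at *
      rw [hω1, hω2]
    calc ∫ ω, q t ω * q (t + 1) ω ∂μ
        = ∫ ω, (μ[(q t) * (q (t+1)) | ℱ t]) ω ∂μ := (integral_condExp (ℱ.le t)).symm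
      _ = ∫ ω, q t ω * q t ω ∂μ := integral_congr_ae h3
  -- increments squared telescope
  have hsq : ∀ t : ℕ, ∫ ω, (q (t+1) ω - q t ω)^2 ∂μ
      = ∫ ω, (q (t+1) ω)^2 ∂μ - ∫ ω, (q t ω)^2 ∂μ := by
    intro t
    have e1 : ∫ ω, (q (t+1) ω - q t ω)^2 ∂μ
        = ∫ ω, (q (t+1) ω * q (t+1) ω - 2 * (q t ω * q (t+1) ω) + q t ω * q t ω) ∂μ := by
      apply integral_congr_ae
      filter_upwards with ω
      ring
    have ha : Integrable (fun ω => q (t+1) ω * q (t+1) ω - 2 * (q t ω * q (t+1) ω)) μ :=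
      (hintmul (t+1) (t+1)).sub ((hintmul t (t+1)).const_mul 2)
    have hb : Integrable (fun ω => q t ω * q t ω) μ := hintmul t t
    rw [e1, integral_add ha hb,
      integral_sub (hintmul (t+1) (t+1)) ((hintmul t (t+1)).const_mul 2),
      integral_const_mul, hkey]
    simp_rw [← pow_two]
    ring
  -- E q k = α
  have hμ0 : ∫ ω, q 0 ω ∂μ = α := by simp [h0]
  have hEk : ∫ ω, q k ω ∂μ = α := by
    have h4 := integral_condExp (μ := μ) (f := q k) (ℱ.le 0)
    rw [← hμ0, ← h4]
    exact integral_congr_ae (hmart.condExp_ae_eq (Nat.zero_le k))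
  have hEk2 : ∫ ω, (q k ω)^2 ∂μ ≤ α := by
    rw [← hEk]
    refine integral_mono ?_ (hint k) (fun ω => ?_)
    · simpa [pow_two] using hintmul k k
    · have := hbdd k ω
      nlinarith [this.1, this.2]
  have hA0 : ∫ ω, (q 0 ω)^2 ∂μ = α^2 := by simp [h0]
  -- telescoping sum
  have htel : ∀ n : ℕ, ∑ t ∈ Finset.Icc 1 n, ∫ ω, (q t ω - q (t-1) ω)^2 ∂μ
      = ∫ ω, (q n ω)^2 ∂μ - α^2 := by
    intro n
    induction n with
    | zero => simp [hA0]
    | succ n ih =>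
      rw [Finset.sum_Icc_succ_top (Nat.le_add_left 1 n), ih, Nat.add_sub_cancel, hsq]
      ring
  have hsum : ∑ t ∈ Finset.Icc 1 k, ∫ ω, (q t ω - q (t-1) ω)^2 ∂μ ≤ α * (1 - α) := by
    rw [htel k]
    nlinarith [hEk2]
  -- Cauchy-Schwarz per term: E|d| ≤ sqrt (E d^2)
  have hAnn : ∀ t, (0:ℝ) ≤ ∫ ω, (q t ω - q (t-1) ω)^2 ∂μ :=
    fun t => integral_nonneg (fun ω => sq_nonneg _)
  have hterm : ∀ t : ℕ, (∫ ω, |q t ω - q (t-1) ω| ∂μ)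
      ≤ Real.sqrt (∫ ω, (q t ω - q (t-1) ω)^2 ∂μ) := by
    intro t
    set X : Ω → ℝ := fun ω => |q t ω - q (t-1) ω| with hX
    have hXm : MemLp X 2 μ := by
      refine MemLp.of_bound
        ((((hms t).measurable.sub (hms (t-1)).measurable).abs).aestronglyMeasurable) 2 ?_
      filter_upwards with ω
      rw [hX]
      simp only [Real.norm_eq_abs, abs_abs]
      have h1 := hbdd t ω; have h2 := hbdd (t-1) ω
      rw [abs_le]; constructor <;> nlinarith [h1.1, h1.2, h2.1, h2.2]
    have hv := ProbabilityTheory.variance_nonneg X μ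
    rw [ProbabilityTheory.variance_eq_sub hXm] at hv
    simp only [Pi.pow_apply] at hv
    have h2 : (∫ ω, X ω ∂μ)^2 ≤ ∫ ω, (X ω)^2 ∂μ := by linarith
    have h3 : ∫ ω, (X ω)^2 ∂μ = ∫ ω, (q t ω - q (t-1) ω)^2 ∂μ := by
      simp [hX, sq_abs]
    rw [h3] at h2
    have hXnn : 0 ≤ ∫ ω, X ω ∂μ := integral_nonneg (fun ω => abs_nonneg _)
    exact (Real.le_sqrt hXnn (hAnn t)).2 h2
  -- α ∈ [0,1]
  have hα0 : 0 ≤ α := hμ0 ▸ integral_nonneg (fun ω => (hbdd 0 ω).1)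
  have hα1 : α ≤ 1 := by
    rw [← hμ0]
    calc ∫ ω, q 0 ω ∂μ ≤ ∫ _ω, (1:ℝ) ∂μ :=
          integral_mono (hint 0) (integrable_const 1) (fun ω => (hbdd 0 ω).2)
      _ = 1 := by simp
  calc ∑ t ∈ Finset.Icc 1 k, ∫ ω, |q t ω - q (t-1) ω| ∂μ
      ≤ ∑ t ∈ Finset.Icc 1 k, Real.sqrt (∫ ω, (q t ω - q (t-1) ω)^2 ∂μ) :=
        Finset.sum_le_sum (fun t _ => hterm t)
    _ ≤ Real.sqrt (k * (α * (1 - α))) := by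
        have hknn : (0:ℝ) ≤ k * (α * (1 - α)) := by
          have : 0 ≤ α * (1 - α) := mul_nonneg hα0 (by linarith)
          positivity
        have hS : (∑ t ∈ Finset.Icc 1 k, Real.sqrt (∫ ω, (q t ω - q (t-1) ω)^2 ∂μ))^2
            ≤ k * (α * (1 - α)) := by
          calc (∑ t ∈ Finset.Icc 1 k, Real.sqrt (∫ ω, (q t ω - q (t-1) ω)^2 ∂μ))^2
              ≤ (Finset.Icc 1 k).card * ∑ t ∈ Finset.Icc 1 k,
                (Real.sqrt (∫ ω, (q t ω - q (t-1) ω)^2 ∂μ))^2 := sq_sum_le_card_mul_sum_sq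
            _ = k * ∑ t ∈ Finset.Icc 1 k, ∫ ω, (q t ω - q (t-1) ω)^2 ∂μ := by
                rw [Nat.card_Icc, Nat.add_sub_cancel]
                congr 1
                exact Finset.sum_congr rfl fun t _ => Real.sq_sqrt (hAnn t)
            _ ≤ k * (α * (1-α)) := mul_le_mul_of_nonneg_left hsum (Nat.cast_nonneg k)
        exact (Real.le_sqrt (Finset.sum_nonneg fun t _ => Real.sqrt_nonneg _) hknn).2 hS
end

section
/- For a nonnegative martingale Z_0, ..., Z_k with Z_0 constant, Σ_{t=1}^k E|Z_t - Z_{t-1}| ≤ sqrt(2 k E Z_0) · sqrt(E(Z_k log Z_k) - E(Z_0 log Z_0)). -/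
open MeasureTheory Real

set_option maxHeartbeats 1000000

section Aux


lemma h_deriv (r : ℝ) (hr : 0 < r) :
    HasDerivAt (fun x : ℝ => (x + 1) * Real.log x - 2 * (x - 1)) (Real.log r + 1 / r - 1) r := by
  have h1 : HasDerivAt (fun x : ℝ => (x + 1) * Real.log x) (1 * Real.log r + (r + 1) * r⁻¹) r :=
    ((hasDerivAt_id r).add_const 1).mul (Real.hasDerivAt_log hr.ne')
  have h2 : HasDerivAt (fun x : ℝ => 2 * (x - 1)) 2 r := by
    simpa using ((hasDerivAt_id r).sub_const 1).const_mul 2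
  refine (h1.sub h2).congr_deriv ?_
  linear_combination mul_inv_cancel₀ hr.ne'

lemma h_sign_ge (r : ℝ) (hr : 1 ≤ r) : 0 ≤ (r + 1) * Real.log r - 2 * (r - 1) := by
  have hmono : MonotoneOn (fun x : ℝ => (x + 1) * Real.log x - 2 * (x - 1)) (Set.Ici 1) := by
    apply monotoneOn_of_hasDerivWithinAt_nonneg (convex_Ici 1)
      (f' := fun x => Real.log x + 1 / x - 1)
    · intro x hx
      exact ((h_deriv x (lt_of_lt_of_le one_pos (by exact hx))).continuousAt).continuousWithinAt
    · intro x hx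
      rw [interior_Ici] at hx
      exact (h_deriv x (lt_trans one_pos hx)).hasDerivWithinAt
    · intro x hx
      rw [interior_Ici] at hx
      have hx0 : (0:ℝ) < x := lt_trans one_pos hx
      have := Real.log_le_sub_one_of_pos (inv_pos.2 hx0)
      rw [Real.log_inv] at this
      have : 1 - x⁻¹ ≤ Real.log x := by linarith
      rw [one_div]
      linarith
  have := hmono (Set.self_mem_Ici) hr hr
  simpa using this

lemma h_sign_le (r : ℝ) (hr0 : 0 < r) (hr : r ≤ 1) : (r + 1) * Real.log r - 2 * (r - 1) ≤ 0 := by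
  have hmono : MonotoneOn (fun x : ℝ => (x + 1) * Real.log x - 2 * (x - 1)) (Set.Ioc 0 1) := by
    apply monotoneOn_of_hasDerivWithinAt_nonneg (convex_Ioc 0 1)
      (f' := fun x => Real.log x + 1 / x - 1)
    · intro x hx
      exact ((h_deriv x hx.1).continuousAt).continuousWithinAt
    · intro x hx
      have hx' : x ∈ Set.Ioo (0:ℝ) 1 := by
        simpa [interior_Ioc] using hx
      exact (h_deriv x hx'.1).hasDerivWithinAt
    · intro x hx
      have hx' : x ∈ Set.Ioo (0:ℝ) 1 := by simpa [interior_Ioc] using hx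
      have hx0 : (0:ℝ) < x := hx'.1
      have := Real.log_le_sub_one_of_pos (inv_pos.2 hx0)
      rw [Real.log_inv] at this
      rw [one_div]
      linarith
  have := hmono (Set.mem_Ioc.2 ⟨hr0, hr⟩) (Set.mem_Ioc.2 ⟨one_pos, le_refl 1⟩) hr
  simpa using this

noncomputable def gfun (x : ℝ) : ℝ := (2*x+4) * (x * Real.log x - x + 1) - 3*(x-1)^2

lemma g_deriv (r : ℝ) (hr : 0 < r) :
    HasDerivAt gfun (4 * ((r + 1) * Real.log r - 2 * (r - 1))) r := by
  have hml : HasDerivAt (fun x : ℝ => x * Real.log x) (Real.log r + 1) r := by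
    have := (hasDerivAt_id r).mul (Real.hasDerivAt_log hr.ne')
    simp [mul_inv_cancel₀ hr.ne'] at this; exact this
  have h1 : HasDerivAt (fun x : ℝ => x * Real.log x - x + 1) (Real.log r + 1 - 1) r :=
    (hml.sub (hasDerivAt_id r)).add_const 1
  have h2 : HasDerivAt (fun x : ℝ => 2*x+4) 2 r := by
    simpa using ((hasDerivAt_id r).const_mul 2).add_const 4
  have h3 : HasDerivAt (fun x : ℝ => (2*x+4) * (x * Real.log x - x + 1))
      (2 * (r * Real.log r - r + 1) + (2*r+4) * (Real.log r + 1 - 1)) r := h2.mul h1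
  have h4 : HasDerivAt (fun x : ℝ => 3*(x-1)^2) (3*(2*(r-1))) r := by
    have := (((hasDerivAt_id r).sub_const 1).pow 2).const_mul 3
    simpa using this
  have := h3.sub h4
  refine this.congr_deriv ?_
  ring

lemma g_cont : Continuous gfun := by
  unfold gfun
  have : Continuous fun x : ℝ => x * Real.log x := Real.continuous_mul_log
  fun_prop

lemma g_nonneg (r : ℝ) (hr : 0 ≤ r) : 0 ≤ gfun r := by
  rcases le_or_gt 1 r with h1 | h1
  · have hmono : MonotoneOn gfun (Set.Ici 1) := by
      apply monotoneOn_of_hasDerivWithinAt_nonneg (convex_Ici 1)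
        (f' := fun x => 4 * ((x + 1) * Real.log x - 2 * (x - 1)))
        g_cont.continuousOn
      · intro x hx
        rw [interior_Ici] at hx
        exact (g_deriv x (lt_trans one_pos hx)).hasDerivWithinAt
      · intro x hx
        rw [interior_Ici] at hx
        have := h_sign_ge x hx.le
        linarith
    have := hmono Set.self_mem_Ici h1 h1
    have hg1 : gfun 1 = 0 := by simp [gfun]
    linarith
  · have hanti : AntitoneOn gfun (Set.Icc 0 1) := by
      apply antitoneOn_of_hasDerivWithinAt_nonpos (convex_Icc 0 1)
        g_cont.continuousOn
      · intro x hx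
        rw [interior_Icc] at hx
        exact (g_deriv x hx.1).hasDerivWithinAt
      · intro x hx
        rw [interior_Icc] at hx
        have := h_sign_le x hx.1 hx.2.le
        linarith
    have := hanti (Set.mem_Icc.2 ⟨hr, h1.le⟩) (Set.mem_Icc.2 ⟨zero_le_one, le_refl 1⟩) h1.le
    have hg1 : gfun 1 = 0 := by simp [gfun]
    linarith

/-- key one-variable inequality -/
lemma key_r (r : ℝ) (hr : 0 ≤ r) : 3*(r-1)^2 ≤ (2*r+4) * (r * Real.log r - r + 1) := by
  have := g_nonneg r hr
  unfold gfun at this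
  linarith

/-- key two-variable inequality -/
lemma key_ab (a b : ℝ) (ha : 0 ≤ a) (hb : 0 < b) :
    3*(a-b)^2 ≤ (2*a+4*b) * (a * Real.log a - a * Real.log b - a + b) := by
  rcases eq_or_lt_of_le ha with rfl | ha'
  · simp only [zero_mul, sub_zero, zero_sub, neg_add_eq_sub]
    nlinarith
  · have hlog : Real.log (a / b) = Real.log a - Real.log b := Real.log_div ha'.ne' hb.ne'
    have hkey := key_r (a / b) (div_nonneg ha hb.le)
    have hb2 : (0:ℝ) < b^2 := by positivity
    have hmul := mul_le_mul_of_nonneg_left hkey hb2.le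
    have hab : a / b * b = a := div_mul_cancel₀ a hb.ne'
    calc 3*(a-b)^2 = b^2 * (3*((a/b)-1)^2) := by field_simp
      _ ≤ b^2 * ((2*(a/b)+4) * ((a/b) * Real.log (a/b) - (a/b) + 1)) := hmul
      _ = (2*a+4*b) * (a * Real.log a - a * Real.log b - a + b) := by
          rw [hlog]; field_simp




variable {Ω : Type} {m : MeasurableSpace Ω}

lemma step (μ : Measure Ω) [IsProbabilityMeasure μ] {F : MeasurableSpace Ω} (hF : F ≤ m)
    {a b : Ω → ℝ} (ha_nn : ∀ ω, 0 ≤ a ω) (hb_nn : ∀ ω, 0 ≤ b ω)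
    (hb_meas : StronglyMeasurable[F] b) (ha_meas : AEStronglyMeasurable[m] a μ)
    (ha_int : Integrable a μ) (hb_int : Integrable b μ)
    (hcond : μ[a|F] =ᵐ[μ] b)
    (hfa : Integrable (fun ω => a ω * Real.log (a ω)) μ)
    (hfb : Integrable (fun ω => b ω * Real.log (b ω)) μ) :
    0 ≤ (∫ ω, a ω * Real.log (a ω) ∂μ) - ∫ ω, b ω * Real.log (b ω) ∂μ ∧
    ∫ ω, |a ω - b ω| ∂μ ≤ Real.sqrt (2 * ∫ ω, a ω ∂μ) *
      Real.sqrt ((∫ ω, a ω * Real.log (a ω) ∂μ) - ∫ ω, b ω * Real.log (b ω) ∂μ) := by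
  haveI : SigmaFinite (μ.trim hF) := by
    have : IsFiniteMeasure (μ.trim hF) := isFiniteMeasure_trim hF
    infer_instance
  have hb_m : Measurable[F] b := hb_meas.measurable
  have hb_sm : StronglyMeasurable[m] b := hb_meas.mono hF
  have hb_meas' : AEStronglyMeasurable[m] b μ := hb_sm.aestronglyMeasurable
  -- a = 0 a.e. on {b = 0}
  have hb0 : ∀ᵐ ω ∂μ, b ω = 0 → a ω = 0 := by
    set s : Set Ω := b ⁻¹' {0} with hs_def
    have hsF : MeasurableSet[F] s := hb_m (measurableSet_singleton 0)
    have hsm : MeasurableSet[m] s := hF _ hsF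
    have h1 : ∫ ω in s, a ω ∂μ = 0 := by
      rw [← setIntegral_condExp hF ha_int hsF]
      have h2 : ∫ ω in s, (μ[a|F]) ω ∂μ = ∫ ω in s, b ω ∂μ :=
        integral_congr_ae (ae_restrict_of_ae hcond)
      rw [h2]
      exact @setIntegral_eq_zero_of_forall_eq_zero Ω ℝ m _ _ b s μ (fun ω hω => hω)
    have h2 : a =ᵐ[μ.restrict s] 0 :=
      (integral_eq_zero_iff_of_nonneg_ae
        (Filter.Eventually.of_forall fun ω => ha_nn ω) ha_int.restrict).mp h1
    have h3 := (ae_restrict_iff' hsm).mp h2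
    filter_upwards [h3] with ω hω hbω
    exact hω (show ω ∈ s from hbω)
  -- integrability of a * log b
  have hL_m : Measurable[F] fun ω => Real.log (b ω) := Real.measurable_log.comp hb_m
  have hL_sm : StronglyMeasurable[F] fun ω => Real.log (b ω) := hL_m.stronglyMeasurable
  have hLb_int : Integrable (fun ω => b ω * |Real.log (b ω)|) μ := by
    refine hfb.abs.congr (Filter.Eventually.of_forall fun ω => ?_)
    simp only [abs_mul, abs_of_nonneg (hb_nn ω)]
  set C : ℝ := ∫ ω, b ω * |Real.log (b ω)| ∂μ with hC_def
  set φ : ℕ → Ω → ℝ := fun n ω => min |Real.log (b ω)| n with hφ_def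
  have hφ_nn : ∀ n ω, 0 ≤ φ n ω := fun n ω => le_min (abs_nonneg _) n.cast_nonneg
  have hφ_sm : ∀ n, StronglyMeasurable[F] (φ n) := fun n =>
    ((hL_m.abs.min (@measurable_const ℝ Ω _ F _)).stronglyMeasurable)
  have hφ_sm' : ∀ n, AEStronglyMeasurable[m] (φ n) μ := fun n =>
    ((hφ_sm n).mono hF).aestronglyMeasurable
  have hφa_int : ∀ n, Integrable (fun ω => φ n ω * a ω) μ := by
    intro n
    refine ha_int.bdd_mul (hφ_sm' n) (c := n) (Filter.Eventually.of_forall fun ω => ?_)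
    rw [Real.norm_eq_abs, abs_of_nonneg (hφ_nn n ω)]
    exact min_le_right _ _
  have hφb_int : ∀ n, Integrable (fun ω => φ n ω * b ω) μ := by
    intro n
    refine hb_int.bdd_mul (hφ_sm' n) (c := n) (Filter.Eventually.of_forall fun ω => ?_)
    rw [Real.norm_eq_abs, abs_of_nonneg (hφ_nn n ω)]
    exact min_le_right _ _
  have hpull : ∀ n, ∫ ω, φ n ω * a ω ∂μ = ∫ ω, φ n ω * b ω ∂μ := by
    intro n
    have h1 : μ[fun ω => φ n ω * a ω|F] =ᵐ[μ] fun ω => φ n ω * (μ[a|F]) ω :=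
      condExp_mul_of_stronglyMeasurable_left (hφ_sm n) (hφa_int n) ha_int
    have h2 : (fun ω => φ n ω * (μ[a|F]) ω) =ᵐ[μ] fun ω => φ n ω * b ω := by
      filter_upwards [hcond] with ω hω; rw [hω]
    calc ∫ ω, φ n ω * a ω ∂μ = ∫ ω, (μ[fun ω => φ n ω * a ω|F]) ω ∂μ :=
          (integral_condExp hF).symm
      _ = ∫ ω, φ n ω * b ω ∂μ := integral_congr_ae (h1.trans h2)
  have hφa_le : ∀ n, ∫ ω, φ n ω * a ω ∂μ ≤ C := by
    intro n
    rw [hpull n]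
    refine integral_mono (hφb_int n) hLb_int fun ω => ?_
    simp only
    rw [mul_comm (φ n ω)]
    exact mul_le_mul_of_nonneg_left (min_le_left _ _) (hb_nn ω)
  have haL_meas : AEStronglyMeasurable[m] (fun ω => a ω * Real.log (b ω)) μ :=
    ha_meas.mul (hL_sm.mono hF).aestronglyMeasurable
  have haL_int : Integrable (fun ω => a ω * Real.log (b ω)) μ := by
    refine ⟨haL_meas, ?_⟩
    rw [hasFiniteIntegral_iff_norm]
    have hkey : ∫⁻ ω, ENNReal.ofReal ‖a ω * Real.log (b ω)‖ ∂μ ≤ ENNReal.ofReal C := by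
      have heq : ∀ ω, ENNReal.ofReal ‖a ω * Real.log (b ω)‖
          = ⨆ n : ℕ, ENNReal.ofReal (a ω * φ n ω) := by
        intro ω
        apply le_antisymm
        · refine le_iSup_of_le ⌈|Real.log (b ω)|⌉₊ ?_
          apply ENNReal.ofReal_le_ofReal
          rw [Real.norm_eq_abs, abs_mul, abs_of_nonneg (ha_nn ω)]
          refine mul_le_mul_of_nonneg_left ?_ (ha_nn ω)
          exact le_min le_rfl (Nat.le_ceil _)
        · refine iSup_le fun n => ENNReal.ofReal_le_ofReal ?_
          rw [Real.norm_eq_abs, abs_mul, abs_of_nonneg (ha_nn ω)]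
          exact mul_le_mul_of_nonneg_left (min_le_left _ _) (ha_nn ω)
      simp_rw [heq]
      rw [lintegral_iSup' (fun n => ?_) (Filter.Eventually.of_forall fun ω => ?_)]
      · refine iSup_le fun n => ?_
        have hor : ∫⁻ ω, ENNReal.ofReal (a ω * φ n ω) ∂μ
            = ENNReal.ofReal (∫ ω, a ω * φ n ω ∂μ) := by
          rw [ofReal_integral_eq_lintegral_ofReal]
          · exact ((hφa_int n).congr (Filter.Eventually.of_forall fun ω => mul_comm _ _))
          · exact Filter.Eventually.of_forall fun ω => mul_nonneg (ha_nn ω) (hφ_nn n ω)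
        rw [hor]
        apply ENNReal.ofReal_le_ofReal
        calc ∫ ω, a ω * φ n ω ∂μ = ∫ ω, φ n ω * a ω ∂μ := by simp_rw [mul_comm]
          _ ≤ C := hφa_le n
      · exact (ha_meas.aemeasurable.mul
          ((hφ_sm n).mono hF).measurable.aemeasurable).ennreal_ofReal
      · intro i j hij
        apply ENNReal.ofReal_le_ofReal
        exact mul_le_mul_of_nonneg_left (min_le_min le_rfl (Nat.cast_le.2 hij)) (ha_nn ω)
    exact lt_of_le_of_lt hkey ENNReal.ofReal_lt_top
  -- pull-out property for log b
  have hLa_int : Integrable (fun ω => Real.log (b ω) * a ω) μ :=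
    haL_int.congr (Filter.Eventually.of_forall fun ω => (mul_comm _ _))
  have haL_eq : ∫ ω, a ω * Real.log (b ω) ∂μ = ∫ ω, b ω * Real.log (b ω) ∂μ := by
    have h1 : μ[fun ω => Real.log (b ω) * a ω|F] =ᵐ[μ] fun ω => Real.log (b ω) * (μ[a|F]) ω :=
      condExp_mul_of_stronglyMeasurable_left hL_sm hLa_int ha_int
    have h2 : (fun ω => Real.log (b ω) * (μ[a|F]) ω) =ᵐ[μ] fun ω => b ω * Real.log (b ω) := by
      filter_upwards [hcond] with ω hω; rw [hω, mul_comm]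
    calc ∫ ω, a ω * Real.log (b ω) ∂μ = ∫ ω, Real.log (b ω) * a ω ∂μ := by
          simp_rw [mul_comm]
      _ = ∫ ω, (μ[fun ω => Real.log (b ω) * a ω|F]) ω ∂μ := (integral_condExp hF).symm
      _ = ∫ ω, b ω * Real.log (b ω) ∂μ := integral_congr_ae (h1.trans h2)
  -- the integrals of a and b agree
  have hab_eq : ∫ ω, b ω ∂μ = ∫ ω, a ω ∂μ := by
    rw [← integral_condExp hF (f := a) (μ := μ)]
    exact integral_congr_ae hcond.symm
  -- the auxiliary nonnegative function g
  obtain ⟨g, hg_def⟩ : ∃ g' : Ω → ℝ,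
      g' = fun ω => a ω * Real.log (a ω) - a ω * Real.log (b ω) - a ω + b ω := ⟨_, rfl⟩
  have hg_int : Integrable g μ := by
    rw [hg_def]; exact ((hfa.sub haL_int).sub ha_int).add hb_int
  set D : ℝ := (∫ ω, a ω * Real.log (a ω) ∂μ) - ∫ ω, b ω * Real.log (b ω) ∂μ with hD_def
  have hfa_sub : Integrable (fun ω => a ω * Real.log (a ω) - a ω * Real.log (b ω)) μ :=
    hfa.sub haL_int
  have hfa_sub2 : Integrable (fun ω => a ω * Real.log (a ω) - a ω * Real.log (b ω) - a ω) μ :=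
    hfa_sub.sub ha_int
  have hgD : ∫ ω, g ω ∂μ = D := by
    have e1 : ∫ ω, g ω ∂μ
        = (∫ ω, (a ω * Real.log (a ω) - a ω * Real.log (b ω) - a ω) ∂μ) + ∫ ω, b ω ∂μ := by
      simp only [hg_def]
      exact integral_add hfa_sub2 hb_int
    have e2 : ∫ ω, (a ω * Real.log (a ω) - a ω * Real.log (b ω) - a ω) ∂μ
        = (∫ ω, (a ω * Real.log (a ω) - a ω * Real.log (b ω)) ∂μ) - ∫ ω, a ω ∂μ :=
      integral_sub hfa_sub ha_int
    have e3 : ∫ ω, (a ω * Real.log (a ω) - a ω * Real.log (b ω)) ∂μ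
        = (∫ ω, a ω * Real.log (a ω) ∂μ) - ∫ ω, a ω * Real.log (b ω) ∂μ :=
      integral_sub hfa haL_int
    rw [hD_def]
    linarith [e1, e2, e3, haL_eq, hab_eq]
  -- pointwise a.e. inequalities
  have hae : ∀ᵐ ω ∂μ, 0 ≤ g ω ∧ 3*(a ω - b ω)^2 ≤ (2*a ω + 4*b ω) * g ω := by
    filter_upwards [hb0] with ω hω
    rcases eq_or_lt_of_le (hb_nn ω) with hb0' | hb0'
    · have ha0 : a ω = 0 := hω hb0'.symm
      constructor <;> simp [hg_def, ha0, ← hb0']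
    · have hkey := key_ab (a ω) (b ω) (ha_nn ω) hb0'
      have hg_eq : (2*a ω + 4*b ω) * g ω
          = (2*a ω+4*b ω) * (a ω * Real.log (a ω) - a ω * Real.log (b ω) - a ω + b ω) := by
        rw [hg_def]
      have hg_val : g ω = a ω * Real.log (a ω) - a ω * Real.log (b ω) - a ω + b ω := by
        rw [hg_def]
      constructor
      · nlinarith [sq_nonneg (a ω - b ω), ha_nn ω, hb0', hg_val, hkey]
      · rw [hg_eq]; exact hkey
  have hD_nonneg : 0 ≤ D := by
    rw [← hgD]
    exact integral_nonneg_of_ae (hae.mono fun ω h => h.1)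
  refine ⟨hD_nonneg, ?_⟩
  -- Cauchy-Schwarz
  set u : Ω → ℝ := fun ω => Real.sqrt ((2*a ω + 4*b ω)/3) with hu_def
  set v : Ω → ℝ := fun ω => Real.sqrt (g ω) with hv_def
  have hw_am : AEMeasurable (fun ω => (2*a ω + 4*b ω)/3) μ :=
    ((ha_meas.aemeasurable.const_mul 2).add (hb_sm.measurable.aemeasurable.const_mul 4)).div_const 3
  have hu_meas : AEStronglyMeasurable[m] u μ :=
    (Real.continuous_sqrt.measurable.comp_aemeasurable hw_am).aestronglyMeasurable
  have hg_meas : AEStronglyMeasurable[m] g μ := by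
    rw [hg_def]
    exact ((hfa.aestronglyMeasurable.sub haL_meas).sub ha_meas).add hb_meas'
  have hv_meas : AEStronglyMeasurable[m] v μ :=
    Continuous.comp_aestronglyMeasurable Real.continuous_sqrt hg_meas
  have hu_sq : ∀ ω, u ω^2 = (2*a ω + 4*b ω)/3 := fun ω =>
    Real.sq_sqrt (by have := ha_nn ω; have := hb_nn ω; positivity)
  have hv_sq : ∀ᵐ ω ∂μ, v ω^2 = g ω := by
    filter_upwards [hae] with ω h; exact Real.sq_sqrt h.1
  have hu2_int : Integrable (fun ω => u ω^2) μ := by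
    apply Integrable.congr (f := fun ω => (2*a ω + 4*b ω)/3)
    · exact ((ha_int.const_mul 2).add (hb_int.const_mul 4)).div_const 3
    · exact Filter.Eventually.of_forall fun ω => (hu_sq ω).symm
  have hv2_int : Integrable (fun ω => v ω^2) μ := hg_int.congr (hv_sq.mono fun ω h => h.symm)
  have hu_mem : MemLp u 2 μ := (memLp_two_iff_integrable_sq hu_meas).mpr hu2_int
  have hv_mem : MemLp v 2 μ := (memLp_two_iff_integrable_sq hv_meas).mpr hv2_int
  have huv_int : Integrable (fun ω => u ω * v ω) μ := by
    refine Integrable.mono'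
      (((((ha_int.const_mul 2).add (hb_int.const_mul 4)).div_const 3).add hg_int).div_const 2)
      (hu_meas.mul hv_meas) ?_
    filter_upwards [hae] with ω h
    have hA : (0:ℝ) ≤ (2*a ω + 4*b ω)/3 := by
      have := ha_nn ω; have := hb_nn ω; positivity
    have h1 := Real.sq_sqrt hA
    have h2 := Real.sq_sqrt h.1
    have h3 := Real.sqrt_nonneg ((2*a ω + 4*b ω)/3)
    have h4 := Real.sqrt_nonneg (g ω)
    rw [Real.norm_eq_abs, abs_of_nonneg (mul_nonneg h3 h4)]
    simp only [Pi.add_apply]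
    nlinarith [sq_nonneg (Real.sqrt ((2*a ω + 4*b ω)/3) - Real.sqrt (g ω))]
  have hptwise : ∀ᵐ ω ∂μ, |a ω - b ω| ≤ u ω * v ω := by
    filter_upwards [hae] with ω h
    have heq0 : ((2*a ω + 4*b ω) * g ω)/3 = ((2*a ω + 4*b ω)/3) * g ω := by ring
    have h1 : (a ω - b ω)^2 ≤ ((2*a ω + 4*b ω)/3) * g ω := by
      rw [← heq0]; linarith [h.2]
    calc |a ω - b ω| = Real.sqrt ((a ω - b ω)^2) := (Real.sqrt_sq_eq_abs _).symm
      _ ≤ Real.sqrt (((2*a ω + 4*b ω)/3) * g ω) := Real.sqrt_le_sqrt h1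
      _ = u ω * v ω := by
          rw [Real.sqrt_mul (by have := ha_nn ω; have := hb_nn ω; positivity)]
  have habs_int : Integrable (fun ω => |a ω - b ω|) μ := (ha_int.sub hb_int).abs
  have hconj : Real.HolderConjugate 2 2 := Real.HolderConjugate.two_two
  have hCS := integral_mul_le_Lp_mul_Lq_of_nonneg hconj
    (Filter.Eventually.of_forall fun ω => Real.sqrt_nonneg ((2*a ω + 4*b ω)/3))
    (Filter.Eventually.of_forall fun ω => Real.sqrt_nonneg (g ω))
    (by rwa [show ENNReal.ofReal 2 = 2 by norm_num]) (by rwa [show ENNReal.ofReal 2 = 2 by norm_num])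
  simp only [Real.rpow_two] at hCS
  have hu2_val : ∫ ω, u ω^2 ∂μ = 2 * ∫ ω, a ω ∂μ := by
    have h1 : ∫ ω, u ω^2 ∂μ = ∫ ω, (2*a ω + 4*b ω)/3 ∂μ :=
      integral_congr_ae (Filter.Eventually.of_forall fun ω => hu_sq ω)
    rw [h1, integral_div, integral_add (ha_int.const_mul 2) (hb_int.const_mul 4),
      integral_const_mul, integral_const_mul, hab_eq]
    ring
  have hv2_val : ∫ ω, v ω^2 ∂μ = D := by
    rw [integral_congr_ae hv_sq, hgD]
  rw [hu2_val, hv2_val] at hCS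
  calc ∫ ω, |a ω - b ω| ∂μ ≤ ∫ ω, u ω * v ω ∂μ := integral_mono_ae habs_int huv_int hptwise
    _ ≤ (2 * ∫ ω, a ω ∂μ) ^ (1/2 : ℝ) * D ^ (1/2 : ℝ) := hCS
    _ = Real.sqrt (2 * ∫ ω, a ω ∂μ) * Real.sqrt D := by
        rw [← Real.sqrt_eq_rpow, ← Real.sqrt_eq_rpow]

end Aux

/-- For a nonnegative martingale `Z_0, ..., Z_k` with `Z_0` constant,
`Σ_{t=1}^k E|Z_t - Z_{t-1}| ≤ sqrt (2 k E Z_0) * sqrt (E (Z_k log Z_k) - E (Z_0 log Z_0))`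
(natural logarithm, convention `0 log 0 = 0`, which holds since `Real.log 0 = 0`). -/
theorem stmt13 {Ω : Type} {m : MeasurableSpace Ω} (μ : Measure Ω) [IsProbabilityMeasure μ]
    (ℱ : Filtration ℕ m) (k : ℕ) (c : ℝ) (Z : ℕ → Ω → ℝ)
    (hnn : ∀ t ω, 0 ≤ Z t ω)
    (h0 : ∀ ω, Z 0 ω = c)
    (hmart : Martingale Z ℱ μ)
    (hint : ∀ t, Integrable (fun ω => Z t ω * Real.log (Z t ω)) μ) :
    ∑ t ∈ Finset.Icc 1 k, ∫ ω, |Z t ω - Z (t - 1) ω| ∂μ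
      ≤ Real.sqrt (2 * k * ∫ ω, Z 0 ω ∂μ) *
        Real.sqrt ((∫ ω, Z k ω * Real.log (Z k ω) ∂μ)
          - ∫ ω, Z 0 ω * Real.log (Z 0 ω) ∂μ) := by
  have hsf : ∀ i : ℕ, SigmaFinite (μ.trim (ℱ.le i)) := fun i => by
    have : IsFiniteMeasure (μ.trim (ℱ.le i)) := isFiniteMeasure_trim _
    infer_instance
  have hZint : ∀ t, Integrable (Z t) μ := fun t => hmart.integrable t
  have hZsm : ∀ t, AEStronglyMeasurable (Z t) μ := fun t =>
    ((hmart.1 t).mono (ℱ.le t)).aestronglyMeasurable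
  have hconst : ∀ t : ℕ, ∫ ω, Z t ω ∂μ = ∫ ω, Z 0 ω ∂μ := by
    intro t
    haveI := hsf 0
    calc ∫ ω, Z t ω ∂μ = ∫ ω, (μ[Z t|ℱ 0]) ω ∂μ := (integral_condExp (ℱ.le 0)).symm
      _ = ∫ ω, Z 0 ω ∂μ := integral_congr_ae (hmart.2 0 t (Nat.zero_le t))
  obtain ⟨Fi, hFi⟩ : ∃ Fi : ℕ → ℝ,
      ∀ t, Fi t = ∫ ω, Z t ω * Real.log (Z t ω) ∂μ := ⟨_, fun _ => rfl⟩
  have hc0 : (0:ℝ) ≤ ∫ ω, Z 0 ω ∂μ := integral_nonneg fun ω => hnn 0 ω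
  have hstep : ∀ t : ℕ, 1 ≤ t → 0 ≤ Fi t - Fi (t-1) ∧
      ∫ ω, |Z t ω - Z (t-1) ω| ∂μ ≤ Real.sqrt (2 * ∫ ω, Z 0 ω ∂μ) *
        Real.sqrt (Fi t - Fi (t-1)) := by
    intro t ht
    haveI := hsf (t-1)
    have h := step μ (ℱ.le (t-1)) (hnn t) (hnn (t-1)) (hmart.1 (t-1)) (hZsm t)
      (hZint t) (hZint (t-1)) (hmart.2 (t-1) t (Nat.sub_le t 1)) (hint t) (hint (t-1))
    rw [hconst t] at h
    rw [hFi t, hFi (t-1)]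
    exact h
  have hd_nn : ∀ t ∈ Finset.Icc 1 k, 0 ≤ Fi t - Fi (t-1) := fun t ht =>
    (hstep t (Finset.mem_Icc.mp ht).1).1
  have hsum1 : ∑ t ∈ Finset.Icc 1 k, ∫ ω, |Z t ω - Z (t - 1) ω| ∂μ
      ≤ Real.sqrt (2 * ∫ ω, Z 0 ω ∂μ) * ∑ t ∈ Finset.Icc 1 k, Real.sqrt (Fi t - Fi (t-1)) := by
    rw [Finset.mul_sum]
    exact Finset.sum_le_sum fun t ht => (hstep t (Finset.mem_Icc.mp ht).1).2
  have htel : ∑ t ∈ Finset.Icc 1 k, (Fi t - Fi (t-1)) = Fi k - Fi 0 := by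
    have h1 : Finset.Icc 1 k = Finset.Ico 1 (k+1) := by
      rw [Finset.Ico_add_one_right_eq_Icc]
    rw [h1, Finset.sum_Ico_eq_sum_range]
    simp only [Nat.add_sub_cancel]
    have h2 : ∀ i, Fi (1 + i) - Fi (1 + i - 1) = Fi (i+1) - Fi i := by
      intro i
      rw [add_comm 1 i, Nat.add_sub_cancel]
    simp_rw [h2]
    exact Finset.sum_range_sub Fi k
  have hD_nn : 0 ≤ Fi k - Fi 0 := by
    rw [← htel]
    exact Finset.sum_nonneg hd_nn
  have hcs : ∑ t ∈ Finset.Icc 1 k, Real.sqrt (Fi t - Fi (t-1))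
      ≤ Real.sqrt (k * (Fi k - Fi 0)) := by
    have h2 := sq_sum_le_card_mul_sum_sq
      (s := Finset.Icc 1 k) (f := fun t => Real.sqrt (Fi t - Fi (t-1)))
    have hcard : (Finset.Icc 1 k).card = k := by
      rw [Nat.card_Icc]; omega
    have h3 : ∑ t ∈ Finset.Icc 1 k, Real.sqrt (Fi t - Fi (t-1)) ^ 2
        = Fi k - Fi 0 := by
      rw [← htel]
      exact Finset.sum_congr rfl fun t ht => Real.sq_sqrt (hd_nn t ht)
    rw [hcard, h3] at h2
    have h4 : 0 ≤ ∑ t ∈ Finset.Icc 1 k, Real.sqrt (Fi t - Fi (t-1)) :=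
      Finset.sum_nonneg fun t _ => Real.sqrt_nonneg _
    rw [show Real.sqrt (k * (Fi k - Fi 0)) = Real.sqrt ((k:ℝ) * (Fi k - Fi 0)) from rfl]
    rw [← Real.sqrt_sq h4]
    exact Real.sqrt_le_sqrt h2
  calc ∑ t ∈ Finset.Icc 1 k, ∫ ω, |Z t ω - Z (t - 1) ω| ∂μ
      ≤ Real.sqrt (2 * ∫ ω, Z 0 ω ∂μ) * ∑ t ∈ Finset.Icc 1 k, Real.sqrt (Fi t - Fi (t-1)) :=
        hsum1
    _ ≤ Real.sqrt (2 * ∫ ω, Z 0 ω ∂μ) * Real.sqrt (k * (Fi k - Fi 0)) := by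
        exact mul_le_mul_of_nonneg_left hcs (Real.sqrt_nonneg _)
    _ = Real.sqrt (2 * k * ∫ ω, Z 0 ω ∂μ) * Real.sqrt (Fi k - Fi 0) := by
        rw [← Real.sqrt_mul (by positivity), ← Real.sqrt_mul (by positivity)]
        ring_nf
    _ = Real.sqrt (2 * k * ∫ ω, Z 0 ω ∂μ) *
        Real.sqrt ((∫ ω, Z k ω * Real.log (Z k ω) ∂μ)
          - ∫ ω, Z 0 ω * Real.log (Z 0 ω) ∂μ) := by
        rw [hFi k, hFi 0]
end

section
/- Let V(k, p) denote the supremum of E(Σ_{t=1}^k ||p_t - p_{t-1}||_1) over all k-step martingales of probability vectors on X starting at p_0 = p. Then for any p ∈ Δ(X_1), q ∈ Δ(X_2), and positive integers k_1, k_2: V(k_1, p) + V(k_2, q) ≤ V(k_1 + k_2, p ⊗ q), where p ⊗ q is the product distribution on X_1 × X_2. -/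
open MeasureTheory Real

/-- `V k X p` is the supremum of the expected total `ℓ₁` variation
`E (Σ_{t=1}^k ‖p_t - p_{t-1}‖₁)` over all `k`-step martingales of probability vectors
on the finite set `X` starting at the constant `p`. -/
noncomputable def V (k : ℕ) (X : Type) [Fintype X] (p : X → ℝ) : ℝ :=
  sSup { v | ∃ (Ω : Type) (m : MeasurableSpace Ω) (μ : Measure Ω)
    (_ : IsProbabilityMeasure μ) (ℱ : Filtration ℕ m) (f : ℕ → Ω → X → ℝ),
    (∀ t ω x, 0 ≤ f t ω x) ∧ (∀ t ω, ∑ x, f t ω x = 1) ∧ (∀ ω, f 0 ω = p) ∧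
    (∀ x, Martingale (fun t ω => f t ω x) ℱ μ) ∧
    v = ∑ t ∈ Finset.Icc 1 k, ∫ ω, ∑ x, |f t ω x - f (t - 1) ω x| ∂μ }

/-- `Vd k d` is the supremum of `V k X p` over all finite sets `X` with `d` elements
and all probability vectors `p` on `X`. -/
noncomputable def Vd (k d : ℕ) : ℝ :=
  sSup { v | ∃ (X : Type) (_ : Fintype X), Fintype.card X = d ∧
    ∃ p : X → ℝ, (∀ x, 0 ≤ p x) ∧ (∑ x, p x = 1) ∧ v = V k X p }

/-- The set of achievable expected total variations. -/
def MSet (k : ℕ) (X : Type) [Fintype X] (p : X → ℝ) : Set ℝ :=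
  { v | ∃ (Ω : Type) (m : MeasurableSpace Ω) (μ : Measure Ω)
    (_ : IsProbabilityMeasure μ) (ℱ : Filtration ℕ m) (f : ℕ → Ω → X → ℝ),
    (∀ t ω x, 0 ≤ f t ω x) ∧ (∀ t ω, ∑ x, f t ω x = 1) ∧ (∀ ω, f 0 ω = p) ∧
    (∀ x, Martingale (fun t ω => f t ω x) ℱ μ) ∧
    v = ∑ t ∈ Finset.Icc 1 k, ∫ ω, ∑ x, |f t ω x - f (t - 1) ω x| ∂μ }

lemma zero_mem_MSet (k : ℕ) (X : Type) [Fintype X] (p : X → ℝ)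
    (hpnn : ∀ x, 0 ≤ p x) (hpsum : ∑ x, p x = 1) : (0 : ℝ) ∈ MSet k X p :=
  ⟨Unit, ⊤, Measure.dirac (), inferInstance,
    ⟨fun _ => ⊥, monotone_const, fun _ => bot_le⟩, fun _ _ => p,
    fun _ _ x => hpnn x, fun _ _ => hpsum, fun _ => rfl,
    fun x => martingale_const _ _ _, by simp⟩

lemma MSet_bddAbove (k : ℕ) (X : Type) [Fintype X] (p : X → ℝ) :
    BddAbove (MSet k X p) := by
  refine ⟨2 * k, ?_⟩
  rintro v ⟨Ω, m, μ, hμ, ℱ, f, hf0, hf1, hfp, hfM, rfl⟩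
  haveI := hμ
  calc ∑ t ∈ Finset.Icc 1 k, ∫ ω, ∑ x, |f t ω x - f (t - 1) ω x| ∂μ
      ≤ ∑ _t ∈ Finset.Icc 1 k, (2 : ℝ) := by
        refine Finset.sum_le_sum fun t _ => ?_
        have hb : ∀ ω, ∑ x, |f t ω x - f (t - 1) ω x| ≤ (2 : ℝ) := by
          intro ω
          calc ∑ x, |f t ω x - f (t - 1) ω x|
              ≤ ∑ x, (f t ω x + f (t - 1) ω x) := by
                refine Finset.sum_le_sum fun x _ => ?_
                calc |f t ω x - f (t - 1) ω x| ≤ |f t ω x| + |f (t - 1) ω x| := abs_sub _ _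
                  _ = f t ω x + f (t - 1) ω x := by
                      rw [abs_of_nonneg (hf0 t ω x), abs_of_nonneg (hf0 (t - 1) ω x)]
            _ = 2 := by rw [Finset.sum_add_distrib, hf1, hf1]; norm_num
        calc ∫ ω, ∑ x, |f t ω x - f (t - 1) ω x| ∂μ
            ≤ ∫ _ω, (2 : ℝ) ∂μ := by
              refine integral_mono_of_nonneg (ae_of_all _ fun ω => ?_) (integrable_const 2)
                (ae_of_all _ hb)
              exact Finset.sum_nonneg fun x _ => abs_nonneg _
          _ = 2 := by simp
    _ = 2 * k := by simp [Finset.sum_const, Nat.card_Icc, mul_comm]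

lemma ae_eq_comp_fst {Ω₁ Ω₂ : Type} [m0₁ : MeasurableSpace Ω₁] [m0₂ : MeasurableSpace Ω₂]
    (μ₁ : Measure Ω₁) (μ₂ : Measure Ω₂) [IsProbabilityMeasure μ₁] [IsProbabilityMeasure μ₂]
    {φ φ' : Ω₁ → ℝ} (h : φ =ᵐ[μ₁] φ') :
    (fun ω : Ω₁ × Ω₂ => φ ω.1) =ᵐ[μ₁.prod μ₂] fun ω => φ' ω.1 := by
  refine MeasureTheory.ae_eq_comp (measurable_fst (α := Ω₁) (β := Ω₂)).aemeasurable ?_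
  rwa [Measure.map_fst_prod, measure_univ, one_smul]

lemma ae_eq_comp_snd {Ω₁ Ω₂ : Type} [m0₁ : MeasurableSpace Ω₁] [m0₂ : MeasurableSpace Ω₂]
    (μ₁ : Measure Ω₁) (μ₂ : Measure Ω₂) [IsProbabilityMeasure μ₁] [IsProbabilityMeasure μ₂]
    {φ φ' : Ω₂ → ℝ} (h : φ =ᵐ[μ₂] φ') :
    (fun ω : Ω₁ × Ω₂ => φ ω.2) =ᵐ[μ₁.prod μ₂] fun ω => φ' ω.2 := by
  refine MeasureTheory.ae_eq_comp (measurable_snd (α := Ω₁) (β := Ω₂)).aemeasurable ?_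
  rwa [Measure.map_snd_prod, measure_univ, one_smul]

/-- The filtration on a product space: first filtration up to time `k₁`, then the second. -/
def prodFilt {Ω₁ Ω₂ : Type} [m0₁ : MeasurableSpace Ω₁] [m0₂ : MeasurableSpace Ω₂]
    (ℱ₁ : Filtration ℕ m0₁) (ℱ₂ : Filtration ℕ m0₂) (k₁ : ℕ) :
    Filtration ℕ (Prod.instMeasurableSpace : MeasurableSpace (Ω₁ × Ω₂)) where
  seq t := (ℱ₁ (min t k₁)).comap Prod.fst ⊔
    (if t ≤ k₁ then (⊥ : MeasurableSpace Ω₂) else ℱ₂ (t - k₁)).comap Prod.snd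
  mono' := by
    intro s t hst
    refine sup_le_sup (MeasurableSpace.comap_mono (ℱ₁.mono (min_le_min hst le_rfl)))
      (MeasurableSpace.comap_mono ?_)
    by_cases hs : s ≤ k₁
    · rw [if_pos hs]; exact bot_le
    · rw [if_neg hs, if_neg (fun h => hs (le_trans hst h))]
      exact ℱ₂.mono (Nat.sub_le_sub_right hst k₁)
  le' := by
    intro t
    refine sup_le ((MeasurableSpace.comap_mono (ℱ₁.le _)).trans measurable_fst.comap_le)
      ((MeasurableSpace.comap_mono ?_).trans measurable_snd.comap_le)
    by_cases h : t ≤ k₁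
    · rw [if_pos h]; exact bot_le
    · rw [if_neg h]; exact ℱ₂.le _

lemma prodFilt_apply {Ω₁ Ω₂ : Type} [m0₁ : MeasurableSpace Ω₁] [m0₂ : MeasurableSpace Ω₂]
    (ℱ₁ : Filtration ℕ m0₁) (ℱ₂ : Filtration ℕ m0₂) (k₁ t : ℕ) :
    prodFilt ℱ₁ ℱ₂ k₁ t = (ℱ₁ (min t k₁)).comap Prod.fst ⊔
      (if t ≤ k₁ then (⊥ : MeasurableSpace Ω₂) else ℱ₂ (t - k₁)).comap Prod.snd := rfl

lemma key_condexp_prod {Ω₁ Ω₂ : Type} {m₁ : MeasurableSpace Ω₁} {m₂ : MeasurableSpace Ω₂}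
    [m0₁ : MeasurableSpace Ω₁] [m0₂ : MeasurableSpace Ω₂]
    (μ₁ : Measure Ω₁) (μ₂ : Measure Ω₂) [IsProbabilityMeasure μ₁] [IsProbabilityMeasure μ₂]
    (hm₁ : m₁ ≤ m0₁) (hm₂ : m₂ ≤ m0₂)
    {F : Ω₁ → ℝ} {G : Ω₂ → ℝ} (hF : Integrable F μ₁) (hG : Integrable G μ₂) :
    (μ₁.prod μ₂)[(fun ω => F ω.1 * G ω.2) | m₁.comap Prod.fst ⊔ m₂.comap Prod.snd]
      =ᵐ[μ₁.prod μ₂] fun ω => (μ₁[F|m₁]) ω.1 * (μ₂[G|m₂]) ω.2 := by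
  have hm : m₁.comap Prod.fst ⊔ m₂.comap Prod.snd ≤
      (Prod.instMeasurableSpace : MeasurableSpace (Ω₁ × Ω₂)) :=
    sup_le ((MeasurableSpace.comap_mono hm₁).trans measurable_fst.comap_le)
      ((MeasurableSpace.comap_mono hm₂).trans measurable_snd.comap_le)
  have hFG : Integrable (fun ω : Ω₁ × Ω₂ => F ω.1 * G ω.2) (μ₁.prod μ₂) := hF.mul_prod hG
  have hc : Integrable (fun ω : Ω₁ × Ω₂ => (μ₁[F|m₁]) ω.1 * (μ₂[G|m₂]) ω.2) (μ₁.prod μ₂) :=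
    integrable_condExp.mul_prod integrable_condExp
  have htot : ∫ ω, (μ₁[F|m₁]) ω.1 * (μ₂[G|m₂]) ω.2 ∂(μ₁.prod μ₂)
      = ∫ ω, F ω.1 * G ω.2 ∂(μ₁.prod μ₂) := by
    rw [integral_prod_mul, integral_prod_mul, integral_condExp hm₁, integral_condExp hm₂]
  have hgen : m₁.comap (Prod.fst : Ω₁ × Ω₂ → Ω₁) ⊔ m₂.comap Prod.snd
      = MeasurableSpace.generateFrom
      (Set.image2 (· ×ˢ ·) { s : Set Ω₁ | MeasurableSet[m₁] s } { t : Set Ω₂ | MeasurableSet[m₂] t }) :=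
    (@generateFrom_prod Ω₁ Ω₂ m₁ m₂).symm
  have key : ∀ ⦃S : Set (Ω₁ × Ω₂)⦄,
      MeasurableSet[m₁.comap Prod.fst ⊔ m₂.comap Prod.snd] S →
      ∫ ω in S, (μ₁[F|m₁]) ω.1 * (μ₂[G|m₂]) ω.2 ∂(μ₁.prod μ₂)
        = ∫ ω in S, F ω.1 * G ω.2 ∂(μ₁.prod μ₂) := by
    refine @MeasurableSpace.induction_on_inter (Ω₁ × Ω₂)
      (m₁.comap Prod.fst ⊔ m₂.comap Prod.snd) (fun S _ => _ = _) _ hgen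
      (@isPiSystem_prod Ω₁ Ω₂ m₁ m₂) ?_ ?_ ?_ ?_
    · simp
    · rintro S ⟨A, hA, B, hB, rfl⟩
      rw [setIntegral_prod_mul, setIntegral_prod_mul,
        setIntegral_condExp hm₁ hF hA, setIntegral_condExp hm₂ hG hB]
    · intro S hSm hS
      have hS0 : MeasurableSet[Prod.instMeasurableSpace] S := hm _ hSm
      rw [setIntegral_compl hS0 hc, setIntegral_compl hS0 hFG, hS, htot]
    · intro g hdisj hgm hgc
      have hg0 : ∀ i, MeasurableSet[Prod.instMeasurableSpace] (g i) := fun i => hm _ (hgm i)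
      rw [integral_iUnion hg0 hdisj hc.integrableOn,
        integral_iUnion hg0 hdisj hFG.integrableOn]
      exact tsum_congr hgc
  have hmeas : AEStronglyMeasurable[m₁.comap Prod.fst ⊔ m₂.comap Prod.snd]
      (fun ω : Ω₁ × Ω₂ => (μ₁[F|m₁]) ω.1 * (μ₂[G|m₂]) ω.2) (μ₁.prod μ₂) := by
    have h1 : StronglyMeasurable[m₁.comap (Prod.fst : Ω₁ × Ω₂ → Ω₁) ⊔ m₂.comap Prod.snd]
        (fun ω : Ω₁ × Ω₂ => (μ₁[F|m₁]) ω.1) :=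
      (stronglyMeasurable_condExp.comp_measurable
        (measurable_iff_comap_le.mpr le_rfl : @Measurable _ _ (m₁.comap Prod.fst) m₁ Prod.fst)).mono
        le_sup_left
    have h2 : StronglyMeasurable[m₁.comap (Prod.fst : Ω₁ × Ω₂ → Ω₁) ⊔ m₂.comap Prod.snd]
        (fun ω : Ω₁ × Ω₂ => (μ₂[G|m₂]) ω.2) :=
      (stronglyMeasurable_condExp.comp_measurable
        (measurable_iff_comap_le.mpr le_rfl : @Measurable _ _ (m₂.comap Prod.snd) m₂ Prod.snd)).mono
        le_sup_right
    exact (h1.mul h2).aestronglyMeasurable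
  exact (ae_eq_condExp_of_forall_setIntegral_eq hm hFG
    (fun s _ _ => hc.integrableOn) (fun s hs _ => key hs) hmeas).symm

lemma add_mem_MSet {X₁ X₂ : Type} [Fintype X₁] [Fintype X₂]
    {p : X₁ → ℝ} {q : X₂ → ℝ} {k₁ k₂ : ℕ} {a b : ℝ}
    (ha : a ∈ MSet k₁ X₁ p) (hb : b ∈ MSet k₂ X₂ q) :
    a + b ∈ MSet (k₁ + k₂) (X₁ × X₂) (fun z => p z.1 * q z.2) := by
  classical
  obtain ⟨Ω₁, m0₁, μ₁, hμ₁, ℱ₁, f, hf0, hf1, hfp, hfM, rfl⟩ := ha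
  obtain ⟨Ω₂, m0₂, μ₂, hμ₂, ℱ₂, g, hg0, hg1, hgq, hgM, rfl⟩ := hb
  haveI := hμ₁; haveI := hμ₂
  -- basic facts about f and g
  have hfbd : ∀ t ω x, f t ω x ≤ 1 := fun t ω x => by
    calc f t ω x ≤ ∑ x', f t ω x' :=
          Finset.single_le_sum (fun i _ => hf0 t ω i) (Finset.mem_univ x)
      _ = 1 := hf1 t ω
  have hgbd : ∀ t ω y, g t ω y ≤ 1 := fun t ω y => by
    calc g t ω y ≤ ∑ y', g t ω y' :=
          Finset.single_le_sum (fun i _ => hg0 t ω i) (Finset.mem_univ y)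
      _ = 1 := hg1 t ω
  have hfmeas : ∀ t x, StronglyMeasurable (fun ω => f t ω x) := fun t x =>
    ((hfM x).stronglyAdapted t).mono (ℱ₁.le t)
  have hgmeas : ∀ t y, StronglyMeasurable (fun ω => g t ω y) := fun t y =>
    ((hgM y).stronglyAdapted t).mono (ℱ₂.le t)
  have hfint : ∀ t x, Integrable (fun ω => f t ω x) μ₁ := fun t x =>
    Integrable.mono' (integrable_const 1) (hfmeas t x).aestronglyMeasurable
      (ae_of_all _ fun ω => by rw [Real.norm_eq_abs, abs_of_nonneg (hf0 t ω x)]; exact hfbd t ω x)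
  have hgint : ∀ t y, Integrable (fun ω => g t ω y) μ₂ := fun t y =>
    Integrable.mono' (integrable_const 1) (hgmeas t y).aestronglyMeasurable
      (ae_of_all _ fun ω => by rw [Real.norm_eq_abs, abs_of_nonneg (hg0 t ω y)]; exact hgbd t ω y)
  refine ⟨Ω₁ × Ω₂, inferInstance, μ₁.prod μ₂, inferInstance, prodFilt ℱ₁ ℱ₂ k₁,
    fun t ω z => f (min t k₁) ω.1 z.1 * g (t - k₁) ω.2 z.2,
    fun t ω z => mul_nonneg (hf0 _ _ _) (hg0 _ _ _), ?_, ?_, ?_, ?_⟩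
  · -- sums to one
    intro t ω
    rw [Fintype.sum_prod_type]
    simp_rw [← Finset.mul_sum]
    rw [hg1]
    simp_rw [mul_one]
    exact hf1 _ _
  · -- initial value
    intro ω
    funext z
    simp [min_eq_left (Nat.zero_le k₁), Nat.zero_sub, hfp, hgq]
  · -- martingale
    intro z
    refine ⟨fun t => ?_, fun i j hij => ?_⟩
    · -- adapted
      rw [prodFilt_apply]
      have h1 : StronglyMeasurable[(ℱ₁ (min t k₁)).comap Prod.fst]
          (fun ω : Ω₁ × Ω₂ => f (min t k₁) ω.1 z.1) :=
        ((hfM z.1).stronglyAdapted (min t k₁)).comp_measurable (measurable_iff_comap_le.mpr le_rfl)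
      have h2 : StronglyMeasurable[(if t ≤ k₁ then (⊥ : MeasurableSpace Ω₂)
          else ℱ₂ (t - k₁)).comap Prod.snd] (fun ω : Ω₁ × Ω₂ => g (t - k₁) ω.2 z.2) := by
        by_cases h : t ≤ k₁
        · have he : (fun ω : Ω₁ × Ω₂ => g (t - k₁) ω.2 z.2) = fun _ => q z.2 := by
            funext ω; rw [Nat.sub_eq_zero_of_le h, hgq]
          rw [he]
          exact stronglyMeasurable_const
        · rw [if_neg h]
          exact ((hgM z.2).stronglyAdapted (t - k₁)).comp_measurable (measurable_iff_comap_le.mpr le_rfl)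
      exact (h1.mono le_sup_left).mul (h2.mono le_sup_right)
    · -- conditional expectation
      rw [prodFilt_apply]
      have hm₂ : (if i ≤ k₁ then (⊥ : MeasurableSpace Ω₂) else ℱ₂ (i - k₁)) ≤ m0₂ := by
        by_cases h : i ≤ k₁
        · rw [if_pos h]; exact bot_le
        · rw [if_neg h]; exact ℱ₂.le _
      refine (key_condexp_prod μ₁ μ₂ (ℱ₁.le _) hm₂ (hfint _ z.1) (hgint _ z.2)).trans ?_
      have e₁ : μ₁[(fun ω => f (min j k₁) ω z.1)|ℱ₁ (min i k₁)]
          =ᵐ[μ₁] fun ω => f (min i k₁) ω z.1 :=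
        (hfM z.1).condExp_ae_eq (min_le_min hij le_rfl)
      have e₂ : μ₂[(fun ω => g (j - k₁) ω z.2)|if i ≤ k₁ then (⊥ : MeasurableSpace Ω₂)
          else ℱ₂ (i - k₁)] =ᵐ[μ₂] fun ω => g (i - k₁) ω z.2 := by
        by_cases h : i ≤ k₁
        · rw [if_pos h, condExp_bot]
          have hval : ∫ ω, g (j - k₁) ω z.2 ∂μ₂ = q z.2 := by
            calc ∫ ω, g (j - k₁) ω z.2 ∂μ₂
                = ∫ ω, (μ₂[(fun ω => g (j - k₁) ω z.2)|ℱ₂ 0]) ω ∂μ₂ :=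
                  (integral_condExp (ℱ₂.le 0)).symm
              _ = ∫ ω, g 0 ω z.2 ∂μ₂ :=
                  integral_congr_ae ((hgM z.2).condExp_ae_eq (Nat.zero_le _))
              _ = q z.2 := by simp [hgq]
          have hval' : ∀ ω : Ω₂, g (i - k₁) ω z.2 = q z.2 := fun ω => by
            rw [Nat.sub_eq_zero_of_le h, hgq]
          rw [hval]
          exact ae_of_all _ fun ω => (hval' ω).symm
        · rw [if_neg h]
          exact (hgM z.2).condExp_ae_eq (Nat.sub_le_sub_right hij k₁)
      exact (ae_eq_comp_fst μ₁ μ₂ e₁).mul (ae_eq_comp_snd μ₁ μ₂ e₂)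
  · -- the value
    have hsum1 : ∀ t (ω : Ω₁ × Ω₂),
        ∑ z : X₁ × X₂, f (min t k₁) ω.1 z.1 * g (t - k₁) ω.2 z.2 = 1 := by
      intro t ω
      rw [Fintype.sum_prod_type]
      simp_rw [← Finset.mul_sum]
      rw [hg1]
      simp_rw [mul_one]
      exact hf1 _ _
    have hhm : ∀ s t : ℕ, Measurable (fun ω : Ω₁ × Ω₂ =>
        ∑ z : X₁ × X₂, |f (min t k₁) ω.1 z.1 * g (t - k₁) ω.2 z.2
          - f (min s k₁) ω.1 z.1 * g (s - k₁) ω.2 z.2|) := by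
      intro s t
      refine Finset.measurable_sum _ fun z _ => ?_
      exact ((((hfmeas _ z.1).measurable.comp measurable_fst).mul
        ((hgmeas _ z.2).measurable.comp measurable_snd)).sub
        (((hfmeas _ z.1).measurable.comp measurable_fst).mul
        ((hgmeas _ z.2).measurable.comp measurable_snd))).abs
    have hhint : ∀ s t : ℕ, Integrable (fun ω : Ω₁ × Ω₂ =>
        ∑ z : X₁ × X₂, |f (min t k₁) ω.1 z.1 * g (t - k₁) ω.2 z.2
          - f (min s k₁) ω.1 z.1 * g (s - k₁) ω.2 z.2|) (μ₁.prod μ₂) := by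
      intro s t
      refine Integrable.mono' (integrable_const 2) (hhm s t).aestronglyMeasurable
        (ae_of_all _ fun ω => ?_)
      rw [Real.norm_eq_abs, abs_of_nonneg (Finset.sum_nonneg fun z _ => abs_nonneg _)]
      calc ∑ z : X₁ × X₂, |f (min t k₁) ω.1 z.1 * g (t - k₁) ω.2 z.2
              - f (min s k₁) ω.1 z.1 * g (s - k₁) ω.2 z.2|
          ≤ ∑ z : X₁ × X₂, (f (min t k₁) ω.1 z.1 * g (t - k₁) ω.2 z.2
              + f (min s k₁) ω.1 z.1 * g (s - k₁) ω.2 z.2) := by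
            refine Finset.sum_le_sum fun z _ => (abs_sub _ _).trans (le_of_eq ?_)
            rw [abs_of_nonneg (mul_nonneg (hf0 _ _ _) (hg0 _ _ _)),
              abs_of_nonneg (mul_nonneg (hf0 _ _ _) (hg0 _ _ _))]
        _ = 2 := by rw [Finset.sum_add_distrib, hsum1, hsum1]; norm_num
    have key1 : ∀ t, 0 < t → t ≤ k₁ →
        ∫ ω : Ω₁ × Ω₂, ∑ z : X₁ × X₂, |f (min t k₁) ω.1 z.1 * g (t - k₁) ω.2 z.2
          - f (min (t - 1) k₁) ω.1 z.1 * g (t - 1 - k₁) ω.2 z.2| ∂(μ₁.prod μ₂)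
        = ∫ ω, ∑ x, |f t ω x - f (t - 1) ω x| ∂μ₁ := by
      intro t ht0 htk
      rw [MeasureTheory.integral_prod _ (hhint (t - 1) t)]
      have hpt : ∀ (ω₁ : Ω₁) (ω₂ : Ω₂), ∑ z : X₁ × X₂,
          |f (min t k₁) ω₁ z.1 * g (t - k₁) ω₂ z.2
            - f (min (t - 1) k₁) ω₁ z.1 * g (t - 1 - k₁) ω₂ z.2|
          = ∑ x, |f t ω₁ x - f (t - 1) ω₁ x| := by
        intro ω₁ ω₂
        rw [min_eq_left htk, min_eq_left (le_trans (Nat.sub_le t 1) htk),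
          Nat.sub_eq_zero_of_le htk, Nat.sub_eq_zero_of_le (le_trans (Nat.sub_le t 1) htk)]
        rw [Fintype.sum_prod_type]
        refine Finset.sum_congr rfl fun x _ => ?_
        calc ∑ y, |f t ω₁ x * g 0 ω₂ y - f (t - 1) ω₁ x * g 0 ω₂ y|
            = ∑ y, |f t ω₁ x - f (t - 1) ω₁ x| * g 0 ω₂ y := by
              refine Finset.sum_congr rfl fun y _ => ?_
              rw [← sub_mul, abs_mul, abs_of_nonneg (hg0 0 ω₂ y)]
          _ = |f t ω₁ x - f (t - 1) ω₁ x| := by rw [← Finset.mul_sum, hg1, mul_one]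
      simp only [hpt]
      simp [integral_const, measure_univ]
    have key2 : ∀ u, 0 < u → u ≤ k₂ →
        ∫ ω : Ω₁ × Ω₂, ∑ z : X₁ × X₂, |f (min (k₁ + u) k₁) ω.1 z.1 * g (k₁ + u - k₁) ω.2 z.2
          - f (min (k₁ + u - 1) k₁) ω.1 z.1 * g (k₁ + u - 1 - k₁) ω.2 z.2| ∂(μ₁.prod μ₂)
        = ∫ ω, ∑ y, |g u ω y - g (u - 1) ω y| ∂μ₂ := by
      intro u hu0 huk
      rw [MeasureTheory.integral_prod _ (hhint (k₁ + u - 1) (k₁ + u))]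
      have e1 : min (k₁ + u) k₁ = k₁ := min_eq_right (Nat.le_add_right _ _)
      have e2 : min (k₁ + u - 1) k₁ = k₁ := min_eq_right (by omega)
      have e3 : k₁ + u - k₁ = u := by omega
      have e4 : k₁ + u - 1 - k₁ = u - 1 := by omega
      have hpt : ∀ (ω₁ : Ω₁) (ω₂ : Ω₂), ∑ z : X₁ × X₂,
          |f (min (k₁ + u) k₁) ω₁ z.1 * g (k₁ + u - k₁) ω₂ z.2
            - f (min (k₁ + u - 1) k₁) ω₁ z.1 * g (k₁ + u - 1 - k₁) ω₂ z.2|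
          = ∑ y, |g u ω₂ y - g (u - 1) ω₂ y| := by
        intro ω₁ ω₂
        rw [e1, e2, e3, e4, Fintype.sum_prod_type]
        calc ∑ x, ∑ y, |f k₁ ω₁ x * g u ω₂ y - f k₁ ω₁ x * g (u - 1) ω₂ y|
            = ∑ x, f k₁ ω₁ x * ∑ y, |g u ω₂ y - g (u - 1) ω₂ y| := by
              refine Finset.sum_congr rfl fun x _ => ?_
              rw [Finset.mul_sum]
              refine Finset.sum_congr rfl fun y _ => ?_
              rw [← mul_sub, abs_mul, abs_of_nonneg (hf0 k₁ ω₁ x)]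
          _ = ∑ y, |g u ω₂ y - g (u - 1) ω₂ y| := by rw [← Finset.sum_mul, hf1, one_mul]
      simp only [hpt]
      simp [integral_const, measure_univ]
    have hIcc : ∀ m : ℕ, Finset.Icc 1 m = Finset.Ioc 0 m := fun m => by
      ext a; simp only [Finset.mem_Icc, Finset.mem_Ioc]; omega
    rw [hIcc, hIcc, hIcc]
    have hsplit : Finset.Ioc 0 (k₁ + k₂) = Finset.Ioc 0 k₁ ∪ Finset.Ioc k₁ (k₁ + k₂) :=
      (Finset.Ioc_union_Ioc_eq_Ioc (Nat.zero_le _) le_self_add).symm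
    have hdisj : Disjoint (Finset.Ioc 0 k₁) (Finset.Ioc k₁ (k₁ + k₂)) := by
      refine Finset.disjoint_left.mpr fun t ht1 ht2 => ?_
      simp only [Finset.mem_Ioc] at ht1 ht2; omega
    rw [hsplit, Finset.sum_union hdisj]
    congr 1
    · refine Finset.sum_congr rfl fun t ht => ?_
      simp only [Finset.mem_Ioc] at ht
      exact (key1 t ht.1 ht.2).symm
    · have hmap : Finset.Ioc k₁ (k₁ + k₂) = (Finset.Ioc 0 k₂).map (addLeftEmbedding k₁) := by
        rw [Finset.map_add_left_Ioc]; simp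
      rw [hmap, Finset.sum_map]
      refine Finset.sum_congr rfl fun u hu => ?_
      simp only [Finset.mem_Ioc] at hu
      simp only [addLeftEmbedding_apply]
      exact (key2 u hu.1 hu.2).symm


/-- Superadditivity of the maximal variation under products of initial distributions:
`V(k₁, p) + V(k₂, q) ≤ V(k₁ + k₂, p ⊗ q)`. -/
theorem stmt14 {X₁ X₂ : Type} [Fintype X₁] [Fintype X₂]
    (p : X₁ → ℝ) (q : X₂ → ℝ)
    (hpnn : ∀ x, 0 ≤ p x) (hpsum : ∑ x, p x = 1)
    (hqnn : ∀ y, 0 ≤ q y) (hqsum : ∑ y, q y = 1)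
    (k₁ k₂ : ℕ) (hk₁ : 0 < k₁) (hk₂ : 0 < k₂) :
    V k₁ X₁ p + V k₂ X₂ q
      ≤ V (k₁ + k₂) (X₁ × X₂) (fun z => p z.1 * q z.2) := by
  have hA0 := zero_mem_MSet k₁ X₁ p hpnn hpsum
  have hB0 := zero_mem_MSet k₂ X₂ q hqnn hqsum
  have hC : BddAbove (MSet (k₁ + k₂) (X₁ × X₂) fun z => p z.1 * q z.2) :=
    MSet_bddAbove _ _ _
  show sSup (MSet k₁ X₁ p) + sSup (MSet k₂ X₂ q)
      ≤ sSup (MSet (k₁ + k₂) (X₁ × X₂) fun z => p z.1 * q z.2)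
  have hmem : ∀ a ∈ MSet k₁ X₁ p, ∀ b ∈ MSet k₂ X₂ q,
      a + b ≤ sSup (MSet (k₁ + k₂) (X₁ × X₂) fun z => p z.1 * q z.2) :=
    fun a ha b hb => le_csSup hC (add_mem_MSet ha hb)
  have h1 : ∀ b ∈ MSet k₂ X₂ q, sSup (MSet k₁ X₁ p)
      ≤ sSup (MSet (k₁ + k₂) (X₁ × X₂) fun z => p z.1 * q z.2) - b :=
    fun b hb => csSup_le ⟨0, hA0⟩ fun a ha => by linarith [hmem a ha b hb]
  have h2 : sSup (MSet k₂ X₂ q)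
      ≤ sSup (MSet (k₁ + k₂) (X₁ × X₂) fun z => p z.1 * q z.2) - sSup (MSet k₁ X₁ p) :=
    csSup_le ⟨0, hB0⟩ fun b hb => by linarith [h1 b hb]
  linarith
end
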